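/- arXiv:2603.27414 — 10 statements merged into one kernel-verified Lean document; each statement's English description precedes it below -/
import Mathlib

section
/- Let k ≥ 1, let Σ be a symmetric positive definite k×k real matrix, let 𝓘 be a finite family of nonempty subsets of {1,…,k}, and let n_I > 0 be a real number for each I ∈ 𝓘. Set M := Σ_{I∈𝓘} n_I Σ_I^† and S := M^†. Suppose a ∈ ℝ^k is supported on ∪𝓘. Define λ_I := n_I Σ_I^† S a for each I ∈ 𝓘. Then each λ_I is supported on I, Σ_{I∈𝓘} λ_I = a, and Σ_{I∈𝓘} (1/n_I) λ_I^⊤ Σ λ_I = a^⊤ S a. -/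
open Matrix

open Classical in
/-- Moore–Penrose pseudoinverse of a square real matrix (characterized by the four
Penrose conditions; it is unique whenever it exists). -/
noncomputable def pinv {n : Type*} [Fintype n] [DecidableEq n] (A : Matrix n n ℝ) :
    Matrix n n ℝ :=
  if h : ∃ B : Matrix n n ℝ,
      A * B * A = A ∧ B * A * B = B ∧ (A * B)ᵀ = A * B ∧ (B * A)ᵀ = B * A
  then h.choose else 0

/-- `restrict A I` is the k×k matrix that agrees with `A` on `I × I` and is `0` elsewhere. -/
noncomputable def restrict {k : ℕ} (A : Matrix (Fin k) (Fin k) ℝ) (I : Finset (Fin k)) :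
    Matrix (Fin k) (Fin k) ℝ :=
  fun s t => if s ∈ I ∧ t ∈ I then A s t else 0

section Aux

/-- The four Penrose conditions. -/
def Penrose {n : Type*} [Fintype n] [DecidableEq n] (A B : Matrix n n ℝ) : Prop :=
  A * B * A = A ∧ B * A * B = B ∧ (A * B)ᵀ = A * B ∧ (B * A)ᵀ = B * A

theorem penrose_unique {n : Type*} [Fintype n] [DecidableEq n] {A B C : Matrix n n ℝ}
    (hB : Penrose A B) (hC : Penrose A C) : B = C := by
  obtain ⟨hB1, hB2, hB3, hB4⟩ := hB
  obtain ⟨hC1, hC2, hC3, hC4⟩ := hC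
  have hAt : Aᵀ = Aᵀ * (A * C) := by
    calc Aᵀ = ((A * C) * A)ᵀ := by rw [hC1]
      _ = Aᵀ * (A * C)ᵀ := transpose_mul _ _
      _ = Aᵀ * (A * C) := by rw [hC3]
  have hAt' : Aᵀ = (C * A) * Aᵀ := by
    calc Aᵀ = (A * (C * A))ᵀ := by rw [← mul_assoc, hC1]
      _ = (C * A)ᵀ * Aᵀ := transpose_mul _ _
      _ = (C * A) * Aᵀ := by rw [hC4]
  have hAB : A * B = A * C := by
    calc A * B = (A * B)ᵀ := hB3.symm
      _ = Bᵀ * Aᵀ := transpose_mul _ _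
      _ = Bᵀ * (Aᵀ * (A * C)) := by rw [← hAt]
      _ = (Bᵀ * Aᵀ) * (A * C) := (mul_assoc _ _ _).symm
      _ = (A * B)ᵀ * (A * C) := by rw [← transpose_mul A B]
      _ = (A * B) * (A * C) := by rw [hB3]
      _ = ((A * B) * A) * C := by noncomm_ring
      _ = A * C := by rw [hB1]
  have hBA : B * A = C * A := by
    calc B * A = (B * A)ᵀ := hB4.symm
      _ = Aᵀ * Bᵀ := transpose_mul _ _
      _ = ((C * A) * Aᵀ) * Bᵀ := by rw [← hAt']
      _ = (C * A) * (Aᵀ * Bᵀ) := mul_assoc _ _ _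
      _ = (C * A) * (B * A)ᵀ := by rw [← transpose_mul B A]
      _ = (C * A) * (B * A) := by rw [hB4]
      _ = C * ((A * B) * A) := by noncomm_ring
      _ = C * A := by rw [hB1]
  calc B = B * A * B := hB2.symm
    _ = C * A * B := by rw [hBA]
    _ = C * (A * B) := mul_assoc _ _ _
    _ = C * (A * C) := by rw [hAB]
    _ = C * A * C := (mul_assoc _ _ _).symm
    _ = C := hC2

theorem pinv_eq {n : Type*} [Fintype n] [DecidableEq n] {A B : Matrix n n ℝ}
    (h : Penrose A B) : pinv A = B := by
  have hex : ∃ C : Matrix n n ℝ,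
      A * C * A = A ∧ C * A * C = C ∧ (A * C)ᵀ = A * C ∧ (C * A)ᵀ = C * A :=
    ⟨B, h.1, h.2.1, h.2.2.1, h.2.2.2⟩
  rw [pinv, dif_pos hex]
  exact penrose_unique (A := A)
    ⟨hex.choose_spec.1, hex.choose_spec.2.1, hex.choose_spec.2.2.1, hex.choose_spec.2.2.2⟩ h

variable {k : ℕ}

/-- The inclusion matrix of a subset `I` of `Fin k`. -/
noncomputable def emb (I : Finset (Fin k)) : Matrix (Fin k) I ℝ :=
  Matrix.of fun s i => if (i : Fin k) = s then (1 : ℝ) else 0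

/-- Sandwich a matrix on `I` between the inclusion and its transpose. -/
noncomputable def sand (I : Finset (Fin k)) (B : Matrix I I ℝ) : Matrix (Fin k) (Fin k) ℝ :=
  emb I * B * (emb I)ᵀ

lemma sum_coe_ite {I : Finset (Fin k)} (f : I → ℝ) (s : Fin k) :
    (∑ i : I, if (i : Fin k) = s then f i else 0) =
      if hs : s ∈ I then f ⟨s, hs⟩ else 0 := by
  split
  · next hs =>
    rw [Fintype.sum_eq_single (⟨s, hs⟩ : I)]
    · simp
    · intro i hi
      rw [if_neg]
      exact fun h => hi (Subtype.ext h)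
  · next hs =>
    apply Finset.sum_eq_zero
    intro i _
    rw [if_neg]
    exact fun h => hs (h ▸ i.2)

lemma embT_mul_emb (I : Finset (Fin k)) : (emb I)ᵀ * emb I = 1 := by
  ext i j
  simp only [Matrix.mul_apply, transpose_apply, emb, Matrix.of_apply, ite_mul, one_mul,
    zero_mul, Finset.sum_ite_eq, Finset.mem_univ, if_true, one_apply]
  by_cases h : i = j
  · simp [h]
  · rw [if_neg, if_neg h]
    exact fun hh => h (Subtype.ext hh).symm
lemma embT_mulVec (I : Finset (Fin k)) (v : Fin k → ℝ) :
    (emb I)ᵀ *ᵥ v = fun i : I => v (i : Fin k) := by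
  ext i
  simp only [mulVec, dotProduct, transpose_apply, emb, Matrix.of_apply, ite_mul, one_mul,
    zero_mul, Finset.sum_ite_eq, Finset.mem_univ, if_true]
lemma emb_mulVec_apply (I : Finset (Fin k)) (y : I → ℝ) (s : Fin k) :
    (emb I *ᵥ y) s = if hs : s ∈ I then y ⟨s, hs⟩ else 0 := by
  simp only [mulVec, dotProduct, emb, Matrix.of_apply, ite_mul, one_mul, zero_mul]
  exact sum_coe_ite _ _

lemma mul_sand (I : Finset (Fin k)) (B C : Matrix I I ℝ) :
    sand I B * sand I C = sand I (B * C) := by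
  unfold sand
  calc emb I * B * (emb I)ᵀ * (emb I * C * (emb I)ᵀ)
      = emb I * B * ((emb I)ᵀ * emb I) * C * (emb I)ᵀ := by simp only [Matrix.mul_assoc]
    _ = emb I * (B * C) * (emb I)ᵀ := by rw [embT_mul_emb]; simp only [Matrix.mul_one, Matrix.mul_assoc]
lemma sand_transpose (I : Finset (Fin k)) (B : Matrix I I ℝ) :
    (sand I B)ᵀ = sand I Bᵀ := by
  unfold sand
  rw [transpose_mul, transpose_mul, transpose_transpose]
  simp only [Matrix.mul_assoc]
lemma embT_mul_mul (I : Finset (Fin k)) (A : Matrix (Fin k) (Fin k) ℝ) :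
    (emb I)ᵀ * A * emb I = A.submatrix ((↑) : I → Fin k) ((↑) : I → Fin k) := by
  ext i j
  simp only [Matrix.mul_apply, transpose_apply, emb, Matrix.of_apply, submatrix_apply,
    ite_mul, one_mul, zero_mul, mul_ite, mul_one, mul_zero, Finset.sum_ite_eq,
    Finset.mem_univ, if_true]
lemma sand_mul_mul (I : Finset (Fin k)) (B C : Matrix I I ℝ) (A : Matrix (Fin k) (Fin k) ℝ) :
    sand I B * A * sand I C = sand I (B * A.submatrix ((↑) : I → Fin k) ((↑) : I → Fin k) * C) := by
  unfold sand
  calc emb I * B * (emb I)ᵀ * A * (emb I * C * (emb I)ᵀ)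
      = emb I * B * ((emb I)ᵀ * A * emb I) * C * (emb I)ᵀ := by simp only [Matrix.mul_assoc]
    _ = _ := by rw [embT_mul_mul]; simp only [Matrix.mul_assoc]
lemma sand_apply (I : Finset (Fin k)) (B : Matrix I I ℝ) (s t : Fin k) :
    sand I B s t = if h : s ∈ I ∧ t ∈ I then B ⟨s, h.1⟩ ⟨t, h.2⟩ else 0 := by
  simp only [sand, Matrix.mul_apply, transpose_apply, emb, Matrix.of_apply, ite_mul, one_mul,
    zero_mul, mul_ite, mul_one, mul_zero]
  rw [sum_coe_ite (f := fun j : I => ∑ i : I, if (i : Fin k) = s then B i j else 0) t]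
  by_cases ht : t ∈ I
  · rw [dif_pos ht, sum_coe_ite (f := fun i : I => B i ⟨t, ht⟩) s]
    by_cases hs : s ∈ I
    · rw [dif_pos hs, dif_pos ⟨hs, ht⟩]
    · rw [dif_neg hs, dif_neg (fun h => hs h.1)]
  · rw [dif_neg ht, dif_neg (fun h => ht h.2)]
lemma sand_mulVec (I : Finset (Fin k)) (B : Matrix I I ℝ) (v : Fin k → ℝ) :
    sand I B *ᵥ v = emb I *ᵥ (B *ᵥ ((emb I)ᵀ *ᵥ v)) := by
  simp [sand, mulVec_mulVec, Matrix.mul_assoc]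

lemma dot_sand (I : Finset (Fin k)) (B : Matrix I I ℝ) (v : Fin k → ℝ) :
    v ⬝ᵥ (sand I B *ᵥ v) = (fun i : I => v i) ⬝ᵥ (B *ᵥ fun i : I => v i) := by
  rw [sand_mulVec, dotProduct_mulVec, ← mulVec_transpose, embT_mulVec]

lemma penrose_sand (I : Finset (Fin k)) (B : Matrix I I ℝ) [Invertible B] :
    Penrose (sand I B) (sand I B⁻¹) := by
  have h1 : sand I B * sand I B⁻¹ = sand I 1 := by
    rw [mul_sand, Matrix.mul_inv_of_invertible]
  have h2 : sand I B⁻¹ * sand I B = sand I 1 := by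
    rw [mul_sand, Matrix.inv_mul_of_invertible]
  have hQ : (sand I (1 : Matrix I I ℝ))ᵀ = sand I 1 := by
    rw [sand_transpose, transpose_one]
  refine ⟨?_, ?_, ?_, ?_⟩
  · rw [h1, mul_sand, one_mul]
  · rw [h2, mul_sand, one_mul]
  · rw [h1, hQ]
  · rw [h2, hQ]

lemma pinv_sand (I : Finset (Fin k)) (B : Matrix I I ℝ) [Invertible B] :
    pinv (sand I B) = sand I B⁻¹ :=
  pinv_eq (penrose_sand I B)

lemma restrict_eq_sand (A : Matrix (Fin k) (Fin k) ℝ) (I : Finset (Fin k)) :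
    restrict A I = sand I (A.submatrix ((↑) : I → Fin k) ((↑) : I → Fin k)) := by
  ext s t
  rw [sand_apply, restrict]
  split
  · next h => simp [h]
  · next h => simp [h]

lemma posdef_submatrix (A : Matrix (Fin k) (Fin k) ℝ) (I : Finset (Fin k))
    (hsym : Aᵀ = A)
    (hpos : ∀ x : Fin k → ℝ, x ≠ 0 → (∀ s ∉ I, x s = 0) → 0 < x ⬝ᵥ (A *ᵥ x)) :
    (A.submatrix ((↑) : I → Fin k) ((↑) : I → Fin k)).PosDef := by
  refine posDef_iff_dotProduct_mulVec.mpr ⟨?_, ?_⟩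
  · show _ᴴ = _
    ext i j
    simp only [conjTranspose_apply, submatrix_apply, star_trivial]
    exact congrFun (congrFun hsym _) _
  · intro y hy
    set x : Fin k → ℝ := emb I *ᵥ y with hxdef
    have hx0 : ∀ s ∉ I, x s = 0 := by
      intro s hs
      simp [hxdef, emb_mulVec_apply, hs]
    have hxy : (fun i : I => x i) = y := by
      ext i
      simp [hxdef, emb_mulVec_apply, i.2]
    have hx : x ≠ 0 := by
      intro h
      apply hy
      rw [← hxy, h]
      rfl
    have hpos' := hpos x hx hx0
    have key : y ⬝ᵥ ((A.submatrix ((↑) : I → Fin k) ((↑) : I → Fin k)) *ᵥ y) =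
        x ⬝ᵥ (A *ᵥ x) := by
      rw [← embT_mul_mul, ← mulVec_mulVec, ← mulVec_mulVec, dotProduct_mulVec,
        ← mulVec_transpose, transpose_transpose]
    simpa [key] using hpos'

lemma sum_mulVec' {ι : Type*} (s : Finset ι) (A : ι → Matrix (Fin k) (Fin k) ℝ)
    (v : Fin k → ℝ) : (∑ i ∈ s, A i) *ᵥ v = ∑ i ∈ s, A i *ᵥ v := by
  induction s using Finset.cons_induction with
  | empty => simp [Matrix.zero_mulVec]
  | cons a s ha ih => rw [Finset.sum_cons, Finset.sum_cons, Matrix.add_mulVec, ih]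

lemma dotProduct_sum' {ι : Type*} (s : Finset ι) (v : Fin k → ℝ) (w : ι → Fin k → ℝ) :
    v ⬝ᵥ (∑ i ∈ s, w i) = ∑ i ∈ s, v ⬝ᵥ w i := by
  induction s using Finset.cons_induction with
  | empty => simp
  | cons a s ha ih => rw [Finset.sum_cons, Finset.sum_cons, dotProduct_add, ih]

end Aux

theorem stmt1 (k : ℕ) (hk : 1 ≤ k)
    (Sig : Matrix (Fin k) (Fin k) ℝ) (hSig : Sig.PosDef)
    (𝓘 : Finset (Finset (Fin k))) (h𝓘 : ∀ I ∈ 𝓘, I.Nonempty)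
    (n : Finset (Fin k) → ℝ) (hn : ∀ I ∈ 𝓘, 0 < n I)
    (M S : Matrix (Fin k) (Fin k) ℝ)
    (hM : M = ∑ I ∈ 𝓘, n I • pinv (restrict Sig I))
    (hS : S = pinv M)
    (a : Fin k → ℝ) (ha : ∀ s, s ∉ 𝓘.sup id → a s = 0)
    (lam : Finset (Fin k) → (Fin k → ℝ))
    (hlam : ∀ I ∈ 𝓘, lam I = n I • (pinv (restrict Sig I) *ᵥ (S *ᵥ a))) :
    (∀ I ∈ 𝓘, ∀ s, s ∉ I → lam I s = 0) ∧
    (∑ I ∈ 𝓘, lam I = a) ∧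
    (∑ I ∈ 𝓘, (1 / n I) * (lam I ⬝ᵥ (Sig *ᵥ lam I)) = a ⬝ᵥ (S *ᵥ a)) := by
  classical
  set U : Finset (Fin k) := 𝓘.sup id with hU
  have hSigT : Sigᵀ = Sig := by
    rw [← conjTranspose_eq_transpose_of_trivial]; exact hSig.1
  -- positive definiteness of the principal submatrices
  have hSigsub : ∀ I : Finset (Fin k),
      (Sig.submatrix ((↑) : I → Fin k) ((↑) : I → Fin k)).PosDef := fun I =>
    posdef_submatrix Sig I hSigT (fun x hx _ => by simpa using hSig.dotProduct_mulVec_pos hx)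
  have hInv : ∀ I : Finset (Fin k),
      Invertible (Sig.submatrix ((↑) : I → Fin k) ((↑) : I → Fin k)) := fun I =>
    (Sig.submatrix _ _).invertibleOfIsUnitDet (hSigsub I).det_pos.ne'.isUnit
  have hP : ∀ I : Finset (Fin k), pinv (restrict Sig I) =
      sand I (Sig.submatrix ((↑) : I → Fin k) ((↑) : I → Fin k))⁻¹ := fun I => by
    haveI := hInv I
    rw [restrict_eq_sand]
    exact pinv_sand _ _
  have hA'T : ∀ I : Finset (Fin k),
      (Sig.submatrix ((↑) : I → Fin k) ((↑) : I → Fin k))ᵀ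
        = Sig.submatrix ((↑) : I → Fin k) ((↑) : I → Fin k) := fun I => by
    rw [← conjTranspose_eq_transpose_of_trivial]; exact (hSigsub I).1
  have hPT : ∀ I : Finset (Fin k),
      (pinv (restrict Sig I))ᵀ = pinv (restrict Sig I) := fun I => by
    haveI := hInv I
    rw [hP I, sand_transpose, Matrix.transpose_nonsing_inv, hA'T]
  -- support of M
  have hIU : ∀ I ∈ 𝓘, I ⊆ U := fun I hI => Finset.le_sup (f := id) hI
  have hMsupp : ∀ s t : Fin k, s ∉ U ∨ t ∉ U → M s t = 0 := by
    intro s t hst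
    rw [hM, Matrix.sum_apply]
    apply Finset.sum_eq_zero
    intro I hI
    have h0 : pinv (restrict Sig I) s t = 0 := by
      rw [hP I, sand_apply]
      apply dif_neg
      rcases hst with h | h
      · exact fun hh => h (hIU I hI hh.1)
      · exact fun hh => h (hIU I hI hh.2)
    simp [h0]
  have hMsand : M = sand U (M.submatrix ((↑) : U → Fin k) ((↑) : U → Fin k)) := by
    rw [← restrict_eq_sand]
    ext s t
    rw [restrict]
    split
    · rfl
    · next h =>
      exact hMsupp s t (by tauto)
  -- symmetry of M
  have hMT : Mᵀ = M := by
    rw [hM, Matrix.transpose_sum]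
    apply Finset.sum_congr rfl
    intro I _
    rw [Matrix.transpose_smul, hPT I]
  -- positivity of M on vectors supported in U
  have hMpos : ∀ x : Fin k → ℝ, x ≠ 0 → (∀ s ∉ U, x s = 0) → 0 < x ⬝ᵥ (M *ᵥ x) := by
    intro x hx hxU
    rw [hM, sum_mulVec', dotProduct_sum']
    have hterm : ∀ I : Finset (Fin k), x ⬝ᵥ ((n I • pinv (restrict Sig I)) *ᵥ x)
        = n I * ((fun i : I => x (i : Fin k)) ⬝ᵥ
            ((Sig.submatrix ((↑) : I → Fin k) ((↑) : I → Fin k))⁻¹ *ᵥ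
              fun i : I => x (i : Fin k))) := by
      intro I
      rw [smul_mulVec, dotProduct_smul, smul_eq_mul, hP I, dot_sand]
    have hnonneg : ∀ I ∈ 𝓘, 0 ≤ x ⬝ᵥ ((n I • pinv (restrict Sig I)) *ᵥ x) := by
      intro I hI
      rw [hterm I]
      haveI := hInv I
      have := ((hSigsub I).inv.posSemidef).dotProduct_mulVec_nonneg (fun i : I => x (i : Fin k))
      apply mul_nonneg (hn I hI).le
      simpa using this
    obtain ⟨s, hs⟩ : ∃ s, x s ≠ 0 := Function.ne_iff.mp hx
    have hsU : s ∈ U := by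
      by_contra h
      exact hs (hxU s h)
    obtain ⟨I, hI𝓘, hsI⟩ : ∃ I ∈ 𝓘, s ∈ I := by
      simpa using Finset.mem_sup.mp hsU
    apply Finset.sum_pos'
    · exact hnonneg
    · refine ⟨I, hI𝓘, ?_⟩
      rw [hterm I]
      haveI := hInv I
      apply mul_pos (hn I hI𝓘)
      have hxI : (fun i : I => x (i : Fin k)) ≠ 0 := by
        intro h
        exact hs (congrFun h ⟨s, hsI⟩)
      have := (hSigsub I).inv.dotProduct_mulVec_pos hxI
      simpa using this
  have hM'pd : (M.submatrix ((↑) : U → Fin k) ((↑) : U → Fin k)).PosDef :=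
    posdef_submatrix M U hMT hMpos
  haveI hM'inv : Invertible (M.submatrix ((↑) : U → Fin k) ((↑) : U → Fin k)) :=
    (M.submatrix _ _).invertibleOfIsUnitDet hM'pd.det_pos.ne'.isUnit
  have hSsand : S = sand U (M.submatrix ((↑) : U → Fin k) ((↑) : U → Fin k))⁻¹ := by
    rw [hS]
    conv_lhs => rw [hMsand]
    exact pinv_sand _ _
  have hMS : M * S = sand U 1 := by
    rw [hSsand]
    nth_rewrite 1 [hMsand]
    rw [mul_sand, Matrix.mul_inv_of_invertible]
  -- the projection fixes vectors supported on U
  have hproj : ∀ v : Fin k → ℝ, (∀ s ∉ U, v s = 0) → sand U 1 *ᵥ v = v := by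
    intro v hv
    ext s
    rw [sand_mulVec, embT_mulVec, Matrix.one_mulVec, emb_mulVec_apply]
    split
    · rfl
    · next h => exact (hv s h).symm
  have haU : sand U 1 *ᵥ a = a := hproj a ha
  obtain ⟨b, hb⟩ : ∃ b : Fin k → ℝ, S *ᵥ a = b := ⟨_, rfl⟩
  -- claim 1
  have claim1 : ∀ I ∈ 𝓘, ∀ s, s ∉ I → lam I s = 0 := by
    intro I hI s hs
    rw [hlam I hI]
    show n I * (pinv (restrict Sig I) *ᵥ (S *ᵥ a)) s = 0
    rw [hP I, sand_mulVec, emb_mulVec_apply, dif_neg hs, mul_zero]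
  -- claim 2
  have claim2 : ∑ I ∈ 𝓘, lam I = a := by
    calc ∑ I ∈ 𝓘, lam I
        = ∑ I ∈ 𝓘, (n I • pinv (restrict Sig I)) *ᵥ (S *ᵥ a) :=
          Finset.sum_congr rfl (fun I hI => by rw [hlam I hI, smul_mulVec])
      _ = (∑ I ∈ 𝓘, n I • pinv (restrict Sig I)) *ᵥ (S *ᵥ a) := (sum_mulVec' _ _ _).symm
      _ = M *ᵥ (S *ᵥ a) := by rw [← hM]
      _ = (M * S) *ᵥ a := mulVec_mulVec _ _ _
      _ = a := by rw [hMS, haU]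
  -- claim 3
  refine ⟨claim1, claim2, ?_⟩
  have hPSigP : ∀ I : Finset (Fin k),
      pinv (restrict Sig I) * Sig * pinv (restrict Sig I) = pinv (restrict Sig I) := by
    intro I
    haveI := hInv I
    rw [hP I, sand_mul_mul, Matrix.inv_mul_of_invertible, Matrix.one_mul]
  have hterm3 : ∀ I ∈ 𝓘, (1 / n I) * (lam I ⬝ᵥ (Sig *ᵥ lam I))
      = b ⬝ᵥ ((n I • pinv (restrict Sig I)) *ᵥ b) := by
    intro I hI
    have hw : lam I ⬝ᵥ (Sig *ᵥ lam I)
        = n I * (n I * (b ⬝ᵥ (pinv (restrict Sig I) *ᵥ b))) := by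
      rw [hlam I hI, hb]
      rw [smul_dotProduct, Matrix.mulVec_smul, dotProduct_smul, smul_eq_mul, smul_eq_mul]
      congr 1
      congr 1
      set P := pinv (restrict Sig I) with hPdef
      calc (P *ᵥ b) ⬝ᵥ (Sig *ᵥ (P *ᵥ b))
          = (P *ᵥ b) ⬝ᵥ ((Sig * P) *ᵥ b) := by rw [mulVec_mulVec]
        _ = ((P *ᵥ b) ᵥ* (Sig * P)) ⬝ᵥ b := dotProduct_mulVec _ _ _
        _ = ((Sig * P)ᵀ *ᵥ (P *ᵥ b)) ⬝ᵥ b := by rw [mulVec_transpose]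
        _ = ((P * Sig) *ᵥ (P *ᵥ b)) ⬝ᵥ b := by
            rw [transpose_mul, hPT I, hSigT]
        _ = ((P * Sig * P) *ᵥ b) ⬝ᵥ b := by rw [mulVec_mulVec, Matrix.mul_assoc]
        _ = (P *ᵥ b) ⬝ᵥ b := by rw [hPSigP I]
        _ = b ⬝ᵥ (P *ᵥ b) := dotProduct_comm _ _
    rw [hw, smul_mulVec, dotProduct_smul, smul_eq_mul]
    have hn0 : n I ≠ 0 := (hn I hI).ne'
    field_simp
  calc ∑ I ∈ 𝓘, (1 / n I) * (lam I ⬝ᵥ (Sig *ᵥ lam I))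
      = ∑ I ∈ 𝓘, b ⬝ᵥ ((n I • pinv (restrict Sig I)) *ᵥ b) :=
        Finset.sum_congr rfl hterm3
    _ = b ⬝ᵥ ((∑ I ∈ 𝓘, n I • pinv (restrict Sig I)) *ᵥ b) := by
        rw [sum_mulVec', dotProduct_sum']
    _ = b ⬝ᵥ (M *ᵥ b) := by rw [← hM]
    _ = b ⬝ᵥ ((M * S) *ᵥ a) := by rw [← hb, mulVec_mulVec]
    _ = b ⬝ᵥ a := by rw [hMS, haU]
    _ = a ⬝ᵥ (S *ᵥ a) := by rw [← hb, dotProduct_comm]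
end

section
/- Let Σ be a symmetric positive definite k×k real matrix with minimum eigenvalue γ_min, and let Σ̂ be a symmetric positive definite k×k real matrix with δ := ‖Σ − Σ̂‖_op ≤ γ_min/2. Suppose there exist I⁰ ∈ 𝓘 with 1 ∈ I⁰ and an integer n⁰ ≥ 1 such that the allocation equal to n⁰ on I⁰ and 0 elsewhere is within budget, and set σ²_classical := Σ_{11}/n⁰. If (n̂, λ̂) is a feasible pair minimizing R_{Σ̂} over all feasible pairs, and (n*, λ*) is a feasible pair minimizing R_Σ over all feasible pairs, then R_Σ(n̂, λ̂) ≤ R_Σ(n*, λ*) + (4δ/γ_min)·σ²_classical. -/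
open Matrix

/-- The ℓ²→ℓ² operator (spectral) norm of a square real matrix. -/
noncomputable def opNorm {n : Type*} [Fintype n] [DecidableEq n] (A : Matrix n n ℝ) : ℝ :=
  ‖LinearMap.toContinuousLinearMap (Matrix.toEuclideanLin A)‖

/-- The risk `R_A(n, λ) = ∑_{I ∈ 𝓘 : n_I ≥ 1} (1/n_I) λ_I^⊤ A λ_I`. -/
noncomputable def Risk {k : ℕ} (A : Matrix (Fin k) (Fin k) ℝ)
    (𝓘 : Finset (Finset (Fin k))) (n : Finset (Fin k) → ℕ)
    (lam : Finset (Fin k) → (Fin k → ℝ)) : ℝ :=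
  ∑ I ∈ 𝓘, if 1 ≤ n I then (1 / (n I : ℝ)) * (lam I ⬝ᵥ (A *ᵥ lam I)) else 0

/-- A feasible pair `(n, λ)`: the allocation `n` is within budget componentwise, each `λ_I`
is supported on `I`, `λ_I = 0` whenever `n_I = 0`, and `∑_{I∈𝓘} λ_I` equals the target
vector `e1` (the first standard basis vector). -/
def Feasible {k m : ℕ} (𝓘 : Finset (Finset (Fin k)))
    (c : Finset (Fin k) → Fin m → ℝ) (B : Fin m → ℝ) (e1 : Fin k → ℝ)
    (n : Finset (Fin k) → ℕ) (lam : Finset (Fin k) → (Fin k → ℝ)) : Prop :=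
  (∀ ℓ : Fin m, ∑ I ∈ 𝓘, (n I : ℝ) * c I ℓ ≤ B ℓ) ∧
  (∀ I ∈ 𝓘, ∀ s, s ∉ I → lam I s = 0) ∧
  (∀ I ∈ 𝓘, n I = 0 → lam I = 0) ∧
  (∑ I ∈ 𝓘, lam I = e1)

lemma quad_abs_le_opNorm {k : ℕ} (A : Matrix (Fin k) (Fin k) ℝ) (v : Fin k → ℝ) :
    |v ⬝ᵥ (A *ᵥ v)| ≤ opNorm A * (v ⬝ᵥ v) := by
  set x : EuclideanSpace ℝ (Fin k) := (WithLp.equiv 2 (Fin k → ℝ)).symm v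
  have h1 : v ⬝ᵥ (A *ᵥ v) = inner ℝ x (Matrix.toEuclideanLin A x) := by
    rw [show x = WithLp.toLp 2 v from rfl, Matrix.toEuclideanLin_apply_piLp_toLp]
    simp [PiLp.inner_apply, dotProduct, x, RCLike.inner_apply, mul_comm]
  have h2 : v ⬝ᵥ v = ‖x‖ ^ 2 := by
    rw [EuclideanSpace.norm_sq_eq]
    simp [dotProduct, x, Real.norm_eq_abs, sq_abs, sq]
  rw [h1, h2]
  calc |inner ℝ x (Matrix.toEuclideanLin A x)| ≤ ‖x‖ * ‖Matrix.toEuclideanLin A x‖ :=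
        abs_real_inner_le_norm _ _
    _ ≤ ‖x‖ * (opNorm A * ‖x‖) := by
        gcongr
        exact (LinearMap.toContinuousLinearMap (Matrix.toEuclideanLin A)).le_opNorm x
    _ = opNorm A * ‖x‖ ^ 2 := by ring

lemma rayleigh_lower {k : ℕ} {Sig : Matrix (Fin k) (Fin k) ℝ} (hSig : Sig.PosDef)
    {γmin : ℝ} (hγmin : IsLeast (Set.range hSig.1.eigenvalues) γmin) (v : Fin k → ℝ) :
    γmin * (v ⬝ᵥ v) ≤ v ⬝ᵥ (Sig *ᵥ v) := by
  have hps : (Sig - γmin • 1).PosSemidef := by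
    have hd : PosSemidef (diagonal (fun i => hSig.1.eigenvalues i - γmin)) :=
      posSemidef_diagonal_iff.2 fun i => sub_nonneg.2 (hγmin.2 ⟨i, rfl⟩)
    have := hd.mul_mul_conjTranspose_same (hSig.1.eigenvectorUnitary : Matrix (Fin k) (Fin k) ℝ)
    have heq : (hSig.1.eigenvectorUnitary : Matrix (Fin k) (Fin k) ℝ) *
        diagonal (fun i => hSig.1.eigenvalues i - γmin) *
        (hSig.1.eigenvectorUnitary : Matrix (Fin k) (Fin k) ℝ)ᴴ = Sig - γmin • 1 := by
      have hdiag : diagonal (fun i => hSig.1.eigenvalues i - γmin)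
          = diagonal (RCLike.ofReal ∘ hSig.1.eigenvalues) - γmin • 1 := by
        simp [← diagonal_sub, smul_eq_diagonal_mul]
      rw [hdiag, mul_sub, sub_mul, ← Matrix.star_eq_conjTranspose]
      have hu : (hSig.1.eigenvectorUnitary : Matrix (Fin k) (Fin k) ℝ) *
          star (hSig.1.eigenvectorUnitary : Matrix (Fin k) (Fin k) ℝ) = 1 :=
        Unitary.mul_star_self_of_mem hSig.1.eigenvectorUnitary.2
      rw [Matrix.mul_smul, mul_one, Matrix.smul_mul, hu]
      congr 1
      exact hSig.1.spectral_theorem.symm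
    rwa [heq] at this
  have h0 := hps.dotProduct_mulVec_nonneg v
  simp only [star_trivial, sub_mulVec, dotProduct_sub, smul_mulVec, one_mulVec,
    dotProduct_smul, smul_eq_mul] at h0
  linarith

/-- The "size" functional `S(n,λ) = ∑_{n_I ≥ 1} (1/n_I) ‖λ_I‖²`. -/
noncomputable def SzS {k : ℕ} (𝓘 : Finset (Finset (Fin k))) (n : Finset (Fin k) → ℕ)
    (lam : Finset (Fin k) → (Fin k → ℝ)) : ℝ :=
  ∑ I ∈ 𝓘, if 1 ≤ n I then (1 / (n I : ℝ)) * (lam I ⬝ᵥ lam I) else 0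

lemma SzS_nonneg {k : ℕ} (𝓘 : Finset (Finset (Fin k))) (n : Finset (Fin k) → ℕ)
    (lam : Finset (Fin k) → (Fin k → ℝ)) : 0 ≤ SzS 𝓘 n lam := by
  refine Finset.sum_nonneg fun I _ => ?_
  split
  · have : (0:ℝ) ≤ lam I ⬝ᵥ lam I := Finset.sum_nonneg fun i _ => mul_self_nonneg _
    positivity
  · exact le_refl 0

lemma risk_diff {k : ℕ} (A B : Matrix (Fin k) (Fin k) ℝ) (𝓘 : Finset (Finset (Fin k)))
    (n : Finset (Fin k) → ℕ) (lam : Finset (Fin k) → (Fin k → ℝ)) :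
    |Risk A 𝓘 n lam - Risk B 𝓘 n lam| ≤ opNorm (A - B) * SzS 𝓘 n lam := by
  rw [Risk, Risk, ← Finset.sum_sub_distrib, SzS, Finset.mul_sum]
  refine (Finset.abs_sum_le_sum_abs _ _).trans (Finset.sum_le_sum fun I _ => ?_)
  by_cases h : 1 ≤ n I
  · simp only [if_pos h]
    rw [← mul_sub, abs_mul, abs_of_nonneg (by positivity : (0:ℝ) ≤ 1 / (n I : ℝ))]
    have h2 : lam I ⬝ᵥ (A *ᵥ lam I) - lam I ⬝ᵥ (B *ᵥ lam I)
        = lam I ⬝ᵥ ((A - B) *ᵥ lam I) := by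
      simp [sub_mulVec, dotProduct_sub]
    rw [h2, show opNorm (A - B) * (1 / (n I : ℝ) * (lam I ⬝ᵥ lam I))
        = 1 / (n I : ℝ) * (opNorm (A - B) * (lam I ⬝ᵥ lam I)) by ring]
    exact mul_le_mul_of_nonneg_left (quad_abs_le_opNorm (A - B) (lam I)) (by positivity)
  · simp [h]

lemma risk_lower {k : ℕ} {A : Matrix (Fin k) (Fin k) ℝ} {γ : ℝ}
    (h : ∀ v : Fin k → ℝ, γ * (v ⬝ᵥ v) ≤ v ⬝ᵥ (A *ᵥ v)) (𝓘 : Finset (Finset (Fin k)))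
    (n : Finset (Fin k) → ℕ) (lam : Finset (Fin k) → (Fin k → ℝ)) :
    γ * SzS 𝓘 n lam ≤ Risk A 𝓘 n lam := by
  rw [Risk, SzS, Finset.mul_sum]
  refine Finset.sum_le_sum fun I _ => ?_
  by_cases hn : 1 ≤ n I
  · simp only [if_pos hn]
    rw [show γ * (1 / (n I : ℝ) * (lam I ⬝ᵥ lam I))
        = 1 / (n I : ℝ) * (γ * (lam I ⬝ᵥ lam I)) by ring]
    exact mul_le_mul_of_nonneg_left (h (lam I)) (by positivity)
  · simp [hn]

theorem stmt2 (k : ℕ) (hk : 0 < k) (m : ℕ) (hm : 1 ≤ m)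
    (𝓘 : Finset (Finset (Fin k))) (h𝓘 : ∀ I ∈ 𝓘, I.Nonempty)
    (c : Finset (Fin k) → Fin m → ℝ) (hc : ∀ I ∈ 𝓘, ∀ ℓ, 0 ≤ c I ℓ)
    (B : Fin m → ℝ) (hB : ∀ ℓ, 0 ≤ B ℓ)
    (Sig : Matrix (Fin k) (Fin k) ℝ) (hSig : Sig.PosDef)
    (γmin : ℝ) (hγmin : IsLeast (Set.range hSig.1.eigenvalues) γmin)
    (Sighat : Matrix (Fin k) (Fin k) ℝ) (hSighat : Sighat.PosDef)
    (hδ : opNorm (Sig - Sighat) ≤ γmin / 2)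
    (I0 : Finset (Fin k)) (hI0 : I0 ∈ 𝓘) (h1I0 : (⟨0, hk⟩ : Fin k) ∈ I0)
    (n0 : ℕ) (hn0 : 1 ≤ n0)
    (hbudget : ∀ ℓ : Fin m,
      ∑ I ∈ 𝓘, (((if I = I0 then n0 else 0) : ℕ) : ℝ) * c I ℓ ≤ B ℓ)
    (nhat : Finset (Fin k) → ℕ) (lamhat : Finset (Fin k) → (Fin k → ℝ))
    (hfeashat : Feasible 𝓘 c B (Pi.single (⟨0, hk⟩ : Fin k) 1) nhat lamhat)
    (hminhat : ∀ (n : Finset (Fin k) → ℕ) (lam : Finset (Fin k) → (Fin k → ℝ)),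
      Feasible 𝓘 c B (Pi.single (⟨0, hk⟩ : Fin k) 1) n lam →
        Risk Sighat 𝓘 nhat lamhat ≤ Risk Sighat 𝓘 n lam)
    (nstar : Finset (Fin k) → ℕ) (lamstar : Finset (Fin k) → (Fin k → ℝ))
    (hfeasstar : Feasible 𝓘 c B (Pi.single (⟨0, hk⟩ : Fin k) 1) nstar lamstar)
    (hminstar : ∀ (n : Finset (Fin k) → ℕ) (lam : Finset (Fin k) → (Fin k → ℝ)),
      Feasible 𝓘 c B (Pi.single (⟨0, hk⟩ : Fin k) 1) n lam →
        Risk Sig 𝓘 nstar lamstar ≤ Risk Sig 𝓘 n lam) :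
    Risk Sig 𝓘 nhat lamhat ≤
      Risk Sig 𝓘 nstar lamstar +
        (4 * opNorm (Sig - Sighat) / γmin) * (Sig ⟨0, hk⟩ ⟨0, hk⟩ / (n0 : ℝ)) := by
  set i0 : Fin k := ⟨0, hk⟩
  set e : Fin k → ℝ := Pi.single i0 1 with he
  set δ : ℝ := opNorm (Sig - Sighat) with hδdef
  have hδ0 : 0 ≤ δ := norm_nonneg _
  have hγpos : 0 < γmin := by
    obtain ⟨i, hi⟩ := hγmin.1
    exact hi ▸ hSig.eigenvalues_pos i
  -- quadratic form lower bounds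
  have hQ : ∀ v : Fin k → ℝ, γmin * (v ⬝ᵥ v) ≤ v ⬝ᵥ (Sig *ᵥ v) := rayleigh_lower hSig hγmin
  have hQhat : ∀ v : Fin k → ℝ, γmin / 2 * (v ⬝ᵥ v) ≤ v ⬝ᵥ (Sighat *ᵥ v) := by
    intro v
    have h1 := hQ v
    have h2 := quad_abs_le_opNorm (Sig - Sighat) v
    have h3 : v ⬝ᵥ ((Sig - Sighat) *ᵥ v) = v ⬝ᵥ (Sig *ᵥ v) - v ⬝ᵥ (Sighat *ᵥ v) := by
      simp [sub_mulVec, dotProduct_sub]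
    have h4 : (0:ℝ) ≤ v ⬝ᵥ v := Finset.sum_nonneg fun i _ => mul_self_nonneg _
    have h5 : δ * (v ⬝ᵥ v) ≤ γmin / 2 * (v ⬝ᵥ v) := mul_le_mul_of_nonneg_right hδ h4
    have h6 := (abs_le.mp h2).2
    rw [h3] at h6
    linarith
  -- classical pair and its risk
  have hclass : Risk Sig 𝓘 nstar lamstar ≤ Sig i0 i0 / (n0 : ℝ) := by
    set ncl : Finset (Fin k) → ℕ := fun I => if I = I0 then n0 else 0 with hncl
    set lcl : Finset (Fin k) → (Fin k → ℝ) := fun I => if I = I0 then e else 0 with hlcl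
    have hfeas : Feasible 𝓘 c B e ncl lcl := by
      refine ⟨hbudget, ?_, ?_, ?_⟩
      · intro I hI s hs
        by_cases hII : I = I0
        · subst hII
          simp only [hlcl, if_pos rfl, he]
          exact Pi.single_eq_of_ne (fun h => hs (by rw [h]; exact h1I0)) 1
        · simp [hlcl, hII]
      · intro I hI h0
        by_cases hII : I = I0
        · subst hII; simp [hncl] at h0; omega
        · simp [hlcl, hII]
      · show (∑ I ∈ 𝓘, lcl I) = e
        simp only [hlcl]
        rw [Finset.sum_ite_eq' 𝓘 I0 (fun _ => e), if_pos hI0]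
    have hrisk : Risk Sig 𝓘 ncl lcl = 1 / (n0 : ℝ) * (e ⬝ᵥ (Sig *ᵥ e)) := by
      rw [Risk]
      have : ∀ I ∈ 𝓘, (if 1 ≤ ncl I then (1 / (ncl I : ℝ)) * (lcl I ⬝ᵥ (Sig *ᵥ lcl I)) else 0)
          = if I = I0 then 1 / (n0 : ℝ) * (e ⬝ᵥ (Sig *ᵥ e)) else 0 := by
        intro I _
        by_cases hII : I = I0
        · simp [hncl, hlcl, hII, hn0]
        · simp [hncl, hlcl, hII]
      rw [Finset.sum_congr rfl this, Finset.sum_ite_eq' 𝓘 I0, if_pos hI0]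
    have hdot : e ⬝ᵥ (Sig *ᵥ e) = Sig i0 i0 := by
      simp [he, single_dotProduct, Matrix.mulVec_single]
    have := hminstar ncl lcl hfeas
    rw [hrisk, hdot] at this
    have heq : 1 / (n0 : ℝ) * Sig i0 i0 = Sig i0 i0 / (n0 : ℝ) := by ring
    linarith
  -- abbreviations
  set Rh := Risk Sig 𝓘 nhat lamhat
  set Rhh := Risk Sighat 𝓘 nhat lamhat
  set Rs := Risk Sig 𝓘 nstar lamstar
  set Rhs := Risk Sighat 𝓘 nstar lamstar
  set Sh := SzS 𝓘 nhat lamhat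
  set Ss := SzS 𝓘 nstar lamstar
  have hSh0 : 0 ≤ Sh := SzS_nonneg _ _ _
  have hSs0 : 0 ≤ Ss := SzS_nonneg _ _ _
  have h1 : Rh ≤ Rhh + δ * Sh := by
    have := (abs_le.mp (risk_diff Sig Sighat 𝓘 nhat lamhat)).2
    linarith
  have h2 : γmin * Sh ≤ 2 * Rhh := by
    have := risk_lower hQhat 𝓘 nhat lamhat
    linarith
  have h3 : Rhh ≤ Rhs := hminhat nstar lamstar hfeasstar
  have h4 : Rhs ≤ Rs + δ * Ss := by
    have := (abs_le.mp (risk_diff Sig Sighat 𝓘 nstar lamstar)).1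
    linarith
  have h5 : γmin * Ss ≤ Rs := risk_lower hQ 𝓘 nstar lamstar
  have hRs0 : 0 ≤ Rs := le_trans (by positivity) h5
  have hσ0 : 0 ≤ Sig i0 i0 / (n0 : ℝ) := le_trans hRs0 hclass
  have h8 : 2 * δ ≤ γmin := by linarith
  set σ := Sig i0 i0 / (n0 : ℝ)
  have hkey : γmin * Rh ≤ γmin * Rs + 4 * δ * σ := by
    nlinarith [mul_le_mul_of_nonneg_left h1 hγpos.le,
      mul_le_mul_of_nonneg_left h2 hδ0,
      mul_le_mul_of_nonneg_left h3 (by linarith : (0:ℝ) ≤ γmin + 2 * δ),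
      mul_le_mul_of_nonneg_left h4 (by linarith : (0:ℝ) ≤ γmin + 2 * δ),
      mul_le_mul_of_nonneg_left h5 hδ0,
      mul_le_mul_of_nonneg_right h8 (mul_nonneg hδ0 hSs0),
      mul_le_mul_of_nonneg_left hclass (by positivity : (0:ℝ) ≤ 4 * δ)]
  have hfin : Rh ≤ Rs + 4 * δ / γmin * σ := by
    rw [div_mul_eq_mul_div, ← sub_le_iff_le_add', le_div_iff₀ hγpos]
    nlinarith [hkey]
  simpa [hδdef] using hfin
end

section
/- Let Σ be a symmetric positive definite k×k real matrix with minimum eigenvalue γ_min. Suppose there exist I⁰ ∈ 𝓘 with 1 ∈ I⁰ and an integer n⁰ ≥ 1 such that the allocation equal to n⁰ on I⁰ and 0 elsewhere is within budget. If (n*, λ*) is a feasible pair minimizing R_Σ over all feasible pairs, then Σ_{I∈𝓘 : n*_I ≥ 1} (1/n*_I) ‖λ*_I‖₂² ≤ Σ_{11}/(n⁰ · γ_min). -/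
open Matrix

lemma rayleigh_lower_s4 {k : ℕ} {A : Matrix (Fin k) (Fin k) ℝ} (hA : A.IsHermitian) (γ : ℝ)
    (hγ : ∀ i, γ ≤ hA.eigenvalues i) (v : Fin k → ℝ) :
    γ * (v ⬝ᵥ v) ≤ v ⬝ᵥ A *ᵥ v := by
  classical
  set U : Matrix (Fin k) (Fin k) ℝ := (hA.eigenvectorUnitary : Matrix (Fin k) (Fin k) ℝ)
  have hU : U * star U = 1 := Matrix.mem_unitaryGroup_iff.mp hA.eigenvectorUnitary.2
  have hdiag : Matrix.diagonal (fun i => hA.eigenvalues i - γ)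
      = Matrix.diagonal (RCLike.ofReal ∘ hA.eigenvalues) - γ • (1 : Matrix (Fin k) (Fin k) ℝ) := by
    ext i j
    by_cases h : i = j <;> simp [Matrix.diagonal_apply, Matrix.one_apply, h]
  have hEq : A - γ • (1 : Matrix (Fin k) (Fin k) ℝ)
      = U * Matrix.diagonal (fun i => hA.eigenvalues i - γ) * star U := by
    rw [hdiag, Matrix.mul_sub, Matrix.sub_mul, Matrix.mul_smul, Matrix.mul_one,
      Matrix.smul_mul, hU]
    conv_lhs => rw [hA.spectral_theorem]
    rfl
  have hPSD : (A - γ • (1 : Matrix (Fin k) (Fin k) ℝ)).PosSemidef := by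
    rw [hEq, Matrix.star_eq_conjTranspose]
    exact (Matrix.posSemidef_diagonal_iff.mpr fun i => sub_nonneg.mpr (hγ i)).mul_mul_conjTranspose_same U
  have h0 := hPSD.dotProduct_mulVec_nonneg v
  simp only [star_trivial, RCLike.re_to_real] at h0
  have : v ⬝ᵥ (A - γ • (1 : Matrix (Fin k) (Fin k) ℝ)) *ᵥ v
      = v ⬝ᵥ A *ᵥ v - γ * (v ⬝ᵥ v) := by
    rw [Matrix.sub_mulVec, dotProduct_sub, Matrix.smul_mulVec, Matrix.one_mulVec,
      dotProduct_smul, smul_eq_mul]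
  linarith [this ▸ h0]

theorem stmt4 (k : ℕ) (hk : 0 < k) (m : ℕ) (hm : 1 ≤ m)
    (𝓘 : Finset (Finset (Fin k))) (h𝓘 : ∀ I ∈ 𝓘, I.Nonempty)
    (c : Finset (Fin k) → Fin m → ℝ) (hc : ∀ I ∈ 𝓘, ∀ ℓ, 0 ≤ c I ℓ)
    (B : Fin m → ℝ) (hB : ∀ ℓ, 0 ≤ B ℓ)
    (Sig : Matrix (Fin k) (Fin k) ℝ) (hSig : Sig.PosDef)
    (γmin : ℝ) (hγmin : IsLeast (Set.range hSig.1.eigenvalues) γmin)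
    (I0 : Finset (Fin k)) (hI0 : I0 ∈ 𝓘) (h1I0 : (⟨0, hk⟩ : Fin k) ∈ I0)
    (n0 : ℕ) (hn0 : 1 ≤ n0)
    (hbudget : ∀ ℓ : Fin m,
      ∑ I ∈ 𝓘, (((if I = I0 then n0 else 0) : ℕ) : ℝ) * c I ℓ ≤ B ℓ)
    (nstar : Finset (Fin k) → ℕ) (lamstar : Finset (Fin k) → (Fin k → ℝ))
    (hfeasstar : Feasible 𝓘 c B (Pi.single (⟨0, hk⟩ : Fin k) 1) nstar lamstar)
    (hminstar : ∀ (n : Finset (Fin k) → ℕ) (lam : Finset (Fin k) → (Fin k → ℝ)),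
      Feasible 𝓘 c B (Pi.single (⟨0, hk⟩ : Fin k) 1) n lam →
        Risk Sig 𝓘 nstar lamstar ≤ Risk Sig 𝓘 n lam) :
    (∑ I ∈ 𝓘, if 1 ≤ nstar I then (1 / (nstar I : ℝ)) * ∑ s, (lamstar I s) ^ 2 else 0) ≤
      Sig ⟨0, hk⟩ ⟨0, hk⟩ / ((n0 : ℝ) * γmin) := by
  classical
  set e : Fin k := ⟨0, hk⟩
  -- γmin is positive
  obtain ⟨i, hi⟩ := hγmin.1
  have hγpos : 0 < γmin := hi ▸ hSig.eigenvalues_pos i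
  have hγle : ∀ j, γmin ≤ hSig.1.eigenvalues j := fun j => hγmin.2 ⟨j, rfl⟩
  have hn0pos : (0 : ℝ) < n0 := by exact_mod_cast hn0
  -- candidate pair
  set nn : Finset (Fin k) → ℕ := fun I => if I = I0 then n0 else 0 with hnn
  set ll : Finset (Fin k) → (Fin k → ℝ) := fun I => if I = I0 then Pi.single e 1 else 0 with hll
  have hfeas : Feasible 𝓘 c B (Pi.single e 1) nn ll := by
    refine ⟨hbudget, ?_, ?_, ?_⟩
    · intro I hI s hs
      by_cases h : I = I0
      · subst h
        have : s ≠ e := fun h' => hs (h' ▸ h1I0)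
        simp [hll, Pi.single_eq_of_ne this]
      · simp [hll, h]
    · intro I hI h0
      by_cases h : I = I0
      · subst h; simp [hnn] at h0; omega
      · simp [hll, h]
    · simp [hll, Finset.sum_ite_eq', hI0]
  have hrisk : Risk Sig 𝓘 nn ll = (1 / (n0 : ℝ)) * Sig e e := by
    rw [Risk, Finset.sum_eq_single_of_mem I0 hI0]
    · simp only [hnn, hll, if_pos rfl, if_pos hn0]
      congr 1
      simp [single_dotProduct, Matrix.mulVec_single, mul_one]
    · intro I _ hne
      simp [hnn, hne]
  have hle := hminstar nn ll hfeas
  rw [hrisk] at hle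
  -- γmin * LHS ≤ Risk*
  have hmain : γmin * (∑ I ∈ 𝓘, if 1 ≤ nstar I then
      (1 / (nstar I : ℝ)) * ∑ s, (lamstar I s) ^ 2 else 0) ≤ Risk Sig 𝓘 nstar lamstar := by
    rw [Finset.mul_sum, Risk]
    refine Finset.sum_le_sum fun I _ => ?_
    by_cases h : 1 ≤ nstar I
    · simp only [if_pos h]
      have hsq : ∑ s, (lamstar I s) ^ 2 = lamstar I ⬝ᵥ lamstar I := by
        simp [dotProduct, sq]
      have hnI : (0 : ℝ) ≤ 1 / (nstar I : ℝ) := by positivity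
      calc γmin * ((1 / (nstar I : ℝ)) * ∑ s, (lamstar I s) ^ 2)
          = (1 / (nstar I : ℝ)) * (γmin * (lamstar I ⬝ᵥ lamstar I)) := by rw [hsq]; ring
        _ ≤ (1 / (nstar I : ℝ)) * (lamstar I ⬝ᵥ Sig *ᵥ lamstar I) :=
            mul_le_mul_of_nonneg_left (rayleigh_lower_s4 hSig.1 γmin hγle _) hnI
    · simp [h]
  have h2 : γmin * (∑ I ∈ 𝓘, if 1 ≤ nstar I then
      (1 / (nstar I : ℝ)) * ∑ s, (lamstar I s) ^ 2 else 0) ≤ (1 / (n0 : ℝ)) * Sig e e :=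
    hmain.trans hle
  rw [le_div_iff₀ (by positivity)]
  calc (∑ I ∈ 𝓘, if 1 ≤ nstar I then (1 / (nstar I : ℝ)) * ∑ s, (lamstar I s) ^ 2 else 0)
        * ((n0 : ℝ) * γmin)
      = (n0 : ℝ) * (γmin * ∑ I ∈ 𝓘, if 1 ≤ nstar I then
          (1 / (nstar I : ℝ)) * ∑ s, (lamstar I s) ^ 2 else 0) := by ring
    _ ≤ (n0 : ℝ) * ((1 / (n0 : ℝ)) * Sig e e) := mul_le_mul_of_nonneg_left h2 hn0pos.le
    _ = Sig e e := by field_simp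
end

section
/- Let Σ be a symmetric positive definite k×k real matrix, let c_I > 0 for each I ∈ 𝓘, let B > 0, and let a ∈ ℝ^k be supported on ∪𝓘. Define V(a) as the infimum of Σ_{I∈𝓘 : n_I > 0} (1/n_I) λ_I^⊤ Σ λ_I over all real n_I ≥ 0 with Σ_{I∈𝓘} c_I n_I ≤ B and all families (λ_I) with λ_I ∈ ℝ^k supported on I, λ_I = 0 whenever n_I = 0, and Σ_{I∈𝓘} λ_I = a. Define U(a) as the infimum of Σ_{I∈𝓘} √(c_I)·‖λ_I‖_Σ over all families (λ_I) with λ_I supported on I and Σ_{I∈𝓘} λ_I = a. Then B·V(a) = U(a)². -/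
open Matrix

theorem stmt5 (k : ℕ) (hk : 1 ≤ k)
    (Sig : Matrix (Fin k) (Fin k) ℝ) (hSig : Sig.PosDef)
    (𝓘 : Finset (Finset (Fin k))) (h𝓘 : ∀ I ∈ 𝓘, I.Nonempty)
    (c : Finset (Fin k) → ℝ) (hc : ∀ I ∈ 𝓘, 0 < c I)
    (B : ℝ) (hB : 0 < B)
    (a : Fin k → ℝ) (ha : ∀ s, s ∉ 𝓘.sup id → a s = 0) :
    B * sInf {r : ℝ |
        ∃ (n : Finset (Fin k) → ℝ) (lam : Finset (Fin k) → (Fin k → ℝ)),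
          (∀ I ∈ 𝓘, 0 ≤ n I) ∧
          (∑ I ∈ 𝓘, c I * n I ≤ B) ∧
          (∀ I ∈ 𝓘, ∀ s, s ∉ I → lam I s = 0) ∧
          (∀ I ∈ 𝓘, n I = 0 → lam I = 0) ∧
          (∑ I ∈ 𝓘, lam I = a) ∧
          r = ∑ I ∈ 𝓘, if 0 < n I then (1 / n I) * (lam I ⬝ᵥ (Sig *ᵥ lam I)) else 0} =
      (sInf {r : ℝ |
        ∃ lam : Finset (Fin k) → (Fin k → ℝ),
          (∀ I ∈ 𝓘, ∀ s, s ∉ I → lam I s = 0) ∧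
          (∑ I ∈ 𝓘, lam I = a) ∧
          r = ∑ I ∈ 𝓘, Real.sqrt (c I) * Real.sqrt (lam I ⬝ᵥ (Sig *ᵥ lam I))}) ^ 2 := by
  classical
  set q : (Fin k → ℝ) → ℝ := fun v => v ⬝ᵥ (Sig *ᵥ v) with hqdef
  have hq0 : ∀ v, 0 ≤ q v := fun v => by
    have := hSig.posSemidef.dotProduct_mulVec_nonneg v; simpa [hqdef] using this
  have hqpos : ∀ v, v ≠ 0 → 0 < q v := fun v hv => by
    have := hSig.dotProduct_mulVec_pos hv; simpa [hqdef] using this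
  have hqzero : ∀ v, q v = 0 → v = 0 := by
    intro v hv
    by_contra h
    exact absurd hv (ne_of_gt (hqpos v h))
  -- the two sets
  set SV : Set ℝ := {r : ℝ |
        ∃ (n : Finset (Fin k) → ℝ) (lam : Finset (Fin k) → (Fin k → ℝ)),
          (∀ I ∈ 𝓘, 0 ≤ n I) ∧
          (∑ I ∈ 𝓘, c I * n I ≤ B) ∧
          (∀ I ∈ 𝓘, ∀ s, s ∉ I → lam I s = 0) ∧
          (∀ I ∈ 𝓘, n I = 0 → lam I = 0) ∧
          (∑ I ∈ 𝓘, lam I = a) ∧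
          r = ∑ I ∈ 𝓘, if 0 < n I then (1 / n I) * (q (lam I)) else 0} with hSV
  set SU : Set ℝ := {r : ℝ |
        ∃ lam : Finset (Fin k) → (Fin k → ℝ),
          (∀ I ∈ 𝓘, ∀ s, s ∉ I → lam I s = 0) ∧
          (∑ I ∈ 𝓘, lam I = a) ∧
          r = ∑ I ∈ 𝓘, Real.sqrt (c I) * Real.sqrt (q (lam I))} with hSU
  -- nonnegativity of elements
  have hVnn : ∀ r ∈ SV, (0:ℝ) ≤ r := by
    rintro r ⟨n, lam, hn, -, -, -, -, rfl⟩
    refine Finset.sum_nonneg fun I hI => ?_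
    by_cases h : 0 < n I
    · simp only [if_pos h]
      exact mul_nonneg (by positivity) (hq0 _)
    · simp [h]
  have hUnn : ∀ r ∈ SU, (0:ℝ) ≤ r := by
    rintro r ⟨lam, -, -, rfl⟩
    exact Finset.sum_nonneg fun I hI => mul_nonneg (Real.sqrt_nonneg _) (Real.sqrt_nonneg _)
  have hVbdd : BddBelow SV := ⟨0, fun r hr => hVnn r hr⟩
  have hUbdd : BddBelow SU := ⟨0, fun r hr => hUnn r hr⟩
  -- a canonical lam satisfying the support and sum constraints
  have hlam0 : ∃ lam0 : Finset (Fin k) → (Fin k → ℝ),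
      (∀ I ∈ 𝓘, ∀ s, s ∉ I → lam0 I s = 0) ∧ (∑ I ∈ 𝓘, lam0 I = a) := by
    set f : Fin k → Finset (Fin k) := fun s =>
      if h : ∃ I ∈ 𝓘, s ∈ I then h.choose else ∅ with hf
    refine ⟨fun I s => if I = f s then a s else 0, ?_, ?_⟩
    · intro I hI s hs
      show (if I = f s then a s else 0) = 0
      by_cases hIf : I = f s
      · rw [if_pos hIf]
        by_cases h : ∃ J ∈ 𝓘, s ∈ J
        · exfalso
          have := h.choose_spec.2
          rw [hIf, hf] at hs
          simp only [dif_pos h] at hs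
          exact hs this
        · apply ha
          simp only [Finset.mem_sup, id] at *
          exact fun hmem => h (by simpa using hmem)
      · rw [if_neg hIf]
    · funext s
      rw [Finset.sum_apply]
      show (∑ I ∈ 𝓘, if I = f s then a s else 0) = a s
      rw [Finset.sum_ite_eq' 𝓘 (f s) (fun _ => a s)]
      by_cases h : ∃ I ∈ 𝓘, s ∈ I
      · have h1 : f s ∈ 𝓘 := by rw [hf]; simp only [dif_pos h]; exact h.choose_spec.1
        rw [if_pos h1]
      · have h2 : a s = 0 := by
          apply ha
          simp only [Finset.mem_sup, id]
          exact fun hmem => h (by simpa using hmem)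
        simp [h2]
  obtain ⟨lam0, hlam0supp, hlam0sum⟩ := hlam0
  -- nonemptiness of SU
  have hUne : SU.Nonempty := ⟨_, lam0, hlam0supp, hlam0sum, rfl⟩
  -- nonemptiness of SV
  have hVne : SV.Nonempty := by
    rcases Finset.eq_empty_or_nonempty 𝓘 with h𝓘e | h𝓘ne
    · refine ⟨0, fun _ => 0, lam0, ?_⟩
      subst h𝓘e
      refine ⟨by simp, by simpa using hB.le, by simp, by simp, ?_, by simp⟩
      simpa using hlam0sum
    · have hcs : 0 < ∑ J ∈ 𝓘, c J :=
        Finset.sum_pos (fun J hJ => hc J hJ) h𝓘ne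
      refine ⟨_, fun _ => B / (∑ J ∈ 𝓘, c J), lam0, ?_, ?_, hlam0supp, ?_, hlam0sum, rfl⟩
      · intro I hI; positivity
      · show (∑ I ∈ 𝓘, c I * (B / (∑ J ∈ 𝓘, c J))) ≤ B
        rw [← Finset.sum_mul, mul_div_cancel₀ B (ne_of_gt hcs)]
      · intro I hI h
        exfalso
        have hpos : (0:ℝ) < B / (∑ J ∈ 𝓘, c J) := by positivity
        have h' : B / (∑ J ∈ 𝓘, c J) = 0 := h
        rw [h'] at hpos; exact lt_irrefl 0 hpos
  have hVInf0 : 0 ≤ sInf SV := le_csInf hVne hVnn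
  have hUInf0 : 0 ≤ sInf SU := le_csInf hUne hUnn
  -- direction 1 : (sInf SU)^2 ≤ B * r for all r ∈ SV
  have dir1 : ∀ r ∈ SV, (sInf SU) ^ 2 ≤ B * r := by
    rintro r ⟨n, lam, hn, hnB, hsupp, hn0, hsum, rfl⟩
    set rU : ℝ := ∑ I ∈ 𝓘, Real.sqrt (c I) * Real.sqrt (q (lam I)) with hrU
    have hrUmem : rU ∈ SU := ⟨lam, hsupp, hsum, rfl⟩
    have hCS : rU ^ 2 ≤ (∑ I ∈ 𝓘, c I * n I) *
        (∑ I ∈ 𝓘, if 0 < n I then (1 / n I) * (q (lam I)) else 0) := by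
      apply Finset.sum_sq_le_sum_mul_sum_of_sq_eq_mul
      · intro I hI; exact mul_nonneg (hc I hI).le (hn I hI)
      · intro I hI
        by_cases h : 0 < n I
        · rw [if_pos h]; exact mul_nonneg (by positivity) (hq0 _)
        · rw [if_neg h]
      · intro I hI
        by_cases h : 0 < n I
        · rw [if_pos h]
          rw [mul_pow, Real.sq_sqrt (hc I hI).le, Real.sq_sqrt (hq0 _)]
          field_simp
        · have hnI : n I = 0 := le_antisymm (not_lt.1 h) (hn I hI)
          have : lam I = 0 := hn0 I hI hnI
          rw [if_neg h, this, hnI]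
          simp [hqdef]
    have hr0 : (0:ℝ) ≤ ∑ I ∈ 𝓘, if 0 < n I then (1 / n I) * (q (lam I)) else 0 := by
      refine Finset.sum_nonneg fun I hI => ?_
      by_cases h : 0 < n I
      · rw [if_pos h]; exact mul_nonneg (by positivity) (hq0 _)
      · rw [if_neg h]
    have h2 : rU ^ 2 ≤ B * (∑ I ∈ 𝓘, if 0 < n I then (1 / n I) * (q (lam I)) else 0) :=
      hCS.trans (mul_le_mul_of_nonneg_right hnB hr0)
    have h3 : sInf SU ≤ rU := csInf_le hUbdd hrUmem
    calc (sInf SU) ^ 2 ≤ rU ^ 2 := by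
          apply pow_le_pow_left₀ hUInf0 h3
      _ ≤ _ := h2
  -- direction 2 : B * sInf SV ≤ r^2 for all r ∈ SU
  have dir2 : ∀ r ∈ SU, B * sInf SV ≤ r ^ 2 := by
    rintro r ⟨lam, hsupp, hsum, rfl⟩
    set S : ℝ := ∑ I ∈ 𝓘, Real.sqrt (c I) * Real.sqrt (q (lam I)) with hS
    have hS0 : 0 ≤ S := Finset.sum_nonneg fun I hI =>
      mul_nonneg (Real.sqrt_nonneg _) (Real.sqrt_nonneg _)
    rcases eq_or_lt_of_le hS0 with hSz | hSpos
    · -- S = 0 : all lam I = 0 on 𝓘, so a = 0 and 0 ∈ SV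
      have hterm : ∀ I ∈ 𝓘, Real.sqrt (c I) * Real.sqrt (q (lam I)) = 0 := by
        intro I hI
        have := (Finset.sum_eq_zero_iff_of_nonneg (fun I hI =>
          mul_nonneg (Real.sqrt_nonneg _) (Real.sqrt_nonneg _))).1 hSz.symm
        exact this I hI
      have hlamz : ∀ I ∈ 𝓘, lam I = 0 := by
        intro I hI
        have h := hterm I hI
        have hcI : Real.sqrt (c I) ≠ 0 := by
          simp [Real.sqrt_eq_zero', not_le, hc I hI]
        have : Real.sqrt (q (lam I)) = 0 := by
          rcases mul_eq_zero.1 h with h' | h'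
          · exact absurd h' hcI
          · exact h'
        have : q (lam I) = 0 := le_antisymm (Real.sqrt_eq_zero'.1 this) (hq0 _)
        exact hqzero _ this
      have haz : a = 0 := by
        rw [← hsum]
        exact Finset.sum_eq_zero hlamz
      have h0V : (0:ℝ) ∈ SV := by
        refine ⟨fun _ => 0, fun _ => 0, by simp, by simpa using hB.le, by simp, by simp, ?_, by simp⟩
        rw [haz]; simp
      have : sInf SV ≤ 0 := csInf_le hVbdd h0V
      have : B * sInf SV ≤ 0 := mul_nonpos_of_nonneg_of_nonpos hB.le this
      calc B * sInf SV ≤ 0 := this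
        _ ≤ S ^ 2 := sq_nonneg _
    · -- S > 0 : construct n
      have hcsq : ∀ I ∈ 𝓘, 0 < Real.sqrt (c I) := fun I hI => Real.sqrt_pos.2 (hc I hI)
      set n : Finset (Fin k) → ℝ := fun I =>
        Real.sqrt (q (lam I)) * B / (Real.sqrt (c I) * S) with hndef
      have hnI : ∀ I, n I = Real.sqrt (q (lam I)) * B / (Real.sqrt (c I) * S) := fun I => rfl
      have hnn : ∀ I ∈ 𝓘, 0 ≤ n I := by
        intro I hI
        rw [hnI]
        exact div_nonneg (mul_nonneg (Real.sqrt_nonneg _) hB.le)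
          (mul_nonneg (Real.sqrt_nonneg _) hS0)
      have hnB : ∑ I ∈ 𝓘, c I * n I = B := by
        have key : ∀ I ∈ 𝓘, c I * n I = (Real.sqrt (c I) * Real.sqrt (q (lam I))) * (B / S) := by
          intro I hI
          rw [hnI]
          have hcI := hc I hI
          have hcsqI := hcsq I hI
          have h1 : Real.sqrt (c I) ≠ 0 := ne_of_gt hcsqI
          have h2 : S ≠ 0 := ne_of_gt hSpos
          field_simp
          linear_combination (-(Real.sqrt (q (lam I)))) * Real.mul_self_sqrt hcI.le
        rw [Finset.sum_congr rfl key, ← Finset.sum_mul, ← hS, mul_div_assoc',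
          mul_comm, mul_div_assoc, div_self (ne_of_gt hSpos), mul_one]
      have hn0 : ∀ I ∈ 𝓘, n I = 0 → lam I = 0 := by
        intro I hI h
        rw [hnI] at h
        have hden : Real.sqrt (c I) * S ≠ 0 :=
          mul_ne_zero (ne_of_gt (hcsq I hI)) (ne_of_gt hSpos)
        have h2 : Real.sqrt (q (lam I)) * B = 0 := (div_eq_zero_iff.1 h).resolve_right hden
        have hsq : Real.sqrt (q (lam I)) = 0 := (mul_eq_zero.1 h2).resolve_right hB.ne'
        have : q (lam I) = 0 := le_antisymm (Real.sqrt_eq_zero'.1 hsq) (hq0 _)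
        exact hqzero _ this
      have hval : (∑ I ∈ 𝓘, if 0 < n I then (1 / n I) * (q (lam I)) else 0) = S ^ 2 / B := by
        have hterm : ∀ I ∈ 𝓘, (if 0 < n I then (1 / n I) * (q (lam I)) else 0)
            = (S / B) * (Real.sqrt (c I) * Real.sqrt (q (lam I))) := by
          intro I hI
          by_cases hz : lam I = 0
          · have hq' : q (lam I) = 0 := by simp [hz, hqdef]
            by_cases h : 0 < n I
            · rw [if_pos h, hq']; simp
            · rw [if_neg h, hq']; simp
          · have hqI : 0 < q (lam I) := hqpos _ hz
            have hsqI : 0 < Real.sqrt (q (lam I)) := Real.sqrt_pos.2 hqI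
            have hcsqI := hcsq I hI
            have hnpos : 0 < n I := by
              rw [hnI]
              exact div_pos (mul_pos hsqI hB) (mul_pos hcsqI hSpos)
            rw [if_pos hnpos, hnI, one_div, inv_div]
            have h1 : Real.sqrt (q (lam I)) ≠ 0 := ne_of_gt hsqI
            have h2 : S ≠ 0 := ne_of_gt hSpos
            field_simp
            linear_combination (-1 : ℝ) * Real.mul_self_sqrt hqI.le
        rw [Finset.sum_congr rfl hterm, ← Finset.mul_sum, ← hS, sq, div_mul_eq_mul_div,
          mul_comm]
      have hmem : S ^ 2 / B ∈ SV := by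
        refine ⟨n, lam, hnn, le_of_eq hnB, hsupp, hn0, hsum, hval.symm⟩
      have : sInf SV ≤ S ^ 2 / B := csInf_le hVbdd hmem
      calc B * sInf SV ≤ B * (S ^ 2 / B) := mul_le_mul_of_nonneg_left this hB.le
        _ = S ^ 2 := by rw [mul_div_cancel₀ _ hB.ne']
  -- combine
  have hle : (sInf SU) ^ 2 ≤ B * sInf SV := by
    have h : ∀ r ∈ SV, (sInf SU) ^ 2 / B ≤ r := by
      intro r hr
      rw [div_le_iff₀ hB]
      rw [mul_comm]
      exact dir1 r hr
    have := le_csInf hVne h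
    calc (sInf SU) ^ 2 = B * ((sInf SU) ^ 2 / B) := by field_simp
      _ ≤ B * sInf SV := mul_le_mul_of_nonneg_left this hB.le
  have hge : B * sInf SV ≤ (sInf SU) ^ 2 := by
    by_contra h
    push_neg at h
    set M := B * sInf SV with hM
    have hM0 : 0 ≤ M := mul_nonneg hB.le hVInf0
    have ht : sInf SU < Real.sqrt M := by
      have := Real.sqrt_lt_sqrt (sq_nonneg _) h
      rwa [Real.sqrt_sq hUInf0] at this
    obtain ⟨r, hrmem, hrlt⟩ := exists_lt_of_csInf_lt hUne ht
    have hr0 : 0 ≤ r := hUnn r hrmem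
    have hlt : r ^ 2 < M := (Real.lt_sqrt hr0).1 hrlt
    exact absurd (dir2 r hrmem) (not_le.2 hlt)
  exact le_antisymm hge hle
end

section
/- Let Σ be a symmetric positive definite k×k real matrix, let c_I > 0 for each I ∈ 𝓘, and let a ∈ ℝ^k be supported on ∪𝓘. Define U(a) as the infimum of Σ_{I∈𝓘} √(c_I)·‖λ_I‖_Σ over all families (λ_I) with λ_I ∈ ℝ^k supported on I and Σ_{I∈𝓘} λ_I = a. Then U(a) = sup{ a^⊤ y : y ∈ ℝ^k, y^⊤ Σ_I^† y ≤ c_I for every I ∈ 𝓘 }. -/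
open Matrix

section Quad
variable {n : Type*} [Fintype n] {M : Matrix n n ℝ}

lemma quad_nonneg (hM : M.PosDef) (x : n → ℝ) : 0 ≤ x ⬝ᵥ (M *ᵥ x) := by
  simpa using hM.posSemidef.dotProduct_mulVec_nonneg x

lemma bil_symm (hM : M.IsHermitian) (x y : n → ℝ) : x ⬝ᵥ (M *ᵥ y) = y ⬝ᵥ (M *ᵥ x) := by
  have hMt : Mᵀ = M := by rw [← conjTranspose_eq_transpose_of_trivial, hM.eq]
  rw [dotProduct_mulVec, ← vecMul_transpose, hMt, dotProduct_comm]

lemma cs_posdef (hM : M.PosDef) (x y : n → ℝ) :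
    x ⬝ᵥ (M *ᵥ y) ≤ Real.sqrt (x ⬝ᵥ (M *ᵥ x)) * Real.sqrt (y ⬝ᵥ (M *ᵥ y)) := by
  set Qx := x ⬝ᵥ (M *ᵥ x) with hQx
  set Qy := y ⬝ᵥ (M *ᵥ y) with hQy
  set B := x ⬝ᵥ (M *ᵥ y) with hB
  have key : B * B ≤ Qx * Qy := by
    have h : ∀ t : ℝ, 0 ≤ Qy * (t * t) + (2 * B) * t + Qx := by
      intro t
      have h0 := quad_nonneg hM (x + t • y)
      have : (x + t • y) ⬝ᵥ (M *ᵥ (x + t • y)) = Qy * (t * t) + (2 * B) * t + Qx := by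
        rw [mulVec_add, mulVec_smul, dotProduct_add, add_dotProduct, add_dotProduct,
          dotProduct_smul, smul_dotProduct, smul_dotProduct, dotProduct_smul]
        have hsy : y ⬝ᵥ (M *ᵥ x) = B := (bil_symm hM.isHermitian y x).trans rfl
        simp only [smul_eq_mul, hsy, ← hB, ← hQx, ← hQy]
        ring
      linarith [this ▸ h0]
    have hd := discrim_le_zero h
    rw [discrim] at hd
    nlinarith
  have h1 : B ≤ Real.sqrt (B * B) := by
    rw [Real.sqrt_mul_self_eq_abs]; exact le_abs_self B
  calc B ≤ Real.sqrt (B * B) := h1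
    _ ≤ Real.sqrt (Qx * Qy) := Real.sqrt_le_sqrt key
    _ = Real.sqrt Qx * Real.sqrt Qy := Real.sqrt_mul (quad_nonneg hM x) _

lemma tri_posdef (hM : M.PosDef) (x y : n → ℝ) :
    Real.sqrt ((x + y) ⬝ᵥ (M *ᵥ (x + y))) ≤
      Real.sqrt (x ⬝ᵥ (M *ᵥ x)) + Real.sqrt (y ⬝ᵥ (M *ᵥ y)) := by
  have hx := quad_nonneg hM x
  have hy := quad_nonneg hM y
  have hcs := cs_posdef hM x y
  have hexp : (x + y) ⬝ᵥ (M *ᵥ (x + y)) =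
      x ⬝ᵥ (M *ᵥ x) + 2 * (x ⬝ᵥ (M *ᵥ y)) + y ⬝ᵥ (M *ᵥ y) := by
    rw [mulVec_add, dotProduct_add, add_dotProduct, add_dotProduct,
      bil_symm hM.isHermitian y x]
    ring
  have hb : (x + y) ⬝ᵥ (M *ᵥ (x + y)) ≤
      (Real.sqrt (x ⬝ᵥ (M *ᵥ x)) + Real.sqrt (y ⬝ᵥ (M *ᵥ y))) ^ 2 := by
    rw [hexp]
    have h1 : x ⬝ᵥ (M *ᵥ x) = Real.sqrt (x ⬝ᵥ (M *ᵥ x)) ^ 2 := (Real.sq_sqrt hx).symm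
    have h2 : y ⬝ᵥ (M *ᵥ y) = Real.sqrt (y ⬝ᵥ (M *ᵥ y)) ^ 2 := (Real.sq_sqrt hy).symm
    nlinarith
  calc Real.sqrt ((x + y) ⬝ᵥ (M *ᵥ (x + y)))
      ≤ Real.sqrt ((Real.sqrt (x ⬝ᵥ (M *ᵥ x)) + Real.sqrt (y ⬝ᵥ (M *ᵥ y))) ^ 2) :=
        Real.sqrt_le_sqrt hb
    _ = _ := Real.sqrt_sq (by positivity)

lemma smul_quad (t : ℝ) (x : n → ℝ) :
    Real.sqrt ((t • x) ⬝ᵥ (M *ᵥ (t • x))) = |t| * Real.sqrt (x ⬝ᵥ (M *ᵥ x)) := by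
  have : (t • x) ⬝ᵥ (M *ᵥ (t • x)) = t ^ 2 * (x ⬝ᵥ (M *ᵥ x)) := by
    rw [mulVec_smul, dotProduct_smul, smul_dotProduct]
    simp [smul_eq_mul]; ring
  rw [this, Real.sqrt_mul (sq_nonneg t), Real.sqrt_sq_eq_abs]

end Quad

section Penrose
variable {n : Type*} [Fintype n] [DecidableEq n]

lemma penrose_unique_s6 (A B C : Matrix n n ℝ)
    (hB1 : A * B * A = A) (hB2 : B * A * B = B) (hB3 : (A * B)ᵀ = A * B) (hB4 : (B * A)ᵀ = B * A)
    (hC1 : A * C * A = A) (hC2 : C * A * C = C) (hC3 : (A * C)ᵀ = A * C) (hC4 : (C * A)ᵀ = C * A) :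
    B = C := by
  have hAB : A * B = A * C := by
    calc A * B = (A * C) * (A * B) := by
          rw [show (A * C) * (A * B) = (A * C * A) * B from by noncomm_ring, hC1]
    _ = (A * C)ᵀ * (A * B)ᵀ := by rw [hC3, hB3]
    _ = ((A * B) * (A * C))ᵀ := (transpose_mul (A * B) (A * C)).symm
    _ = (A * C)ᵀ := by
          rw [show (A * B) * (A * C) = (A * B * A) * C from by noncomm_ring, hB1]
    _ = A * C := hC3
  have hBA : B * A = C * A := by
    calc B * A = (B * A) * (C * A) := by
          rw [show (B * A) * (C * A) = B * (A * C * A) from by noncomm_ring, hC1]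
    _ = (B * A)ᵀ * (C * A)ᵀ := by rw [hB4, hC4]
    _ = ((C * A) * (B * A))ᵀ := (transpose_mul (C * A) (B * A)).symm
    _ = ((C * A))ᵀ := by
          rw [show (C * A) * (B * A) = C * (A * B * A) from by noncomm_ring, hB1]
    _ = C * A := hC4
  calc B = B * A * B := hB2.symm
    _ = (C * A) * B := by rw [hBA]
    _ = C * (A * B) := Matrix.mul_assoc _ _ _
    _ = C * (A * C) := by rw [hAB]
    _ = C * A * C := (Matrix.mul_assoc _ _ _).symm
    _ = C := hC2

lemma pinv_eq_s6 (A B : Matrix n n ℝ)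
    (h1 : A * B * A = A) (h2 : B * A * B = B) (h3 : (A * B)ᵀ = A * B) (h4 : (B * A)ᵀ = B * A) :
    pinv A = B := by
  have hex : ∃ B : Matrix n n ℝ,
      A * B * A = A ∧ B * A * B = B ∧ (A * B)ᵀ = A * B ∧ (B * A)ᵀ = B * A :=
    ⟨B, h1, h2, h3, h4⟩
  rw [pinv, dif_pos hex]
  obtain ⟨e1, e2, e3, e4⟩ := hex.choose_spec
  exact penrose_unique_s6 A _ B e1 e2 e3 e4 h1 h2 h3 h4

end Penrose

section Blk
variable {k : ℕ} (I : Finset (Fin k))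

def extI (x : ↥I → ℝ) : Fin k → ℝ := fun s => if h : s ∈ I then x ⟨s, h⟩ else 0

def restv (y : Fin k → ℝ) : ↥I → ℝ := fun s => y s

def blk (M : Matrix ↥I ↥I ℝ) : Matrix (Fin k) (Fin k) ℝ :=
  Matrix.of fun s t => if h : s ∈ I ∧ t ∈ I then M ⟨s, h.1⟩ ⟨t, h.2⟩ else 0

def subm (Sig : Matrix (Fin k) (Fin k) ℝ) : Matrix ↥I ↥I ℝ :=
  Matrix.of fun s t => Sig s t

lemma sum_dite_mem (f : ↥I → ℝ) :
    ∑ s : Fin k, (if h : s ∈ I then f ⟨s, h⟩ else 0) = ∑ s : ↥I, f s := by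
  rw [← Finset.sum_subset (Finset.subset_univ I)
    (fun x _ hx => dif_neg hx)]
  rw [← Finset.sum_attach I (fun s => if h : s ∈ I then f ⟨s, h⟩ else 0)]
  rw [Finset.univ_eq_attach]
  exact Finset.sum_congr rfl fun s _ => by simp

lemma restv_extI (x : ↥I → ℝ) : restv I (extI I x) = x := by
  funext s
  simp [restv, extI, s.2]

lemma extI_restv {y : Fin k → ℝ} (hy : ∀ s ∉ I, y s = 0) : extI I (restv I y) = y := by
  funext s
  by_cases h : s ∈ I
  · simp [extI, restv, h]
  · simp [extI, restv, h, hy s h]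

lemma extI_supp (x : ↥I → ℝ) (s : Fin k) (hs : s ∉ I) : extI I x s = 0 := dif_neg hs

lemma dot_extI (y : Fin k → ℝ) (x : ↥I → ℝ) : y ⬝ᵥ extI I x = restv I y ⬝ᵥ x := by
  unfold dotProduct
  rw [← sum_dite_mem I (fun s => restv I y s * x s)]
  apply Finset.sum_congr rfl
  intro s _
  by_cases h : s ∈ I
  · simp [extI, restv, h]
  · simp [extI, h]

lemma blk_transpose (M : Matrix ↥I ↥I ℝ) : (blk I M)ᵀ = blk I Mᵀ := by
  ext s t
  by_cases h : s ∈ I ∧ t ∈ I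
  · simp [blk, transpose_apply, h, and_comm]
  · have h' : ¬(t ∈ I ∧ s ∈ I) := fun hh => h ⟨hh.2, hh.1⟩
    simp [blk, transpose_apply, h, h']

lemma blk_mul (M N : Matrix ↥I ↥I ℝ) : blk I M * blk I N = blk I (M * N) := by
  ext s t
  rw [Matrix.mul_apply]
  by_cases hs : s ∈ I
  · by_cases ht : t ∈ I
    · have : ∀ u : Fin k, blk I M s u * blk I N u t =
          (if h : u ∈ I then M ⟨s, hs⟩ ⟨u, h⟩ * N ⟨u, h⟩ ⟨t, ht⟩ else 0) := by
        intro u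
        by_cases hu : u ∈ I
        · simp [blk, hs, ht, hu]
        · simp [blk, hu]
      rw [Finset.sum_congr rfl (fun u _ => this u),
        sum_dite_mem I (fun u => M ⟨s, hs⟩ u * N u ⟨t, ht⟩)]
      simp [blk, hs, ht, Matrix.mul_apply]
    · have h' : ¬(s ∈ I ∧ t ∈ I) := fun hh => ht hh.2
      simp only [blk, Matrix.of_apply, dif_neg h']
      apply Finset.sum_eq_zero
      intro u _
      by_cases hu : u ∈ I
      · simp [dif_neg (fun hh : u ∈ I ∧ t ∈ I => ht hh.2)]
      · simp [dif_neg (fun hh : u ∈ I ∧ t ∈ I => hu hh.1), dif_neg (fun hh : s ∈ I ∧ u ∈ I => hu hh.2)]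
  · have h' : ¬(s ∈ I ∧ t ∈ I) := fun hh => hs hh.1
    simp only [blk, Matrix.of_apply, dif_neg h']
    apply Finset.sum_eq_zero
    intro u _
    simp [dif_neg (fun hh : s ∈ I ∧ u ∈ I => hs hh.1)]

lemma blk_mulVec (M : Matrix ↥I ↥I ℝ) (y : Fin k → ℝ) :
    blk I M *ᵥ y = extI I (M *ᵥ restv I y) := by
  funext s
  rw [mulVec]
  by_cases hs : s ∈ I
  · have : ∀ t : Fin k, blk I M s t * y t =
        (if h : t ∈ I then M ⟨s, hs⟩ ⟨t, h⟩ * restv I y ⟨t, h⟩ else 0) := by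
      intro t
      by_cases ht : t ∈ I
      · simp [blk, restv, hs, ht]
      · simp [blk, ht]
    rw [dotProduct, Finset.sum_congr rfl (fun t _ => this t),
      sum_dite_mem I (fun t => M ⟨s, hs⟩ t * restv I y t)]
    simp [extI, hs, mulVec, dotProduct]
  · rw [extI, dif_neg hs, dotProduct]
    apply Finset.sum_eq_zero
    intro t _
    simp [blk, dif_neg (fun hh : s ∈ I ∧ t ∈ I => hs hh.1)]

lemma restrict_eq_blk (Sig : Matrix (Fin k) (Fin k) ℝ) :
    restrict Sig I = blk I (subm I Sig) := by
  ext s t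
  by_cases h : s ∈ I ∧ t ∈ I <;> simp [restrict, blk, subm, h]

lemma restv_mulVec_extI (Sig : Matrix (Fin k) (Fin k) ℝ) (x : ↥I → ℝ) :
    restv I (Sig *ᵥ extI I x) = subm I Sig *ᵥ x := by
  funext s
  show (Sig *ᵥ extI I x) (s : Fin k) = _
  rw [mulVec, dotProduct]
  have : ∀ t : Fin k, Sig (s : Fin k) t * extI I x t =
      (if h : t ∈ I then Sig (s : Fin k) t * x ⟨t, h⟩ else 0) := by
    intro t
    by_cases ht : t ∈ I
    · simp [extI, ht]
    · simp [extI, ht]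
  rw [Finset.sum_congr rfl (fun t _ => this t),
    sum_dite_mem I (fun t => Sig (s : Fin k) t * x t)]
  simp [subm, mulVec, dotProduct]

lemma quad_extI (Sig : Matrix (Fin k) (Fin k) ℝ) (x : ↥I → ℝ) :
    extI I x ⬝ᵥ (Sig *ᵥ extI I x) = x ⬝ᵥ (subm I Sig *ᵥ x) := by
  rw [dotProduct_comm, dot_extI, restv_mulVec_extI, dotProduct_comm]

end Blk


section PinvRestrict
variable {k : ℕ} {Sig : Matrix (Fin k) (Fin k) ℝ} (hSig : Sig.PosDef) (I : Finset (Fin k))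
include hSig

lemma subm_posdef : (subm I Sig).PosDef := by
  refine Matrix.PosDef.of_dotProduct_mulVec_pos ?_ ?_
  · have h := hSig.isHermitian
    ext s t
    have h2 : Sig (t : Fin k) (s : Fin k) = Sig (s : Fin k) (t : Fin k) := by
      conv_rhs => rw [← h]
      simp [conjTranspose_apply]
    simp [conjTranspose_apply, subm, h2]
  · intro x hx
    have hx' : extI I x ≠ 0 := by
      intro h0
      apply hx
      funext s
      have := congrFun h0 (s : Fin k)
      simpa [extI, s.2] using this
    have h := hSig.dotProduct_mulVec_pos hx'
    rw [star_trivial] at h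
    rw [star_trivial]
    rw [← quad_extI]
    exact h

lemma subm_det_isUnit : IsUnit (subm I Sig).det := (subm_posdef hSig I).det_pos.ne'.isUnit

lemma subm_mul_inv : subm I Sig * (subm I Sig)⁻¹ = 1 :=
  mul_nonsing_inv _ (subm_det_isUnit hSig I)

lemma subm_inv_mul : (subm I Sig)⁻¹ * subm I Sig = 1 :=
  nonsing_inv_mul _ (subm_det_isUnit hSig I)

lemma pinv_restrict : pinv (restrict Sig I) = blk I (subm I Sig)⁻¹ := by
  rw [restrict_eq_blk]
  apply pinv_eq_s6
  · rw [blk_mul, blk_mul, subm_mul_inv hSig, Matrix.one_mul]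
  · rw [blk_mul, blk_mul, subm_inv_mul hSig, Matrix.one_mul]
  · rw [blk_mul, subm_mul_inv hSig, blk_transpose, transpose_one]
  · rw [blk_mul, subm_inv_mul hSig, blk_transpose, transpose_one]

lemma pinv_quad_eq (y : Fin k → ℝ) :
    y ⬝ᵥ (pinv (restrict Sig I) *ᵥ y) = restv I y ⬝ᵥ ((subm I Sig)⁻¹ *ᵥ restv I y) := by
  rw [pinv_restrict hSig, blk_mulVec, dot_extI]

lemma weak_perI (lam y : Fin k → ℝ) (hsupp : ∀ s ∉ I, lam s = 0) :
    lam ⬝ᵥ y ≤ Real.sqrt (lam ⬝ᵥ (Sig *ᵥ lam)) *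
      Real.sqrt (y ⬝ᵥ (pinv (restrict Sig I) *ᵥ y)) := by
  set S := subm I Sig with hSdef
  have hS : S.PosDef := subm_posdef hSig I
  set u := restv I lam with hu
  set v := restv I y with hv
  have hlam : lam = extI I u := (extI_restv I hsupp).symm
  have hd : lam ⬝ᵥ y = u ⬝ᵥ v := by
    rw [hlam, dotProduct_comm, dot_extI, ← hv, dotProduct_comm]
  have hq : lam ⬝ᵥ (Sig *ᵥ lam) = u ⬝ᵥ (S *ᵥ u) := by
    rw [hlam, quad_extI]
  set w : ↥I → ℝ := S⁻¹ *ᵥ v with hw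
  have hSw : S *ᵥ w = v := by
    rw [hw, mulVec_mulVec, subm_mul_inv hSig, one_mulVec]
  have hwSw : w ⬝ᵥ (S *ᵥ w) = v ⬝ᵥ (S⁻¹ *ᵥ v) := by
    rw [hSw, dotProduct_comm, hw]
  have huv : u ⬝ᵥ v = u ⬝ᵥ (S *ᵥ w) := by rw [hSw]
  rw [hd, hq, pinv_quad_eq hSig, ← hv, ← hwSw, huv]
  exact cs_posdef hS u w

lemma feas_tool (y : Fin k → ℝ) :
    ∃ lam : Fin k → ℝ, (∀ s ∉ I, lam s = 0) ∧
      lam ⬝ᵥ y = y ⬝ᵥ (pinv (restrict Sig I) *ᵥ y) ∧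
      lam ⬝ᵥ (Sig *ᵥ lam) = y ⬝ᵥ (pinv (restrict Sig I) *ᵥ y) ∧
      0 ≤ y ⬝ᵥ (pinv (restrict Sig I) *ᵥ y) := by
  set S := subm I Sig with hSdef
  set v := restv I y with hv
  set w : ↥I → ℝ := S⁻¹ *ᵥ v with hw
  refine ⟨extI I w, extI_supp I w, ?_, ?_, ?_⟩
  · rw [dotProduct_comm, dot_extI, ← hv, pinv_quad_eq hSig, ← hv, hw, dotProduct_comm]
  · rw [quad_extI, hw, mulVec_mulVec, subm_mul_inv hSig, one_mulVec, dotProduct_comm,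
      pinv_quad_eq hSig, ← hv]
  · rw [pinv_quad_eq hSig, ← hv, ← hw]
    have : v ⬝ᵥ (S⁻¹ *ᵥ v) = extI I w ⬝ᵥ (Sig *ᵥ extI I w) := by
      rw [quad_extI, hw, mulVec_mulVec, subm_mul_inv hSig, one_mulVec, dotProduct_comm]
    rw [hw] at this
    rw [this]
    exact quad_nonneg hSig _

end PinvRestrict

open Pointwise

section MainAux
variable {k : ℕ} (Sig : Matrix (Fin k) (Fin k) ℝ) (𝓘 : Finset (Finset (Fin k)))
  (c : Finset (Fin k) → ℝ)

def Dset (b : Fin k → ℝ) : Set ℝ :=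
  {r : ℝ |
    ∃ lam : Finset (Fin k) → (Fin k → ℝ),
      (∀ I ∈ 𝓘, ∀ s, s ∉ I → lam I s = 0) ∧
      (∑ I ∈ 𝓘, lam I = b) ∧
      r = ∑ I ∈ 𝓘, Real.sqrt (c I) * Real.sqrt (lam I ⬝ᵥ (Sig *ᵥ lam I))}

lemma Dset_nonneg (b : Fin k → ℝ) : ∀ r ∈ Dset Sig 𝓘 c b, 0 ≤ r := by
  rintro r ⟨lam, _, _, rfl⟩
  apply Finset.sum_nonneg
  intro I _
  exact mul_nonneg (Real.sqrt_nonneg _) (Real.sqrt_nonneg _)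

lemma Dset_bddBelow (b : Fin k → ℝ) : BddBelow (Dset Sig 𝓘 c b) :=
  ⟨0, fun r hr => Dset_nonneg Sig 𝓘 c b r hr⟩

lemma Dset_nonempty (b : Fin k → ℝ) (hb : ∀ s, s ∉ 𝓘.sup id → b s = 0) :
    (Dset Sig 𝓘 c b).Nonempty := by
  classical
  have hex : ∀ s : Fin k, ∃ I : Finset (Fin k), s ∈ 𝓘.sup id → (I ∈ 𝓘 ∧ s ∈ I) := by
    intro s
    by_cases h : s ∈ 𝓘.sup id
    · obtain ⟨I, hI, hsI⟩ := Finset.mem_sup.1 h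
      exact ⟨I, fun _ => ⟨hI, hsI⟩⟩
    · exact ⟨∅, fun h' => absurd h' h⟩
  choose J hJ using hex
  refine ⟨_, fun I => fun s => if s ∈ 𝓘.sup id ∧ J s = I then b s else 0, ?_, ?_, rfl⟩
  · intro I _ s hs
    show (if s ∈ 𝓘.sup id ∧ J s = I then b s else 0) = 0
    rw [if_neg]
    rintro ⟨h1, h2⟩
    exact hs (h2 ▸ (hJ s h1).2)
  · funext s
    rw [Finset.sum_apply]
    by_cases h : s ∈ 𝓘.sup id
    · have : ∀ I ∈ 𝓘, (if s ∈ 𝓘.sup id ∧ J s = I then b s else 0)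
          = (if J s = I then b s else 0) := by
        intro I _
        simp [h]
      rw [Finset.sum_congr rfl this, Finset.sum_ite_eq 𝓘 (J s) (fun _ => b s),
        if_pos (hJ s h).1]
    · rw [hb s h]
      apply Finset.sum_eq_zero
      intro I _
      split_ifs <;> rfl

lemma Dset_scale (hSig : Sig.PosDef) {t : ℝ} (ht : 0 < t) (b : Fin k → ℝ) {r : ℝ}
    (hr : r ∈ Dset Sig 𝓘 c b) : t * r ∈ Dset Sig 𝓘 c (t • b) := by
  obtain ⟨lam, h1, h2, rfl⟩ := hr
  refine ⟨fun I => t • lam I, ?_, ?_, ?_⟩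
  · intro I hI s hs
    simp [h1 I hI s hs]
  · rw [← Finset.smul_sum, h2]
  · rw [Finset.mul_sum]
    apply Finset.sum_congr rfl
    intro I _
    rw [smul_quad t (lam I), abs_of_pos ht]
    ring

lemma Dset_smul (hSig : Sig.PosDef) {t : ℝ} (ht : 0 < t) (b : Fin k → ℝ) :
    Dset Sig 𝓘 c (t • b) = t • Dset Sig 𝓘 c b := by
  ext r
  constructor
  · intro hr
    have h2 := Dset_scale Sig 𝓘 c hSig (by positivity : (0:ℝ) < t⁻¹) (t • b) hr
    rw [smul_smul, inv_mul_cancel₀ ht.ne', one_smul] at h2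
    exact ⟨t⁻¹ * r, h2, mul_inv_cancel_left₀ ht.ne' r⟩
  · rintro ⟨r₀, hr₀, rfl⟩
    exact Dset_scale Sig 𝓘 c hSig ht b hr₀

lemma Dset_inf_smul (hSig : Sig.PosDef) {t : ℝ} (ht : 0 < t) (b : Fin k → ℝ) :
    sInf (Dset Sig 𝓘 c (t • b)) = t * sInf (Dset Sig 𝓘 c b) := by
  rw [Dset_smul Sig 𝓘 c hSig ht, Real.sInf_smul_of_nonneg ht.le, smul_eq_mul]

lemma Dset_inf_add (hSig : Sig.PosDef) (b b' : Fin k → ℝ)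
    (hb : ∀ s, s ∉ 𝓘.sup id → b s = 0) (hb' : ∀ s, s ∉ 𝓘.sup id → b' s = 0) :
    sInf (Dset Sig 𝓘 c (b + b')) ≤ sInf (Dset Sig 𝓘 c b) + sInf (Dset Sig 𝓘 c b') := by
  have key : ∀ r ∈ Dset Sig 𝓘 c b, ∀ r' ∈ Dset Sig 𝓘 c b',
      sInf (Dset Sig 𝓘 c (b + b')) ≤ r + r' := by
    rintro r ⟨lam, h1, h2, rfl⟩ r' ⟨lam', h1', h2', rfl⟩
    have hmem : (∑ I ∈ 𝓘, Real.sqrt (c I) *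
        Real.sqrt ((lam I + lam' I) ⬝ᵥ (Sig *ᵥ (lam I + lam' I)))) ∈
        Dset Sig 𝓘 c (b + b') := by
      refine ⟨fun I => lam I + lam' I, ?_, ?_, rfl⟩
      · intro I hI s hs
        simp [h1 I hI s hs, h1' I hI s hs]
      · rw [Finset.sum_add_distrib, h2, h2']
    refine le_trans (csInf_le (Dset_bddBelow Sig 𝓘 c _) hmem) ?_
    rw [← Finset.sum_add_distrib]
    apply Finset.sum_le_sum
    intro I _
    rw [← mul_add]
    exact mul_le_mul_of_nonneg_left (tri_posdef hSig (lam I) (lam' I)) (Real.sqrt_nonneg _)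
  have step1 : ∀ r ∈ Dset Sig 𝓘 c b,
      sInf (Dset Sig 𝓘 c (b + b')) ≤ r + sInf (Dset Sig 𝓘 c b') := by
    intro r hr
    rw [← sub_le_iff_le_add']
    apply le_csInf (Dset_nonempty Sig 𝓘 c b' hb')
    intro r' hr'
    rw [sub_le_iff_le_add']
    exact key r hr r' hr'
  rw [← sub_le_iff_le_add]
  apply le_csInf (Dset_nonempty Sig 𝓘 c b hb)
  intro r hr
  rw [sub_le_iff_le_add]
  exact step1 r hr

end MainAux

lemma sum_dot {k : ℕ} (𝓘 : Finset (Finset (Fin k))) (lam : Finset (Fin k) → (Fin k → ℝ))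
    (y : Fin k → ℝ) : (∑ I ∈ 𝓘, lam I) ⬝ᵥ y = ∑ I ∈ 𝓘, (lam I ⬝ᵥ y) := by
  simp only [dotProduct, Finset.sum_apply, Finset.sum_mul]
  exact Finset.sum_comm

lemma Dset_weak {k : ℕ} {Sig : Matrix (Fin k) (Fin k) ℝ} (hSig : Sig.PosDef)
    (𝓘 : Finset (Finset (Fin k))) (c : Finset (Fin k) → ℝ) (b y : Fin k → ℝ)
    (hy : ∀ I ∈ 𝓘, y ⬝ᵥ (pinv (restrict Sig I) *ᵥ y) ≤ c I) {r : ℝ}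
    (hr : r ∈ Dset Sig 𝓘 c b) : b ⬝ᵥ y ≤ r := by
  obtain ⟨lam, h1, h2, rfl⟩ := hr
  rw [← h2, sum_dot]
  apply Finset.sum_le_sum
  intro I hI
  calc lam I ⬝ᵥ y
      ≤ Real.sqrt (lam I ⬝ᵥ (Sig *ᵥ lam I)) *
        Real.sqrt (y ⬝ᵥ (pinv (restrict Sig I) *ᵥ y)) :=
        weak_perI hSig I (lam I) y (fun s hs => h1 I hI s hs)
    _ ≤ Real.sqrt (lam I ⬝ᵥ (Sig *ᵥ lam I)) * Real.sqrt (c I) :=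
        mul_le_mul_of_nonneg_left (Real.sqrt_le_sqrt (hy I hI)) (Real.sqrt_nonneg _)
    _ = Real.sqrt (c I) * Real.sqrt (lam I ⬝ᵥ (Sig *ᵥ lam I)) := mul_comm _ _

theorem stmt6 (k : ℕ) (hk : 1 ≤ k)
    (Sig : Matrix (Fin k) (Fin k) ℝ) (hSig : Sig.PosDef)
    (𝓘 : Finset (Finset (Fin k))) (h𝓘 : ∀ I ∈ 𝓘, I.Nonempty)
    (c : Finset (Fin k) → ℝ) (hc : ∀ I ∈ 𝓘, 0 < c I)
    (a : Fin k → ℝ) (ha : ∀ s, s ∉ 𝓘.sup id → a s = 0) :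
    sInf {r : ℝ |
        ∃ lam : Finset (Fin k) → (Fin k → ℝ),
          (∀ I ∈ 𝓘, ∀ s, s ∉ I → lam I s = 0) ∧
          (∑ I ∈ 𝓘, lam I = a) ∧
          r = ∑ I ∈ 𝓘, Real.sqrt (c I) * Real.sqrt (lam I ⬝ᵥ (Sig *ᵥ lam I))} =
      sSup {r : ℝ |
        ∃ y : Fin k → ℝ,
          (∀ I ∈ 𝓘, y ⬝ᵥ (pinv (restrict Sig I) *ᵥ y) ≤ c I) ∧
          r = a ⬝ᵥ y} := by
  classical
  have hD : {r : ℝ |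
        ∃ lam : Finset (Fin k) → (Fin k → ℝ),
          (∀ I ∈ 𝓘, ∀ s, s ∉ I → lam I s = 0) ∧
          (∑ I ∈ 𝓘, lam I = a) ∧
          r = ∑ I ∈ 𝓘, Real.sqrt (c I) * Real.sqrt (lam I ⬝ᵥ (Sig *ᵥ lam I))}
      = Dset Sig 𝓘 c a := rfl
  rw [hD]
  set R : Set ℝ := {r : ℝ |
        ∃ y : Fin k → ℝ,
          (∀ I ∈ 𝓘, y ⬝ᵥ (pinv (restrict Sig I) *ᵥ y) ≤ c I) ∧
          r = a ⬝ᵥ y} with hRdef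
  have hRne : R.Nonempty :=
    ⟨0, 0, fun I hI => by simpa using (hc I hI).le, by simp⟩
  have hDne := Dset_nonempty Sig 𝓘 c a ha
  have hRub : ∀ q ∈ R, q ≤ sInf (Dset Sig 𝓘 c a) := by
    rintro q ⟨y, hy, rfl⟩
    exact le_csInf hDne (fun r hr => Dset_weak hSig 𝓘 c a y hy hr)
  have h1 : sSup R ≤ sInf (Dset Sig 𝓘 c a) := csSup_le hRne hRub
  have hRbdd : BddAbove R := ⟨sInf (Dset Sig 𝓘 c a), hRub⟩
  by_cases haz : a = 0
  · subst haz
    have h0D : (0 : ℝ) ∈ Dset Sig 𝓘 c 0 :=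
      ⟨fun _ => 0, by simp, by simp, by simp⟩
    have hinf : sInf (Dset Sig 𝓘 c 0) = 0 :=
      le_antisymm (csInf_le (Dset_bddBelow Sig 𝓘 c 0) h0D)
        (le_csInf ⟨0, h0D⟩ (Dset_nonneg Sig 𝓘 c 0))
    have h0R : (0 : ℝ) ∈ R := ⟨0, fun I hI => by simpa using (hc I hI).le, by simp⟩
    have hsup : sSup R = 0 :=
      le_antisymm (csSup_le hRne (by rintro q ⟨y, hy, rfl⟩; simp))
        (le_csSup hRbdd h0R)
    rw [hinf, hsup]
  · set T := 𝓘.sup id with hTdef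
    set P : (Fin k → ℝ) →ₗ[ℝ] (Fin k → ℝ) :=
      { toFun := fun x => fun s => if s ∈ T then x s else 0
        map_add' := by
          intro x y; funext s; by_cases h : s ∈ T <;> simp [h]
        map_smul' := by
          intro m x; funext s; by_cases h : s ∈ T <;> simp [h] } with hPdef
    have hPsupp : ∀ x : Fin k → ℝ, ∀ s, s ∉ T → P x s = 0 := fun x s hs => if_neg hs
    have hPa : P a = a := by
      funext s
      by_cases h : s ∈ T
      · exact if_pos h
      · have h2 : P a s = 0 := if_neg h
        rw [h2, ha s h]
    set N : (Fin k → ℝ) → ℝ := fun x => sInf (Dset Sig 𝓘 c (P x)) with hNdef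
    have hN0 : 0 ≤ N 0 := Real.sInf_nonneg (Dset_nonneg Sig 𝓘 c _)
    have N_hom : ∀ t : ℝ, 0 < t → ∀ x, N (t • x) = t * N x := by
      intro t ht x
      show sInf (Dset Sig 𝓘 c (P (t • x))) = t * sInf (Dset Sig 𝓘 c (P x))
      rw [LinearMap.map_smul]
      exact Dset_inf_smul Sig 𝓘 c hSig ht (P x)
    have N_add : ∀ x y : Fin k → ℝ, N (x + y) ≤ N x + N y := by
      intro x y
      show sInf (Dset Sig 𝓘 c (P (x + y))) ≤ _
      rw [LinearMap.map_add]
      exact Dset_inf_add Sig 𝓘 c hSig (P x) (P y) (hPsupp x) (hPsupp y)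
    have hf : ∀ x : (LinearPMap.mkSpanSingleton (K := ℝ) (L := ℝ) (σ := RingHom.id ℝ) a (N a) haz).domain,
        (LinearPMap.mkSpanSingleton (K := ℝ) (L := ℝ) (σ := RingHom.id ℝ) a (N a) haz) x ≤ N x := by
      intro x
      obtain ⟨t, ht⟩ := Submodule.mem_span_singleton.1 x.2
      have hxe : x = ⟨t • a, by rw [ht]; exact x.2⟩ := Subtype.ext ht.symm
      rw [hxe, LinearPMap.mkSpanSingleton'_apply]
      show t • N a ≤ N (t • a)
      rcases lt_trichotomy t 0 with hlt | heq | hgt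
      · have h1' : t • a = (-t) • (-a) := by rw [neg_smul_neg]
        rw [h1', N_hom (-t) (by linarith) (-a), smul_eq_mul]
        have h2' : 0 ≤ N a + N (-a) := by
          have h3 := N_add a (-a)
          rw [add_neg_cancel] at h3
          linarith
        nlinarith
      · subst heq
        rw [zero_smul, zero_smul]
        exact hN0
      · rw [N_hom t hgt a, smul_eq_mul]
    obtain ⟨g, hg1, hg2⟩ := exists_extension_of_le_sublinear
      (LinearPMap.mkSpanSingleton (K := ℝ) (L := ℝ) (σ := RingHom.id ℝ) a (N a) haz) N N_hom N_add hf
    have hga : g a = N a := by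
      have h4 := hg1 ⟨a, Submodule.mem_span_singleton_self a⟩
      rw [LinearPMap.mkSpanSingleton_apply] at h4
      exact h4
    set y := fun s : Fin k => g (Pi.single s 1) with hydef
    have hdot : ∀ z : Fin k → ℝ, z ⬝ᵥ y = g z := by
      intro z
      have hz : z = ∑ s : Fin k, Pi.single s (z s) := by
        funext i
        rw [Finset.sum_apply]
        exact (Fintype.sum_pi_single i z).symm
      conv_rhs => rw [hz]
      rw [map_sum g _ Finset.univ]
      unfold dotProduct
      apply Finset.sum_congr rfl
      intro s _
      have hsingle : Pi.single s (z s) = z s • (Pi.single s 1 : Fin k → ℝ) := by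
        funext j
        by_cases h : j = s <;> simp [Pi.single_apply, h]
      rw [hsingle, LinearMap.map_smul, smul_eq_mul]
    have hyfeas : ∀ I ∈ 𝓘, y ⬝ᵥ (pinv (restrict Sig I) *ᵥ y) ≤ c I := by
      intro I hI
      obtain ⟨lam, hls, hl1, hl2, ht0⟩ := feas_tool hSig I y
      set t := y ⬝ᵥ (pinv (restrict Sig I) *ᵥ y) with htdef
      have hIT : I ⊆ T := fun x hx => Finset.mem_sup.2 ⟨I, hI, hx⟩
      have hPl : P lam = lam := by
        funext s
        by_cases h : s ∈ T
        · exact if_pos h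
        · have h2 : lam s = 0 := hls s (fun hsI => h (hIT hsI))
          rw [hPsupp lam s h, h2]
      have hmem : Real.sqrt (c I) * Real.sqrt t ∈ Dset Sig 𝓘 c lam := by
        refine ⟨fun J => if J = I then lam else 0, ?_, ?_, ?_⟩
        · intro J hJ s hs
          show (if J = I then lam else 0) s = 0
          split_ifs with h
          · exact hls s (h ▸ hs)
          · rfl
        · rw [Finset.sum_ite_eq' 𝓘 I (fun _ => lam), if_pos hI]
        · rw [Finset.sum_eq_single_of_mem I hI]
          · simp [hl2]
          · intro J hJ hne
            simp [if_neg hne]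
      have hNl : N lam ≤ Real.sqrt (c I) * Real.sqrt t := by
        show sInf (Dset Sig 𝓘 c (P lam)) ≤ _
        rw [hPl]
        exact csInf_le (Dset_bddBelow Sig 𝓘 c lam) hmem
      have hkey : t ≤ Real.sqrt (c I) * Real.sqrt t := by
        have hgl : g lam = t := by rw [← hdot lam, hl1]
        calc t = g lam := hgl.symm
          _ ≤ N lam := hg2 lam
          _ ≤ _ := hNl
      rcases eq_or_lt_of_le ht0 with h0 | hpos
      · rw [← h0]
        exact (hc I hI).le
      · have hst : 0 < Real.sqrt t := Real.sqrt_pos.2 hpos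
        have h5 : Real.sqrt t * Real.sqrt t ≤ Real.sqrt (c I) * Real.sqrt t := by
          rw [Real.mul_self_sqrt ht0]
          exact hkey
        have h6 : Real.sqrt t ≤ Real.sqrt (c I) := le_of_mul_le_mul_right h5 hst
        calc t = Real.sqrt t * Real.sqrt t := (Real.mul_self_sqrt ht0).symm
          _ ≤ Real.sqrt (c I) * Real.sqrt (c I) :=
              mul_le_mul h6 h6 (Real.sqrt_nonneg _) (Real.sqrt_nonneg _)
          _ = c I := Real.mul_self_sqrt (hc I hI).le
    have hfin : sInf (Dset Sig 𝓘 c a) = a ⬝ᵥ y := by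
      rw [hdot a, hga]
      simp only [hNdef]
      rw [hPa]
    have h2 : sInf (Dset Sig 𝓘 c a) ≤ sSup R := by
      rw [hfin]
      exact le_csSup hRbdd ⟨y, hyfeas, rfl⟩
    exact le_antisymm h2 h1
end

section
/- Let 𝓙 be a finite family of subsets of {1,…,k} and, for each I ∈ 𝓙, let M_I be a symmetric positive semidefinite k×k real matrix such that (M_I)_{st} = 0 unless both s ∈ I and t ∈ I, and such that x^⊤ M_I x > 0 for every nonzero x ∈ ℝ^k supported on I. Then the range of Σ_{I∈𝓙} M_I equals the span of {e_i : i ∈ ∪𝓙}, where e_i are the standard basis vectors of ℝ^k. -/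
open Matrix

theorem stmt8 (k : ℕ) (hk : 1 ≤ k)
    (𝓙 : Finset (Finset (Fin k)))
    (M : Finset (Fin k) → Matrix (Fin k) (Fin k) ℝ)
    (hpsd : ∀ I ∈ 𝓙, (M I).PosSemidef)
    (hzero : ∀ I ∈ 𝓙, ∀ s t, ¬(s ∈ I ∧ t ∈ I) → M I s t = 0)
    (hpos : ∀ I ∈ 𝓙, ∀ x : Fin k → ℝ, x ≠ 0 → (∀ s, s ∉ I → x s = 0) →
      0 < x ⬝ᵥ (M I *ᵥ x)) :
    LinearMap.range (∑ I ∈ 𝓙, M I).mulVecLin =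
      Submodule.span ℝ
        ((fun i => (Pi.single i 1 : Fin k → ℝ)) '' ((𝓙.sup id : Finset (Fin k)) : Set (Fin k))) := by
  classical
  set S : Finset (Fin k) := 𝓙.sup id with hS
  set A : Matrix (Fin k) (Fin k) ℝ := ∑ I ∈ 𝓙, M I with hA
  set V : Submodule ℝ (Fin k → ℝ) :=
    Submodule.span ℝ ((fun i => (Pi.single i 1 : Fin k → ℝ)) '' (S : Set (Fin k))) with hV
  have hmemS : ∀ I ∈ 𝓙, ∀ i ∈ I, i ∈ S := fun I hI i hi =>
    Finset.mem_sup.mpr ⟨I, hI, hi⟩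
  -- membership in V iff supported on S
  have hVmem : ∀ x : Fin k → ℝ, (∀ i, i ∉ S → x i = 0) → x ∈ V := by
    intro x hx
    have hx2 : x = ∑ i ∈ S, x i • (Pi.single i 1 : Fin k → ℝ) := by
      funext j
      rw [Finset.sum_apply]
      simp only [Pi.smul_apply, Pi.single_apply, smul_eq_mul, mul_ite, mul_one, mul_zero]
      by_cases hj : j ∈ S
      · rw [Finset.sum_eq_single j]
        · simp
        · intro b _ hbj; simp [Ne.symm hbj]
        · intro h; exact absurd hj h
      · rw [hx j hj, Finset.sum_eq_zero]
        intro b hb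
        have : j ≠ b := by rintro rfl; exact hj hb
        simp [this]
    rw [hx2]
    exact Submodule.sum_mem _ fun i hi =>
      Submodule.smul_mem _ _ (Submodule.subset_span ⟨i, by simpa using hi, rfl⟩)
  have hVsupp : ∀ x ∈ V, ∀ i, i ∉ S → x i = 0 := by
    intro x hx
    refine Submodule.span_induction ?_ ?_ ?_ ?_ hx
    · rintro _ ⟨i, hi, rfl⟩ j hj
      have : j ≠ i := by rintro rfl; exact hj (by simpa using hi)
      simp [Pi.single_apply, this]
    · intro i _; rfl
    · intro y z _ _ hy hz i hi; simp [hy i hi, hz i hi]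
    · intro a y _ hy i hi; simp [hy i hi]
  -- rows of A outside S vanish
  have hArow : ∀ i, i ∉ S → ∀ j, A i j = 0 := by
    intro i hi j
    rw [hA, Matrix.sum_apply, ]
    exact Finset.sum_eq_zero fun I hI =>
      hzero I hI i j (fun h => hi (hmemS I hI i h.1))
  have hrange : ∀ w : Fin k → ℝ, A *ᵥ w ∈ V := by
    intro w
    apply hVmem
    intro i hi
    simp [Matrix.mulVec, dotProduct, hArow i hi]
  -- kernel intersected with V is trivial
  have hker : ∀ x ∈ V, A *ᵥ x = 0 → x = 0 := by
    intro x hxV hx0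
    have hAx : A *ᵥ x = ∑ I ∈ 𝓙, M I *ᵥ x := by
      funext i
      rw [Finset.sum_apply, hA]
      simp only [Matrix.mulVec, dotProduct, Matrix.sum_apply, Finset.sum_mul]
      exact Finset.sum_comm
    have hsum : ∑ I ∈ 𝓙, x ⬝ᵥ M I *ᵥ x = 0 := by
      have h : x ⬝ᵥ A *ᵥ x = 0 := by rw [hx0, dotProduct_zero]
      rw [hAx] at h
      rw [← h]
      simp only [dotProduct, Finset.sum_apply, Finset.mul_sum]
      exact Finset.sum_comm
    have hnonneg : ∀ I ∈ 𝓙, 0 ≤ x ⬝ᵥ M I *ᵥ x := by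
      intro I hI
      simpa using (hpsd I hI).dotProduct_mulVec_nonneg x
    have hzero' : ∀ I ∈ 𝓙, x ⬝ᵥ M I *ᵥ x = 0 :=
      (Finset.sum_eq_zero_iff_of_nonneg hnonneg).mp hsum
    have hxI : ∀ I ∈ 𝓙, ∀ s ∈ I, x s = 0 := by
      intro I hI
      set xI : Fin k → ℝ := fun s => if s ∈ I then x s else 0 with hxIdef
      have hsupp : ∀ s, s ∉ I → xI s = 0 := by intro s hs; simp [hxIdef, hs]
      have heq : xI ⬝ᵥ M I *ᵥ xI = x ⬝ᵥ M I *ᵥ x := by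
        simp only [dotProduct, Matrix.mulVec]
        apply Finset.sum_congr rfl
        intro s _
        by_cases hs : s ∈ I
        · simp only [hxIdef, hs, if_true]
          congr 1
          apply Finset.sum_congr rfl
          intro t _
          by_cases ht : t ∈ I
          · simp [ht]
          · simp [ht, hzero I hI s t (fun h => ht h.2)]
        · simp only [hxIdef, hs, if_false, zero_mul]
          have : (∑ t, M I s t * x t) = 0 :=
            Finset.sum_eq_zero fun t _ => by
              rw [hzero I hI s t (fun h => hs h.1), zero_mul]
          rw [this, mul_zero]
      have hxI0 : xI = 0 := by
        by_contra hne
        have := hpos I hI xI hne hsupp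
        rw [heq, hzero' I hI] at this
        exact lt_irrefl 0 this
      intro s hs
      have : xI s = 0 := by rw [hxI0]; rfl
      simpa [hxIdef, hs] using this
    funext i
    by_cases hi : i ∈ S
    · obtain ⟨I, hI, hiI⟩ := Finset.mem_sup.mp hi
      exact hxI I hI i hiI
    · exact hVsupp x hxV i hi
  -- restriction of mulVecLin to V is injective, hence surjective
  have hmaps : ∀ x ∈ V, A.mulVecLin x ∈ V := fun x _ => hrange x
  set g : V →ₗ[ℝ] V := A.mulVecLin.restrict hmaps with hg
  have hginj : Function.Injective g := by
    intro a b hab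
    have h1 : A *ᵥ (a : Fin k → ℝ) = A *ᵥ (b : Fin k → ℝ) := by
      have := congrArg (Subtype.val) hab
      simpa [hg, LinearMap.restrict_apply] using this
    have h2 : A *ᵥ ((a : Fin k → ℝ) - b) = 0 := by
      rw [Matrix.mulVec_sub, h1, sub_self]
    have h3 : (a : Fin k → ℝ) - b = 0 :=
      hker _ (Submodule.sub_mem _ a.2 b.2) h2
    exact Subtype.ext (sub_eq_zero.mp h3)
  have hgsurj : Function.Surjective g :=
    (LinearMap.injective_iff_surjective).mp hginj
  apply le_antisymm
  · rintro y ⟨w, rfl⟩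
    exact hrange w
  · intro v hv
    obtain ⟨⟨w, hw⟩, hgw⟩ := hgsurj ⟨v, hv⟩
    refine ⟨w, ?_⟩
    have := congrArg (Subtype.val) hgw
    simpa [hg, LinearMap.restrict_apply] using this
end

section
/- Let M and Ξ be symmetric positive semidefinite ℓ×ℓ real matrices, let J ⊆ {1,…,ℓ} be such that the range of M equals the span of {e_j : j ∈ J}, and suppose that ‖Ξ‖_op ≤ λ_min(M_{(J)})/2 and that M + Ξ is invertible. Then for every x ∈ ℝ^ℓ in the range of M, one has |x^⊤ (M+Ξ)^{-1} x − x_{(J)}^⊤ M_{(J)}^{-1} x_{(J)}| ≤ 2 ‖M_{(J)}^{-1}‖_op² · ‖Ξ‖_op · ‖x‖₂². -/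
open Matrix

/-- Minimum eigenvalue of a square real matrix, as the infimum of its real spectrum. -/
noncomputable def minEig {n : Type*} [Fintype n] [DecidableEq n] (A : Matrix n n ℝ) : ℝ :=
  sInf (spectrum ℝ A)

/-- The principal submatrix of `M` indexed by `J`. -/
def subJ {l : ℕ} (M : Matrix (Fin l) (Fin l) ℝ) (J : Finset (Fin l)) :
    Matrix {j // j ∈ J} {j // j ∈ J} ℝ :=
  M.submatrix Subtype.val Subtype.val

/-- The restriction of a vector `x` to the coordinates in `J`. -/
def restr {l : ℕ} (x : Fin l → ℝ) (J : Finset (Fin l)) : {j // j ∈ J} → ℝ :=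
  fun j => x j.val

open scoped Matrix.Norms.L2Operator RealInnerProductSpace MatrixOrder

noncomputable def enormE {n : Type*} [Fintype n] (v : n → ℝ) : ℝ :=
  ‖(WithLp.equiv 2 (n → ℝ)).symm v‖

lemma opNorm_eq {n : Type*} [Fintype n] [DecidableEq n] (A : Matrix n n ℝ) :
    opNorm A = ‖A‖ := rfl

lemma enormE_nonneg {n : Type*} [Fintype n] (v : n → ℝ) : 0 ≤ enormE v := norm_nonneg _

lemma opNorm_nonneg {n : Type*} [Fintype n] [DecidableEq n] (A : Matrix n n ℝ) :
    0 ≤ opNorm A := norm_nonneg _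

lemma inner_eq_dot {n : Type*} [Fintype n] (u v : n → ℝ) :
    (inner ℝ ((WithLp.equiv 2 (n → ℝ)).symm u) ((WithLp.equiv 2 (n → ℝ)).symm v) : ℝ) = u ⬝ᵥ v := by
  simp [PiLp.inner_apply, dotProduct, RCLike.inner_apply, mul_comm]

lemma dot_le_enorm {n : Type*} [Fintype n] (u v : n → ℝ) :
    u ⬝ᵥ v ≤ enormE u * enormE v := by
  rw [← inner_eq_dot]; exact real_inner_le_norm _ _

lemma abs_dot_le_enorm {n : Type*} [Fintype n] (u v : n → ℝ) :
    |u ⬝ᵥ v| ≤ enormE u * enormE v := by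
  rw [← inner_eq_dot]; exact abs_real_inner_le_norm _ _

lemma dot_self_eq {n : Type*} [Fintype n] (v : n → ℝ) : v ⬝ᵥ v = enormE v ^ 2 := by
  rw [← inner_eq_dot, real_inner_self_eq_norm_sq]; rfl

lemma enormE_mulVec_le {n : Type*} [Fintype n] [DecidableEq n] (A : Matrix n n ℝ) (v : n → ℝ) :
    enormE (A *ᵥ v) ≤ opNorm A * enormE v := by
  simpa [enormE, opNorm_eq] using A.l2_opNorm_mulVec ((WithLp.equiv 2 (n → ℝ)).symm v)

lemma enormE_sub_le {n : Type*} [Fintype n] (u v : n → ℝ) :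
    enormE (u - v) ≤ enormE u + enormE v := by
  simpa [enormE, WithLp.toLp_sub] using
    norm_sub_le ((WithLp.equiv 2 (n → ℝ)).symm u) ((WithLp.equiv 2 (n → ℝ)).symm v)

lemma enormE_eq_sqrt {n : Type*} [Fintype n] (v : n → ℝ) :
    enormE v = Real.sqrt (∑ i, v i ^ 2) := by
  rw [enormE, EuclideanSpace.norm_eq]
  congr 1; apply Finset.sum_congr rfl; intro i _; rw [Real.norm_eq_abs, sq_abs]; rfl

def extJ {l : ℕ} (J : Finset (Fin l)) (v : {j // j ∈ J} → ℝ) : Fin l → ℝ :=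
  fun i => if h : i ∈ J then v ⟨i, h⟩ else 0

lemma restr_extJ {l : ℕ} (J : Finset (Fin l)) (v : {j // j ∈ J} → ℝ) :
    restr (extJ J v) J = v := by
  funext j; simp [restr, extJ]

lemma extJ_not_mem {l : ℕ} (J : Finset (Fin l)) (v : {j // j ∈ J} → ℝ) {i : Fin l}
    (h : i ∉ J) : extJ J v i = 0 := by simp [extJ, h]

lemma mem_span_singles {l : ℕ} (J : Finset (Fin l)) (x : Fin l → ℝ) :
    x ∈ Submodule.span ℝ ((fun i => (Pi.single i 1 : Fin l → ℝ)) '' (J : Set (Fin l))) ↔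
      ∀ i ∉ J, x i = 0 := by
  constructor
  · intro hx i hi
    induction hx using Submodule.span_induction with
    | mem y hy =>
      obtain ⟨j, hj, rfl⟩ := hy
      have : j ≠ i := fun h => hi (h ▸ hj)
      simp [Pi.single_eq_of_ne' this]
    | zero => rfl
    | add a b _ _ ha hb => simp [ha, hb]
    | smul c a _ ha => simp [ha]
  · intro h
    have : x = ∑ j ∈ J, x j • (Pi.single j 1 : Fin l → ℝ) := by
      funext i
      rw [Finset.sum_apply]
      by_cases hi : i ∈ J
      · rw [Finset.sum_eq_single i]
        · simp
        · intro b _ hb; simp [Pi.single_eq_of_ne' hb]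
        · exact fun h' => absurd hi h'
      · rw [h i hi, Finset.sum_eq_zero]
        intro b hb
        have : b ≠ i := fun h' => hi (h' ▸ hb)
        simp [Pi.single_eq_of_ne' this]
    rw [this]
    exact Submodule.sum_mem _ fun j hj => Submodule.smul_mem _ _
      (Submodule.subset_span ⟨j, hj, rfl⟩)

lemma dot_restr {l : ℕ} (J : Finset (Fin l)) (a b : Fin l → ℝ)
    (ha : ∀ i ∉ J, a i = 0) :
    a ⬝ᵥ b = restr a J ⬝ᵥ restr b J := by
  unfold dotProduct restr
  rw [Finset.sum_coe_sort J (fun i => a i * b i)]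
  symm
  apply Finset.sum_subset (Finset.subset_univ J)
  intro i _ hi
  rw [ha i hi, zero_mul]

lemma restr_add {l : ℕ} (J : Finset (Fin l)) (a b : Fin l → ℝ) :
    restr (a + b) J = restr a J + restr b J := rfl

lemma sq_sum_restr_le {l : ℕ} (J : Finset (Fin l)) (a : Fin l → ℝ) :
    ∑ j : {j // j ∈ J}, (restr a J j) ^ 2 ≤ ∑ i, (a i) ^ 2 := by
  rw [show ∑ j : {j // j ∈ J}, (restr a J j) ^ 2 = ∑ i ∈ J, a i ^ 2 from
    Finset.sum_coe_sort J (fun i => a i ^ 2)]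
  exact Finset.sum_le_sum_of_subset_of_nonneg (Finset.subset_univ J)
    (fun i _ _ => sq_nonneg _)

lemma minEig_rayleigh {n : Type*} [Fintype n] [DecidableEq n] [Nonempty n]
    {A : Matrix n n ℝ} (hA : A.PosDef) :
    0 < minEig A ∧ ∀ v : n → ℝ, minEig A * (v ⬝ᵥ v) ≤ v ⬝ᵥ (A *ᵥ v) := by
  have hH := hA.isHermitian
  obtain ⟨i0, -, hmin⟩ := Finset.exists_min_image Finset.univ hH.eigenvalues
    Finset.univ_nonempty
  set μ0 := hH.eigenvalues i0 with hμ0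
  -- B := A - μ0 • 1 is PSD
  have hUnit : (hH.eigenvectorUnitary : Matrix n n ℝ) * star (hH.eigenvectorUnitary : Matrix n n ℝ) = 1 :=
    Matrix.mem_unitaryGroup_iff.mp hH.eigenvectorUnitary.2
  have hdiag : PosSemidef (diagonal (fun i => hH.eigenvalues i - μ0)) :=
    PosSemidef.diagonal (fun i => sub_nonneg.mpr (hmin i (Finset.mem_univ i)))
  have hBpsd : PosSemidef (A - μ0 • 1) := by
    have h1 : (hH.eigenvectorUnitary : Matrix n n ℝ) * diagonal (fun i => hH.eigenvalues i - μ0) *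
        (hH.eigenvectorUnitary : Matrix n n ℝ)ᴴ = A - μ0 • 1 := by
      have h2 : diagonal (fun i => hH.eigenvalues i - μ0) =
          diagonal (RCLike.ofReal ∘ hH.eigenvalues) - μ0 • 1 := by
        rw [Matrix.smul_one_eq_diagonal, ← Matrix.diagonal_sub]
        congr 1
      rw [h2, Matrix.mul_sub, Matrix.sub_mul, ← Matrix.star_eq_conjTranspose,
        ← Unitary.conjStarAlgAut_apply (S := ℝ), ← hH.spectral_theorem]
      congr 1
      rw [Matrix.mul_smul, Matrix.smul_mul, Matrix.mul_one, hUnit]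
    rw [← h1]
    exact hdiag.mul_mul_conjTranspose_same _
  have hray : ∀ v : n → ℝ, μ0 * (v ⬝ᵥ v) ≤ v ⬝ᵥ (A *ᵥ v) := by
    intro v
    have := hBpsd.dotProduct_mulVec_nonneg v
    rw [star_trivial, Matrix.sub_mulVec, dotProduct_sub, Matrix.smul_mulVec,
      Matrix.one_mulVec, dotProduct_smul, smul_eq_mul, sub_nonneg] at this
    exact this
  -- every spectrum element is ≥ μ0
  have hlow : ∀ μ ∈ spectrum ℝ A, μ0 ≤ μ := by
    intro μ hμ
    rw [← Matrix.spectrum_toEuclideanLin (A := A) (𝕜 := ℝ)] at hμ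
    have hev : Module.End.HasEigenvalue (Matrix.toEuclideanLin A) μ :=
      Module.End.hasEigenvalue_iff_mem_spectrum.mpr hμ
    obtain ⟨v, hv, hv0⟩ := hev.exists_hasEigenvector
    have hv' : Matrix.toEuclideanLin A v = μ • v := Module.End.mem_eigenspace_iff.mp hv
    set w : n → ℝ := WithLp.equiv 2 (n → ℝ) v with hw
    have hAw : A *ᵥ w = μ • w := by
      have := congrArg (WithLp.equiv 2 (n → ℝ)) hv'
      simpa [Matrix.toLin'_apply, hw] using this
    have h1 : μ0 * (w ⬝ᵥ w) ≤ μ * (w ⬝ᵥ w) := by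
      have := hray w
      rwa [hAw, dotProduct_smul, smul_eq_mul] at this
    have hww : 0 < w ⬝ᵥ w := by
      have hwne : w ≠ 0 := by
        intro h
        apply hv0
        have : v = (WithLp.equiv 2 (n → ℝ)).symm w := rfl
        rw [this, h]
        rfl
      obtain ⟨i, hi⟩ := Function.ne_iff.mp hwne
      have : (0:ℝ) < ∑ j, w j * w j :=
        Finset.sum_pos' (fun j _ => mul_self_nonneg _)
          ⟨i, Finset.mem_univ i, mul_self_pos.mpr hi⟩
      exact this
    exact le_of_mul_le_mul_right (by simpa [mul_comm] using h1) hww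
  have hmem : μ0 ∈ spectrum ℝ A := hH.eigenvalues_mem_spectrum_real i0
  have hminEig : minEig A = μ0 := by
    apply le_antisymm
    · exact csInf_le ⟨μ0, fun μ hμ => hlow μ hμ⟩ hmem
    · exact le_csInf ⟨μ0, hmem⟩ hlow
  rw [hminEig]
  exact ⟨hA.eigenvalues_pos i0, hray⟩

lemma opNorm_inv_le {n : Type*} [Fintype n] [DecidableEq n] [Nonempty n]
    {A : Matrix n n ℝ} (hA : A.PosDef) :
    opNorm A⁻¹ ≤ (minEig A)⁻¹ := by
  obtain ⟨hμ, hray⟩ := minEig_rayleigh hA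
  have hdet : IsUnit A.det := (Matrix.isUnit_iff_isUnit_det A).mp hA.isUnit
  apply ContinuousLinearMap.opNorm_le_bound _ (inv_nonneg.mpr hμ.le)
  intro w
  set u : n → ℝ := WithLp.equiv 2 (n → ℝ) w with hu
  have happ : LinearMap.toContinuousLinearMap (Matrix.toEuclideanLin A⁻¹) w =
      (WithLp.equiv 2 (n → ℝ)).symm (A⁻¹ *ᵥ u) := rfl
  rw [happ]
  set v : n → ℝ := A⁻¹ *ᵥ u with hv
  have hAv : A *ᵥ v = u := by
    rw [hv, Matrix.mulVec_mulVec, Matrix.mul_nonsing_inv _ hdet, Matrix.one_mulVec]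
  have h1 : minEig A * enormE v ^ 2 ≤ enormE v * enormE u := by
    calc minEig A * enormE v ^ 2 = minEig A * (v ⬝ᵥ v) := by rw [dot_self_eq]
    _ ≤ v ⬝ᵥ (A *ᵥ v) := hray v
    _ ≤ enormE v * enormE (A *ᵥ v) := dot_le_enorm _ _
    _ = enormE v * enormE u := by rw [hAv]
  have h2 : minEig A * enormE v ≤ enormE u := by
    rcases eq_or_lt_of_le (enormE_nonneg v) with h | h
    · rw [← h]; simpa using enormE_nonneg u
    · have := (mul_le_mul_iff_left₀ h).mp (by nlinarith [h1] : minEig A * enormE v * enormE v ≤ enormE u * enormE v)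
      exact this
  have : enormE v ≤ (minEig A)⁻¹ * enormE u := (le_inv_mul_iff₀ hμ).mpr h2
  simpa [enormE, hu] using this

lemma enormE_psd_mulVec {n : Type*} [Fintype n] [DecidableEq n]
    {Xi : Matrix n n ℝ} (hXi : Xi.PosSemidef) (y p : n → ℝ)
    (h : y ⬝ᵥ (Xi *ᵥ y) = p ⬝ᵥ (Xi *ᵥ y)) :
    enormE (Xi *ᵥ y) ≤ opNorm Xi * enormE p := by
  set S := CFC.sqrt Xi with hS
  have hSpsd : S.PosSemidef := (CFC.sqrt_nonneg Xi).posSemidef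
  have hSS : S * S = Xi := CFC.sqrt_mul_sqrt_self Xi hXi.nonneg
  have hSsym : Sᵀ = S := by
    have := hSpsd.isHermitian
    rwa [Matrix.IsHermitian, Matrix.conjTranspose_eq_transpose_of_trivial] at this
  have symdot : ∀ a b : n → ℝ, a ⬝ᵥ (S *ᵥ b) = (S *ᵥ a) ⬝ᵥ b := by
    intro a b
    rw [Matrix.dotProduct_mulVec, ← Matrix.mulVec_transpose, hSsym]
  have hXiS : ∀ z : n → ℝ, Xi *ᵥ z = S *ᵥ (S *ᵥ z) := by
    intro z; rw [Matrix.mulVec_mulVec, hSS]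
  set u := S *ᵥ y with hudef
  have hnormS : opNorm S * opNorm S = opNorm Xi := by
    have := Matrix.l2_opNorm_conjTranspose_mul_self S
    rw [Matrix.conjTranspose_eq_transpose_of_trivial, hSsym, hSS] at this
    rw [opNorm_eq, opNorm_eq, ← this]
  have h1 : enormE u ^ 2 ≤ (opNorm S * enormE p) * enormE u := by
    calc enormE u ^ 2 = u ⬝ᵥ u := (dot_self_eq u).symm
    _ = y ⬝ᵥ (Xi *ᵥ y) := by rw [hudef, symdot, ← hXiS, dotProduct_comm]
    _ = p ⬝ᵥ (Xi *ᵥ y) := h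
    _ = (S *ᵥ p) ⬝ᵥ u := by rw [hXiS, ← symdot]
    _ ≤ enormE (S *ᵥ p) * enormE u := dot_le_enorm _ _
    _ ≤ (opNorm S * enormE p) * enormE u :=
        mul_le_mul_of_nonneg_right (enormE_mulVec_le _ _) (enormE_nonneg _)
  have h2 : enormE u ≤ opNorm S * enormE p := by
    rcases eq_or_lt_of_le (enormE_nonneg u) with hu | hu
    · rw [← hu]; exact mul_nonneg (opNorm_nonneg _) (enormE_nonneg _)
    · nlinarith [h1]
  calc enormE (Xi *ᵥ y) = enormE (S *ᵥ u) := by rw [hXiS]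
  _ ≤ opNorm S * enormE u := enormE_mulVec_le _ _
  _ ≤ opNorm S * (opNorm S * enormE p) :=
      mul_le_mul_of_nonneg_left h2 (opNorm_nonneg _)
  _ = opNorm Xi * enormE p := by rw [← mul_assoc, hnormS]

lemma enormE_eq_zero {n : Type*} [Fintype n] {v : n → ℝ} (h : enormE v = 0) : v = 0 := by
  have := norm_eq_zero.mp h
  have := congrArg (WithLp.equiv 2 (n → ℝ)) this
  simpa using this

lemma enormE_restr_le {l : ℕ} (J : Finset (Fin l)) (a : Fin l → ℝ) :
    enormE (restr a J) ≤ enormE a := by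
  rw [enormE_eq_sqrt, enormE_eq_sqrt]
  exact Real.sqrt_le_sqrt (sq_sum_restr_le J a)

lemma enormE_extJ {l : ℕ} (J : Finset (Fin l)) (v : {j // j ∈ J} → ℝ) :
    enormE (extJ J v) = enormE v := by
  have h : extJ J v ⬝ᵥ extJ J v = v ⬝ᵥ v := by
    rw [dot_restr J _ _ (fun i hi => extJ_not_mem J v hi), restr_extJ]
  rw [dot_self_eq, dot_self_eq] at h
  nlinarith [enormE_nonneg (extJ J v), enormE_nonneg v]

theorem stmt10 (l : ℕ) (hl : 1 ≤ l)
    (M Xi : Matrix (Fin l) (Fin l) ℝ)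
    (hM : M.PosSemidef) (hXi : Xi.PosSemidef)
    (J : Finset (Fin l))
    (hrange : LinearMap.range M.mulVecLin =
      Submodule.span ℝ ((fun i => (Pi.single i 1 : Fin l → ℝ)) '' (J : Set (Fin l))))
    (hnorm : opNorm Xi ≤ minEig (subJ M J) / 2)
    (hinv : IsUnit (M + Xi))
    (x : Fin l → ℝ) (hx : x ∈ LinearMap.range M.mulVecLin) :
    |x ⬝ᵥ ((M + Xi)⁻¹ *ᵥ x) - restr x J ⬝ᵥ ((subJ M J)⁻¹ *ᵥ restr x J)| ≤
      2 * (opNorm ((subJ M J)⁻¹)) ^ 2 * opNorm Xi * ∑ s, (x s) ^ 2 := by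
  classical
  rcases J.eq_empty_or_nonempty with hJe | hJne
  · exfalso
    subst hJe
    have hXi0 : Xi = 0 := by
      haveI hempty : IsEmpty {j : Fin l // j ∈ (∅ : Finset (Fin l))} :=
        ⟨fun j => absurd j.2 (Finset.notMem_empty _)⟩
      haveI : Subsingleton (Matrix {j : Fin l // j ∈ (∅ : Finset (Fin l))}
          {j : Fin l // j ∈ (∅ : Finset (Fin l))} ℝ) :=
        ⟨fun a b => by ext i j; exact absurd i.2 (Finset.notMem_empty _)⟩
      have hspec : spectrum ℝ (subJ M (∅ : Finset (Fin l))) = ∅ := by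
        ext μ
        simp only [Set.mem_empty_iff_false, iff_false, spectrum.mem_iff, not_not]
        exact isUnit_of_subsingleton _
      have hminEig : minEig (subJ M (∅ : Finset (Fin l))) = 0 := by
        rw [minEig, hspec, Real.sInf_empty]
      rw [hminEig] at hnorm
      have h0 : opNorm Xi = 0 := le_antisymm (by linarith) (opNorm_nonneg _)
      ext i j
      have hz : Xi *ᵥ Pi.single j 1 = 0 := by
        apply enormE_eq_zero
        have := enormE_mulVec_le Xi (Pi.single j 1)
        rw [h0, zero_mul] at this
        exact le_antisymm this (enormE_nonneg _)
      have := congrFun hz i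
      simpa [Matrix.mulVec_single] using this
    have hM0 : M = 0 := by
      ext i j
      have hz : M.mulVecLin (Pi.single j 1) ∈ LinearMap.range M.mulVecLin :=
        LinearMap.mem_range_self _ _
      rw [hrange] at hz
      simp only [Finset.coe_empty, Set.image_empty, Submodule.span_empty,
        Submodule.mem_bot] at hz
      have := congrFun hz i
      simpa [Matrix.mulVecLin_apply, Matrix.mulVec_single] using this
    rw [hM0, hXi0, add_zero] at hinv
    have h01 : (0 : Matrix (Fin l) (Fin l) ℝ) = 1 := isUnit_zero_iff.mp hinv
    have := congrFun (congrFun h01 ⟨0, hl⟩) ⟨0, hl⟩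
    simp [Matrix.one_apply_eq] at this
  -- Main case : J nonempty
  haveI : Nonempty {j : Fin l // j ∈ J} := ⟨⟨hJne.choose, hJne.choose_spec⟩⟩
  have hsupp : ∀ z ∈ LinearMap.range M.mulVecLin, ∀ i ∉ J, z i = 0 := by
    intro z hz
    rw [hrange] at hz
    exact (mem_span_singles J z).mp hz
  have hxsupp : ∀ i ∉ J, x i = 0 := hsupp x hx
  have hMT : Mᵀ = M := by
    have := hM.isHermitian
    rwa [Matrix.IsHermitian, Matrix.conjTranspose_eq_transpose_of_trivial] at this
  have hMrow : ∀ i, i ∉ J → ∀ j, M i j = 0 := by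
    intro i hi j
    have hcol : (fun k => M k j) ∈ LinearMap.range M.mulVecLin := by
      refine ⟨Pi.single j 1, ?_⟩
      funext k
      simp [Matrix.mulVecLin_apply, Matrix.mulVec_single]
    exact hsupp _ hcol i hi
  have hMcol : ∀ i j, j ∉ J → M i j = 0 := by
    intro i j hj
    have := congrFun (congrFun hMT j) i
    rw [Matrix.transpose_apply] at this
    rw [this]
    exact hMrow j hj i
  have hMz : ∀ z : Fin l → ℝ, M *ᵥ z = extJ J ((subJ M J) *ᵥ restr z J) := by
    intro z; funext i
    by_cases hi : i ∈ J
    · show (M *ᵥ z) i = extJ J ((subJ M J) *ᵥ restr z J) i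
      rw [show extJ J ((subJ M J) *ᵥ restr z J) i = ((subJ M J) *ᵥ restr z J) ⟨i, hi⟩ by
        simp [extJ, hi]]
      show (∑ k, M i k * z k) = ∑ k : {j // j ∈ J}, M i k.1 * z k.1
      rw [Finset.sum_coe_sort J (fun k => M i k * z k)]
      symm
      apply Finset.sum_subset (Finset.subset_univ J)
      intro k _ hk
      rw [hMcol i k hk, zero_mul]
    · rw [extJ_not_mem J _ hi]
      show (∑ k, M i k * z k) = 0
      exact Finset.sum_eq_zero fun k _ => by rw [hMrow i hi k, zero_mul]
  have hApsd : (subJ M J).PosSemidef := hM.submatrix _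
  have hApd : (subJ M J).PosDef := by
    refine posDef_iff_dotProduct_mulVec.mpr ⟨hApsd.isHermitian, fun v hv => ?_⟩
    have h0 : 0 ≤ v ⬝ᵥ ((subJ M J) *ᵥ v) := by simpa using hApsd.dotProduct_mulVec_nonneg v
    rw [star_trivial]
    rcases h0.lt_or_eq with h | h
    · exact h
    · exfalso
      have hAv : (subJ M J) *ᵥ v = 0 :=
        (hApsd.dotProduct_mulVec_zero_iff v).mp (by simpa using h.symm)
      have hMext : M *ᵥ extJ J v = 0 := by
        rw [hMz, restr_extJ, hAv]
        funext i
        by_cases hi : i ∈ J <;> simp [extJ, hi]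
      apply hv
      funext j
      have hej : (Pi.single (j : Fin l) 1 : Fin l → ℝ) ∈ LinearMap.range M.mulVecLin := by
        rw [hrange]
        exact Submodule.subset_span ⟨j.1, j.2, rfl⟩
      obtain ⟨w, hw⟩ := hej
      have hdot : extJ J v ⬝ᵥ (M *ᵥ w) = 0 := by
        rw [Matrix.dotProduct_mulVec, ← Matrix.mulVec_transpose, hMT, hMext]
        simp
      rw [Matrix.mulVecLin_apply] at hw
      rw [hw, dotProduct_single, mul_one] at hdot
      have : extJ J v (j : Fin l) = v j := by simp [extJ, j.2]
      rw [this] at hdot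
      exact hdot
  have hdetA : IsUnit (subJ M J).det := (Matrix.isUnit_iff_isUnit_det _).mp hApd.isUnit
  have hdetN : IsUnit (M + Xi).det := (Matrix.isUnit_iff_isUnit_det _).mp hinv
  set y := (M + Xi)⁻¹ *ᵥ x with hy
  have hNy : (M + Xi) *ᵥ y = x := by
    rw [hy, Matrix.mulVec_mulVec, Matrix.mul_nonsing_inv _ hdetN, Matrix.one_mulVec]
  have hXiy_supp : ∀ i ∉ J, (Xi *ᵥ y) i = 0 := by
    intro i hi
    have h1 : (M *ᵥ y) i + (Xi *ᵥ y) i = x i := by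
      have := congrFun hNy i
      rw [Matrix.add_mulVec] at this
      simpa using this
    have h2 : (M *ᵥ y) i = 0 := by rw [hMz y]; exact extJ_not_mem J _ hi
    rw [h2, zero_add, hxsupp i hi] at h1
    exact h1
  have hEq : restr x J = (subJ M J) *ᵥ restr y J + restr (Xi *ᵥ y) J := by
    have hxe : x = M *ᵥ y + Xi *ᵥ y := by rw [← Matrix.add_mulVec, hNy]
    calc restr x J = restr (M *ᵥ y) J + restr (Xi *ᵥ y) J := by rw [← restr_add, ← hxe]
    _ = (subJ M J) *ᵥ restr y J + restr (Xi *ᵥ y) J := by rw [hMz y, restr_extJ]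
  have hry : restr y J = (subJ M J)⁻¹ *ᵥ restr x J - (subJ M J)⁻¹ *ᵥ restr (Xi *ᵥ y) J := by
    have h1 : (subJ M J)⁻¹ *ᵥ restr x J = restr y J + (subJ M J)⁻¹ *ᵥ restr (Xi *ᵥ y) J := by
      rw [hEq, Matrix.mulVec_add, Matrix.mulVec_mulVec, Matrix.nonsing_inv_mul _ hdetA,
        Matrix.one_mulVec]
    rw [h1]
    abel
  have hAinvT : ((subJ M J)⁻¹)ᵀ = (subJ M J)⁻¹ := by
    rw [Matrix.transpose_nonsing_inv]
    congr 1
    have := hApsd.isHermitian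
    rwa [Matrix.IsHermitian, Matrix.conjTranspose_eq_transpose_of_trivial] at this
  have symdotAinv : ∀ a b : {j // j ∈ J} → ℝ,
      a ⬝ᵥ ((subJ M J)⁻¹ *ᵥ b) = ((subJ M J)⁻¹ *ᵥ a) ⬝ᵥ b := by
    intro a b
    rw [Matrix.dotProduct_mulVec, ← Matrix.mulVec_transpose, hAinvT]
  have hdiff : x ⬝ᵥ y - restr x J ⬝ᵥ ((subJ M J)⁻¹ *ᵥ restr x J)
      = -(((subJ M J)⁻¹ *ᵥ restr x J) ⬝ᵥ restr (Xi *ᵥ y) J) := by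
    have h1 : x ⬝ᵥ y = restr x J ⬝ᵥ restr y J := dot_restr J x y hxsupp
    rw [h1, hry, dotProduct_sub, symdotAinv (restr x J) (restr (Xi *ᵥ y) J)]
    ring
  -- quantitative bounds
  set K := opNorm ((subJ M J)⁻¹) with hK
  set ξ := opNorm Xi with hξ
  set X := enormE (restr x J) with hXdef
  set Y := enormE (restr y J) with hYdef
  have hμpos : 0 < minEig (subJ M J) := (minEig_rayleigh hApd).1
  have hKle : K ≤ (minEig (subJ M J))⁻¹ := opNorm_inv_le hApd
  have hKξ : K * ξ ≤ 1 / 2 := by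
    have h1 : K * ξ ≤ (minEig (subJ M J))⁻¹ * (minEig (subJ M J) / 2) := by
      apply mul_le_mul hKle hnorm (opNorm_nonneg _) (inv_nonneg.mpr hμpos.le)
    have h2 : (minEig (subJ M J))⁻¹ * (minEig (subJ M J) / 2) = 1 / 2 := by
      field_simp
    linarith [h1, h2.le, h2.ge]
  have hXiyJ : y ⬝ᵥ (Xi *ᵥ y) = extJ J (restr y J) ⬝ᵥ (Xi *ᵥ y) := by
    apply Finset.sum_congr rfl
    intro i _
    by_cases hi : i ∈ J
    · simp [extJ, restr, hi]
    · rw [hXiy_supp i hi, mul_zero, mul_zero]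
  have hEXiy : enormE (Xi *ᵥ y) ≤ ξ * Y := by
    have := enormE_psd_mulVec hXi y (extJ J (restr y J)) hXiyJ
    rwa [enormE_extJ] at this
  have hRXiy : enormE (restr (Xi *ᵥ y) J) ≤ ξ * Y :=
    (enormE_restr_le J _).trans hEXiy
  have hY2 : Y ≤ 2 * K * X := by
    have h1 : Y ≤ K * X + K * (ξ * Y) := by
      calc Y = enormE ((subJ M J)⁻¹ *ᵥ restr x J - (subJ M J)⁻¹ *ᵥ restr (Xi *ᵥ y) J) := by
            rw [hYdef, hry]
      _ ≤ enormE ((subJ M J)⁻¹ *ᵥ restr x J) + enormE ((subJ M J)⁻¹ *ᵥ restr (Xi *ᵥ y) J) :=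
            enormE_sub_le _ _
      _ ≤ K * X + K * enormE (restr (Xi *ᵥ y) J) := by
            apply add_le_add (enormE_mulVec_le _ _)
            exact enormE_mulVec_le _ _
      _ ≤ K * X + K * (ξ * Y) := by
            apply add_le_add le_rfl
            exact mul_le_mul_of_nonneg_left hRXiy (opNorm_nonneg _)
    have hYnn : 0 ≤ Y := enormE_nonneg _
    nlinarith [mul_le_mul_of_nonneg_right hKξ hYnn]
  have hX2 : X ^ 2 = ∑ s, (x s) ^ 2 := by
    have h1 : x ⬝ᵥ x = restr x J ⬝ᵥ restr x J := dot_restr J x x hxsupp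
    rw [dot_self_eq, dot_self_eq] at h1
    rw [← h1, ← dot_self_eq]
    exact Finset.sum_congr rfl fun s _ => (pow_two (x s)).symm
  have hKnn : 0 ≤ K := opNorm_nonneg _
  have hXnn : 0 ≤ X := enormE_nonneg _
  have hξnn : 0 ≤ ξ := opNorm_nonneg _
  calc |x ⬝ᵥ y - restr x J ⬝ᵥ ((subJ M J)⁻¹ *ᵥ restr x J)|
      = |((subJ M J)⁻¹ *ᵥ restr x J) ⬝ᵥ restr (Xi *ᵥ y) J| := by rw [hdiff, abs_neg]
    _ ≤ enormE ((subJ M J)⁻¹ *ᵥ restr x J) * enormE (restr (Xi *ᵥ y) J) := abs_dot_le_enorm _ _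
    _ ≤ (K * X) * (ξ * Y) :=
        mul_le_mul (enormE_mulVec_le _ _) hRXiy (enormE_nonneg _) (mul_nonneg hKnn hXnn)
    _ ≤ (K * X) * (ξ * (2 * K * X)) := by
        apply mul_le_mul_of_nonneg_left (mul_le_mul_of_nonneg_left hY2 hξnn)
          (mul_nonneg hKnn hXnn)
    _ = 2 * K ^ 2 * ξ * X ^ 2 := by ring
    _ = 2 * K ^ 2 * ξ * ∑ s, (x s) ^ 2 := by rw [hX2]
end

section
/- Let M and Ξ be symmetric positive semidefinite ℓ×ℓ real matrices, let J ⊆ {1,…,ℓ} be such that the range of M equals the span of {e_j : j ∈ J}, and suppose that ‖Ξ‖_op ≤ λ_min(M_{(J)})/2, that Ξ ≠ 0, and that M + Ξ is invertible. Then for every x ∈ ℝ^ℓ not in the range of M, one has x^⊤ (M+Ξ)^{-1} x ≥ ‖x_{(J^c)}‖₂² / (2‖Ξ‖_op), where J^c = {1,…,ℓ} \ J. -/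
open Matrix

set_option synthInstance.maxHeartbeats 1000000 in
lemma opNorm_pos {n : Type*} [Fintype n] [DecidableEq n] {A : Matrix n n ℝ} (hA : A ≠ 0) :
    0 < opNorm A := by
  have hne : LinearMap.toContinuousLinearMap (Matrix.toEuclideanLin A) ≠ 0 := by
    intro h
    apply hA
    have h2 : Matrix.toEuclideanLin A = Matrix.toEuclideanLin (0 : Matrix n n ℝ) := by
      apply LinearMap.toContinuousLinearMap.injective
      simpa using h
    exact Matrix.toEuclideanLin.injective h2
  refine lt_of_le_of_ne (norm_nonneg _) fun h => hne ?_
  exact norm_eq_zero.mp h.symm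

lemma norm_mulVec_le {n : Type*} [Fintype n] [DecidableEq n] (A : Matrix n n ℝ) (v : n → ℝ) :
    ‖(WithLp.equiv 2 (n → ℝ)).symm (A *ᵥ v)‖ ≤ opNorm A * ‖(WithLp.equiv 2 (n → ℝ)).symm v‖ := by
  have := (LinearMap.toContinuousLinearMap (Matrix.toEuclideanLin A)).le_opNorm
    ((WithLp.equiv 2 (n → ℝ)).symm v)
  exact this

lemma dot_eq_inner {n : Type*} [Fintype n] (u v : n → ℝ) :
    u ⬝ᵥ v = inner ℝ ((WithLp.equiv 2 (n → ℝ)).symm u) ((WithLp.equiv 2 (n → ℝ)).symm v) := by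
  simp [PiLp.inner_apply, dotProduct, RCLike.inner_apply, mul_comm]

theorem stmt11 (l : ℕ) (hl : 1 ≤ l)
    (M Xi : Matrix (Fin l) (Fin l) ℝ)
    (hM : M.PosSemidef) (hXi : Xi.PosSemidef)
    (J : Finset (Fin l))
    (hrange : LinearMap.range M.mulVecLin =
      Submodule.span ℝ ((fun i => (Pi.single i 1 : Fin l → ℝ)) '' (J : Set (Fin l))))
    (hnorm : opNorm Xi ≤ minEig (subJ M J) / 2)
    (hXi0 : Xi ≠ 0) (hinv : IsUnit (M + Xi))
    (x : Fin l → ℝ) (hx : x ∉ LinearMap.range M.mulVecLin) :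
    (∑ s ∈ Jᶜ, (x s) ^ 2) / (2 * opNorm Xi) ≤ x ⬝ᵥ ((M + Xi)⁻¹ *ᵥ x) := by
  set ε := opNorm Xi with hε
  have hεpos : 0 < ε := opNorm_pos hXi0
  set y := (M + Xi)⁻¹ *ᵥ x with hy
  set z := Xi *ᵥ y with hz
  have hdet : IsUnit (M + Xi).det := (Matrix.isUnit_iff_isUnit_det _).1 hinv
  have hxy : (M + Xi) *ᵥ y = x := by
    rw [hy, Matrix.mulVec_mulVec, Matrix.mul_nonsing_inv _ hdet, Matrix.one_mulVec]
  -- x ⬝ y = y⬝My + y⬝z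
  have hsplit : x ⬝ᵥ y = y ⬝ᵥ (M *ᵥ y) + y ⬝ᵥ z := by
    rw [← hxy, dotProduct_comm, Matrix.add_mulVec, dotProduct_add]
  have hm : 0 ≤ y ⬝ᵥ (M *ᵥ y) := by simpa using hM.dotProduct_mulVec_nonneg y
  have ha : 0 ≤ y ⬝ᵥ z := by simpa [hz] using hXi.dotProduct_mulVec_nonneg y
  -- coords outside J vanish for M *ᵥ y
  have hMy0 : ∀ s ∈ Jᶜ, (M *ᵥ y) s = 0 := by
    intro s hs
    have hsJ : s ∉ J := Finset.mem_compl.1 hs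
    have hmem : M *ᵥ y ∈ LinearMap.range M.mulVecLin := ⟨y, rfl⟩
    rw [hrange] at hmem
    refine Submodule.span_induction ?_ rfl ?_ ?_ hmem
    · rintro v ⟨i, hi, rfl⟩
      have : s ≠ i := fun h => hsJ (h ▸ hi)
      simp [Pi.single_apply, this]
    · intro u v _ _ hu hv; simp [hu, hv]
    · intro c v _ hv; simp [hv]
  have hxz : ∀ s ∈ Jᶜ, x s = z s := by
    intro s hs
    have := congrFun hxy s
    rw [Matrix.add_mulVec] at this
    have h0 := hMy0 s hs
    simp only [Pi.add_apply] at this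
    rw [h0, zero_add] at this
    rw [← this]
  -- S ≤ Z
  have hS : (∑ s ∈ Jᶜ, (x s) ^ 2) ≤ z ⬝ᵥ z := by
    have h1 : (∑ s ∈ Jᶜ, (x s) ^ 2) = ∑ s ∈ Jᶜ, (z s) ^ 2 :=
      Finset.sum_congr rfl fun s hs => by rw [hxz s hs]
    rw [h1, dotProduct, ← Finset.sum_congr rfl (fun s _ => (sq (z s)).symm)]
    exact Finset.sum_le_sum_of_subset_of_nonneg (Finset.subset_univ _)
      (fun s _ _ => mul_self_nonneg _)
  -- Cauchy-Schwarz-ish: (z⬝z)^2 ≤ (z ⬝ Xi z) * (y ⬝ z)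
  have hsym : ∀ u v : Fin l → ℝ, u ⬝ᵥ (Xi *ᵥ v) = (Xi *ᵥ u) ⬝ᵥ v := by
    intro u v
    rw [Matrix.dotProduct_mulVec, ← Matrix.mulVec_transpose]
    congr 1
    have := hXi.1
    rw [Matrix.IsHermitian] at this
    rw [show Xiᵀ = Xi from by simpa [Matrix.conjTranspose_eq_transpose_of_trivial] using this]
  have hquad : ∀ t : ℝ, 0 ≤ (z ⬝ᵥ (Xi *ᵥ z)) * (t * t) + (2 * (z ⬝ᵥ z)) * t + y ⬝ᵥ z := by
    intro t
    have h := hXi.dotProduct_mulVec_nonneg (y + t • z)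
    simp only [star_trivial] at h
    have hexp : (y + t • z) ⬝ᵥ (Xi *ᵥ (y + t • z)) =
        (z ⬝ᵥ (Xi *ᵥ z)) * (t * t) + (2 * (z ⬝ᵥ z)) * t + y ⬝ᵥ z := by
      simp only [Matrix.mulVec_add, Matrix.mulVec_smul, add_dotProduct,
        dotProduct_add, smul_dotProduct, dotProduct_smul, smul_eq_mul]
      have h1 : y ⬝ᵥ (Xi *ᵥ z) = z ⬝ᵥ z := by rw [hsym, ← hz, dotProduct_comm]
      have h2 : z ⬝ᵥ (Xi *ᵥ y) = z ⬝ᵥ z := by rw [← hz]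
      rw [h1, h2]; ring
    rw [← hexp]; exact h
  have hdisc := discrim_le_zero hquad
  rw [discrim] at hdisc
  have hCS : (z ⬝ᵥ z) ^ 2 ≤ (z ⬝ᵥ (Xi *ᵥ z)) * (y ⬝ᵥ z) := by nlinarith [hdisc]
  -- z ⬝ Xi z ≤ ε * (z ⬝ z)
  have hc : z ⬝ᵥ (Xi *ᵥ z) ≤ ε * (z ⬝ᵥ z) := by
    have h1 := norm_mulVec_le Xi z
    have h2 : z ⬝ᵥ (Xi *ᵥ z) ≤ ‖(WithLp.equiv 2 (Fin l → ℝ)).symm z‖ *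
        ‖(WithLp.equiv 2 (Fin l → ℝ)).symm (Xi *ᵥ z)‖ := by
      rw [dot_eq_inner]; exact real_inner_le_norm _ _
    have h3 : z ⬝ᵥ z = ‖(WithLp.equiv 2 (Fin l → ℝ)).symm z‖ ^ 2 := by
      rw [dot_eq_inner, ← real_inner_self_eq_norm_sq]
    calc z ⬝ᵥ (Xi *ᵥ z) ≤ ‖(WithLp.equiv 2 (Fin l → ℝ)).symm z‖ *
          ‖(WithLp.equiv 2 (Fin l → ℝ)).symm (Xi *ᵥ z)‖ := h2
      _ ≤ ‖(WithLp.equiv 2 (Fin l → ℝ)).symm z‖ * (ε * ‖(WithLp.equiv 2 (Fin l → ℝ)).symm z‖) :=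
          mul_le_mul_of_nonneg_left h1 (norm_nonneg _)
      _ = ε * (z ⬝ᵥ z) := by rw [h3]; ring
  -- Z ≤ ε * a  (where a = y⬝z)
  have hZnn : 0 ≤ z ⬝ᵥ z := by
    rw [dotProduct]
    exact Finset.sum_nonneg fun i _ => mul_self_nonneg _
  have hZa : z ⬝ᵥ z ≤ ε * (y ⬝ᵥ z) := by
    rcases eq_or_lt_of_le hZnn with h0 | hpos
    · rw [← h0]; positivity
    · have : (z ⬝ᵥ z) ^ 2 ≤ ε * (y ⬝ᵥ z) * (z ⬝ᵥ z) := by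
        calc (z ⬝ᵥ z) ^ 2 ≤ (z ⬝ᵥ (Xi *ᵥ z)) * (y ⬝ᵥ z) := hCS
          _ ≤ (ε * (z ⬝ᵥ z)) * (y ⬝ᵥ z) := mul_le_mul_of_nonneg_right hc ha
          _ = ε * (y ⬝ᵥ z) * (z ⬝ᵥ z) := by ring
      nlinarith
  -- conclude
  rw [div_le_iff₀ (by positivity)]
  have hSεa : (∑ s ∈ Jᶜ, (x s) ^ 2) ≤ ε * (y ⬝ᵥ z) := le_trans hS hZa
  nlinarith [hSεa, hsplit, hm, ha, hεpos]
end

section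
/- Let (Ω, 𝓕, ℙ) be a probability space, let (Y_j)_{j≥1} be i.i.d. real random variables with E[Y_1] = 0 and E[Y_1²] < ∞, and let ν > 0 be a real number. For each t ∈ ℕ, let n̂_t : Ω → ℕ be a random variable with n̂_t ≥ 1 almost surely, and suppose n̂_t/t → ν in probability as t → ∞. Setting S_m := Σ_{j=1}^m Y_j, the random variables S_{n̂_t}/√(n̂_t) − S_{⌊tν⌋}/√(⌊tν⌋) converge to 0 in probability as t → ∞. -/
open MeasureTheory ProbabilityTheory Filter
open scoped ENNReal NNReal

lemma iIndepFun_precomp {Ω : Type*} [MeasurableSpace Ω] {P : Measure Ω}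
    {Y : ℕ → Ω → ℝ}
    (h : iIndepFun Y P)
    {g : ℕ → ℕ} (hg : Function.Injective g) :
    iIndepFun (fun i => Y (g i)) P := by
  rw [iIndepFun_iff_measure_inter_preimage_eq_mul] at h ⊢
  intro S sets hsets
  classical
  set sets' : ℕ → Set ℝ := fun j =>
    if hj : ∃ i ∈ S, g i = j then sets hj.choose else Set.univ with hsets'def
  have key : ∀ i ∈ S, sets' (g i) = sets i := by
    intro i hi
    have hj : ∃ i' ∈ S, g i' = g i := ⟨i, hi, rfl⟩
    simp only [sets', dif_pos hj]
    obtain ⟨hmem, heq⟩ := hj.choose_spec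
    rw [hg heq]
  have h1 := h (S.image g) (sets := sets') ?_
  · have h2 : (⋂ j ∈ S.image g, Y j ⁻¹' sets' j)
        = ⋂ i ∈ S, (fun ω => Y (g i) ω) ⁻¹' sets i := by
      ext ω
      simp only [Set.mem_iInter, Finset.mem_image]
      constructor
      · intro hω i hi
        have := hω (g i) ⟨i, hi, rfl⟩
        rwa [key i hi] at this
      · rintro hω j ⟨i, hi, rfl⟩
        rw [key i hi]; exact hω i hi
    rw [h2, Finset.prod_image (fun a ha b hb hab => hg hab)] at h1
    rw [h1]
    refine Finset.prod_congr rfl fun i hi => ?_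
    rw [key i hi]
  · rintro j hj
    rw [Finset.mem_image] at hj
    obtain ⟨i, hi, rfl⟩ := hj
    rw [key i hi]
    exact hsets i hi

lemma kolmogorov_ineq {Ω : Type*} [MeasurableSpace Ω] (P : Measure Ω) [IsProbabilityMeasure P]
    (X : ℕ → Ω → ℝ) (hm : ∀ j, Measurable (X j))
    (hi : iIndepFun X P)
    (hmean : ∀ j, ∫ ω, X j ω ∂P = 0) (hL2 : ∀ j, MemLp (X j) 2 P)
    (n : ℕ) {c : ℝ} (hc : 0 < c) :
    P {ω | ∃ m ≤ n, c ≤ |∑ j ∈ Finset.range (m + 1), X j ω|}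
      ≤ ENNReal.ofReal ((∑ j ∈ Finset.range (n + 1), ∫ ω, X j ω ^ 2 ∂P) / c ^ 2) := by
  classical
  have hsm : ∀ j, StronglyMeasurable (X j) := fun j => (hm j).stronglyMeasurable
  set ℱ := Filtration.natural X hsm with hℱ
  set M : ℕ → Ω → ℝ := fun j ω => ∑ i ∈ Finset.range (j + 1), X i ω with hM
  have hML2 : ∀ j, MemLp (M j) 2 P := by
    intro j
    have h0 : MemLp (∑ i ∈ Finset.range (j + 1), X i) 2 P :=
      memLp_finsetSum' _ fun i _ => hL2 i
    have he : M j = ∑ i ∈ Finset.range (j + 1), X i := by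
      funext ω; simp [hM, Finset.sum_apply]
    rw [he]; exact h0
  have hMadp : StronglyAdapted ℱ M := by
    intro j
    refine Finset.stronglyMeasurable_fun_sum _ fun i hi' => ?_
    have h1 : StronglyMeasurable[ℱ i] (X i) := Filtration.stronglyAdapted_natural hsm i
    exact h1.mono (ℱ.mono (by simpa [Nat.lt_succ_iff] using hi'))
  set Q : ℕ → Ω → ℝ := fun j ω => M j ω ^ 2 with hQ
  have hQadp : StronglyAdapted ℱ Q := by
    intro j
    have := (hMadp j).mul (hMadp j)
    simpa [hQ, sq, Pi.mul_def] using this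
  have hQint : ∀ j, Integrable (Q j) P := fun j => (hML2 j).integrable_sq
  have hmul_int : ∀ i, Integrable (fun ω => M i ω * X (i + 1) ω) P := by
    intro i
    have := ((hL2 (i + 1)).smul (hML2 i) (r := 1)).integrable
      le_rfl
    refine this.congr (Eventually.of_forall fun ω => ?_)
    simp [Pi.smul_apply', smul_eq_mul]
  have hQsub : Submartingale Q ℱ P := by
    refine submartingale_of_condExp_sub_nonneg_nat hQadp hQint fun i => ?_
    have hptw : (Q (i + 1) - Q i)
        = (fun ω => (2 * M i ω) * X (i + 1) ω) + (fun ω => X (i + 1) ω ^ 2) := by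
      funext ω
      simp only [Pi.sub_apply, Pi.add_apply, hQ, hM, Finset.sum_range_succ]
      ring
    have hint1 : Integrable (fun ω => (2 * M i ω) * X (i + 1) ω) P := by
      have := (hmul_int i).const_mul 2
      refine this.congr (Eventually.of_forall fun ω => ?_)
      ring
    have hint2 : Integrable (fun ω => X (i + 1) ω ^ 2) P := (hL2 (i + 1)).integrable_sq
    have hadd := condExp_add (μ := P) (m := ℱ i) hint1 hint2
    have hmulpull : P[(fun ω => (2 * M i ω) * X (i + 1) ω) | ℱ i]
        =ᵐ[P] (fun ω => 2 * M i ω) * P[X (i + 1) | ℱ i] := by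
      have hf : StronglyMeasurable[ℱ i] (fun ω => 2 * M i ω) :=
        (stronglyMeasurable_const.mul (hMadp i))
      have := condExp_mul_of_stronglyMeasurable_left hf
        (by exact hint1)
        ((hL2 (i + 1)).integrable one_le_two)
      exact this
    have hcemean : P[X (i + 1) | ℱ i] =ᵐ[P] fun _ => (0 : ℝ) := by
      have := hi.condExp_natural_ae_eq_of_lt hsm (Nat.lt_succ_self i)
      simpa [hmean (i + 1)] using this
    have hnn2 : 0 ≤ᵐ[P] P[(fun ω => X (i + 1) ω ^ 2) | ℱ i] :=
      condExp_nonneg (Eventually.of_forall fun ω => sq_nonneg _)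
    rw [hptw]
    filter_upwards [hadd, hmulpull, hcemean, hnn2] with ω h1 h2 h3 h4
    simp only [Pi.zero_apply] at *
    rw [h1]
    simp only [Pi.add_apply]
    rw [h2]
    simp only [Pi.mul_apply, h3, mul_zero]
    simpa using h4
  -- Doob's maximal inequality
  set εn : ℝ≥0 := (c ^ 2).toNNReal with hεn
  have hεnc : (εn : ℝ) = c ^ 2 := Real.coe_toNNReal _ (sq_nonneg c)
  have hdoob := maximal_ineq hQsub (fun j ω => sq_nonneg _) (ε := εn) n
  set B := {ω | (εn : ℝ) ≤ (Finset.range (n + 1)).sup' Finset.nonempty_range_add_one fun k => Q k ω}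
    with hB
  have hincl : {ω | ∃ m ≤ n, c ≤ |∑ j ∈ Finset.range (m + 1), X j ω|} ⊆ B := by
    intro ω hω
    obtain ⟨m, hmn, hcm⟩ := hω
    have h1 : c ^ 2 ≤ Q m ω := by
      have := pow_le_pow_left₀ hc.le hcm 2
      simpa [hQ, sq_abs] using this
    rw [hB, Set.mem_setOf_eq, hεnc]
    exact le_trans h1 (Finset.le_sup' (fun k => Q k ω) (Finset.mem_range.2 (Nat.lt_succ_of_le hmn)))
  have hsetint : ∫ ω in B, Q n ω ∂P ≤ ∫ ω, Q n ω ∂P :=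
    setIntegral_le_integral (hQint n) (Eventually.of_forall fun ω => sq_nonneg _)
  -- compute ∫ Q n
  have hMmean : ∫ ω, M n ω ∂P = 0 := by
    rw [hM]
    rw [integral_finset_sum _ fun j _ => (hL2 j).integrable one_le_two]
    simp [hmean]
  have hvar : ∫ ω, Q n ω ∂P = ∑ j ∈ Finset.range (n + 1), ∫ ω, X j ω ^ 2 ∂P := by
    have hv1 : variance (M n) P = ∫ ω, Q n ω ∂P - (∫ ω, M n ω ∂P) ^ 2 := variance_eq_sub (hML2 n)
    have hv2 : variance (M n) P = ∑ j ∈ Finset.range (n + 1), variance (X j) P := by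
      have : variance (∑ i ∈ Finset.range (n + 1), X i) P
          = ∑ j ∈ Finset.range (n + 1), variance (X j) P :=
        IndepFun.variance_sum (fun i _ => hL2 i)
          (fun i _ j _ hij => hi.indepFun hij)
      convert this using 2
      funext ω
      simp [hM, Finset.sum_apply]
    have hv3 : ∀ j, variance (X j) P = ∫ ω, X j ω ^ 2 ∂P := by
      intro j
      rw [variance_eq_sub (hL2 j)]
      simp [hmean j]
    rw [hMmean] at hv1
    simp only [ne_eq, OfNat.ofNat_ne_zero, not_false_eq_true, zero_pow, sub_zero] at hv1
    rw [← hv1, hv2]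
    exact Finset.sum_congr rfl fun j _ => hv3 j
  -- combine
  have hkey : ENNReal.ofReal (c ^ 2) * P {ω | ∃ m ≤ n, c ≤ |∑ j ∈ Finset.range (m + 1), X j ω|}
      ≤ ENNReal.ofReal (∑ j ∈ Finset.range (n + 1), ∫ ω, X j ω ^ 2 ∂P) := by
    have h1 : ENNReal.ofReal (c ^ 2) * P {ω | ∃ m ≤ n, c ≤ |∑ j ∈ Finset.range (m+1), X j ω|}
        ≤ ENNReal.ofReal (c ^ 2) * P B :=
      mul_le_mul_right (measure_mono hincl) _
    refine h1.trans ?_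
    have h2 : ENNReal.ofReal (c ^ 2) * P B = (εn : ℝ≥0∞) * P B := by
      rw [hεn, ENNReal.ofReal]
    rw [h2]
    refine hdoob.trans ?_
    rw [← hvar]
    exact ENNReal.ofReal_le_ofReal hsetint
  rw [ENNReal.ofReal_div_of_pos (by positivity)]
  rw [ENNReal.le_div_iff_mul_le (by left; simp [ENNReal.ofReal_eq_zero]; positivity)
    (by left; exact ENNReal.ofReal_ne_top)]
  rw [mul_comm]
  exact hkey

section
variable {Ω : Type*} [MeasurableSpace Ω] (P : Measure Ω) [IsProbabilityMeasure P]
  {Y : ℕ → Ω → ℝ} {σ2 : ℝ}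

lemma sum_reflect (f : ℕ → ℝ) (k r : ℕ) (hr : r ≤ k) :
    ∑ j ∈ Finset.range r, f (k - 1 - j) = ∑ i ∈ Finset.Ico (k - r) k, f i := by
  refine Finset.sum_nbij' (fun j => k - 1 - j) (fun i => k - 1 - i) ?_ ?_ ?_ ?_ ?_
  · intro a ha
    simp only [Finset.mem_range] at ha
    simp only [Finset.mem_Ico]
    omega
  · intro a ha
    simp only [Finset.mem_Ico] at ha
    simp only [Finset.mem_range]
    omega
  · intro a ha
    simp only [Finset.mem_range] at ha
    show k - 1 - (k - 1 - a) = a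
    omega
  · intro a ha
    simp only [Finset.mem_Ico] at ha
    show k - 1 - (k - 1 - a) = a
    omega
  · intro a ha
    rfl

lemma window_fwd
    (hmeasY : ∀ j, Measurable (Y j))
    (hindep : iIndepFun Y P)
    (hYmean : ∀ j, ∫ ω, Y j ω ∂P = 0) (hYL2 : ∀ j, MemLp (Y j) 2 P)
    (hsq : ∀ j, ∫ ω, Y j ω ^ 2 ∂P = σ2)
    (k d : ℕ) {c : ℝ} (hc : 0 < c) :
    P {ω | ∃ m, k < m ∧ m ≤ k + d + 1 ∧
        c ≤ |∑ j ∈ Finset.range m, Y j ω - ∑ j ∈ Finset.range k, Y j ω|}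
      ≤ ENNReal.ofReal (((d : ℝ) + 1) * σ2 / c ^ 2) := by
  have hinj : Function.Injective (fun j => k + j) := fun a b h => by simpa using h
  have hkol := kolmogorov_ineq P (fun j => Y (k + j)) (fun j => hmeasY _)
    (iIndepFun_precomp hindep hinj) (fun j => hYmean _) (fun j => hYL2 _) d hc
  have hsub : {ω | ∃ m, k < m ∧ m ≤ k + d + 1 ∧
        c ≤ |∑ j ∈ Finset.range m, Y j ω - ∑ j ∈ Finset.range k, Y j ω|}
      ⊆ {ω | ∃ m ≤ d, c ≤ |∑ j ∈ Finset.range (m + 1), (fun j => Y (k + j)) j ω|} := by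
    intro ω hω
    obtain ⟨m, hkm, hmd, hcm⟩ := hω
    refine ⟨m - k - 1, by omega, ?_⟩
    have hsum : ∑ j ∈ Finset.range (m - k - 1 + 1), Y (k + j) ω
        = ∑ j ∈ Finset.range m, Y j ω - ∑ j ∈ Finset.range k, Y j ω := by
      have h1 : ∑ j ∈ Finset.Ico k m, Y j ω
          = ∑ j ∈ Finset.range m, Y j ω - ∑ j ∈ Finset.range k, Y j ω :=
        Finset.sum_Ico_eq_sub _ (by omega)
      have h4 : m - k - 1 + 1 = m - k := by omega
      rw [h4, ← h1, Finset.sum_Ico_eq_sum_range]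
    simpa [hsum] using hcm
  refine (measure_mono hsub).trans (hkol.trans ?_)
  have : ∑ j ∈ Finset.range (d + 1), ∫ ω, (fun j => Y (k + j)) j ω ^ 2 ∂P
      = ((d : ℝ) + 1) * σ2 := by
    simp only [hsq]
    rw [Finset.sum_const, Finset.card_range]
    push_cast
    ring
  rw [this]

lemma window_bwd
    (hmeasY : ∀ j, Measurable (Y j))
    (hindep : iIndepFun Y P)
    (hYmean : ∀ j, ∫ ω, Y j ω ∂P = 0) (hYL2 : ∀ j, MemLp (Y j) 2 P)
    (hsq : ∀ j, ∫ ω, Y j ω ^ 2 ∂P = σ2)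
    (k d : ℕ) (hdk : d + 1 ≤ k) {c : ℝ} (hc : 0 < c) :
    P {ω | ∃ m, k ≤ m + d + 1 ∧ m < k ∧
        c ≤ |∑ j ∈ Finset.range k, Y j ω - ∑ j ∈ Finset.range m, Y j ω|}
      ≤ ENNReal.ofReal (((d : ℝ) + 1) * σ2 / c ^ 2) := by
  set g : ℕ → ℕ := fun j => if j < k then k - 1 - j else k + j with hg
  have hinj : Function.Injective g := by
    intro a b hab
    simp only [hg] at hab
    split_ifs at hab <;> omega
  have hkol := kolmogorov_ineq P (fun j => Y (g j)) (fun j => hmeasY _)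
    (iIndepFun_precomp hindep hinj) (fun j => hYmean _) (fun j => hYL2 _) d hc
  have hsub : {ω | ∃ m, k ≤ m + d + 1 ∧ m < k ∧
        c ≤ |∑ j ∈ Finset.range k, Y j ω - ∑ j ∈ Finset.range m, Y j ω|}
      ⊆ {ω | ∃ m ≤ d, c ≤ |∑ j ∈ Finset.range (m + 1), (fun j => Y (g j)) j ω|} := by
    intro ω hω
    obtain ⟨m, hkm, hmk, hcm⟩ := hω
    refine ⟨k - m - 1, by omega, ?_⟩
    have hsum : ∑ j ∈ Finset.range (k - m - 1 + 1), Y (g j) ω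
        = ∑ j ∈ Finset.range k, Y j ω - ∑ j ∈ Finset.range m, Y j ω := by
      have h1 : ∑ j ∈ Finset.Ico m k, Y j ω
          = ∑ j ∈ Finset.range k, Y j ω - ∑ j ∈ Finset.range m, Y j ω :=
        Finset.sum_Ico_eq_sub _ (by omega)
      have h2 : ∀ j ∈ Finset.range (k - m - 1 + 1), Y (g j) ω = (fun i => Y i ω) (k - 1 - j) := by
        intro j hj
        simp only [Finset.mem_range] at hj
        have : j < k := by omega
        simp [hg, this]
      rw [Finset.sum_congr rfl h2, sum_reflect (fun i => Y i ω) k (k - m - 1 + 1) (by omega)]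
      have h3 : k - (k - m - 1 + 1) = m := by omega
      rw [h3, h1]
    simpa [hsum] using hcm
  refine (measure_mono hsub).trans (hkol.trans ?_)
  have : ∑ j ∈ Finset.range (d + 1), ∫ ω, (fun j => Y (g j)) j ω ^ 2 ∂P
      = ((d : ℝ) + 1) * σ2 := by
    simp only [hsq]
    rw [Finset.sum_const, Finset.card_range]
    push_cast
    ring
  rw [this]

lemma cheb_sum
    (hindep : iIndepFun Y P)
    (hYmean : ∀ j, ∫ ω, Y j ω ∂P = 0) (hYL2 : ∀ j, MemLp (Y j) 2 P)
    (hsq : ∀ j, ∫ ω, Y j ω ^ 2 ∂P = σ2)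
    (k : ℕ) {c : ℝ} (hc : 0 < c) :
    P {ω | c ≤ |∑ j ∈ Finset.range k, Y j ω|}
      ≤ ENNReal.ofReal ((k : ℝ) * σ2 / c ^ 2) := by
  have hSL2 : MemLp (∑ j ∈ Finset.range k, Y j) 2 P := memLp_finsetSum' _ fun j _ => hYL2 j
  have hSmean : ∫ ω, (∑ j ∈ Finset.range k, Y j) ω ∂P = 0 := by
    simp only [Finset.sum_apply]
    rw [integral_finset_sum _ fun j _ => (hYL2 j).integrable one_le_two]
    simp [hYmean]
  have hvar : variance (∑ j ∈ Finset.range k, Y j) P = (k : ℝ) * σ2 := by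
    rw [IndepFun.variance_sum (fun i _ => hYL2 i) (fun i _ j _ hij => hindep.indepFun hij)]
    have : ∀ j, variance (Y j) P = σ2 := by
      intro j
      rw [variance_eq_sub (hYL2 j)]
      simp [hYmean j, hsq j]
    simp only [this]
    rw [Finset.sum_const, Finset.card_range]
    simp [nsmul_eq_mul]
  have hch := meas_ge_le_variance_div_sq (μ := P) hSL2 hc
  rw [hSmean, hvar] at hch
  refine le_trans (le_of_eq ?_) hch
  congr 1
  ext ω
  simp [Finset.sum_apply]

end

lemma det_est {ε δ rk rm a b : ℝ}
    (hε : 0 < ε) (hδ0 : 0 < δ) (hrk : 1 ≤ rk)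
    (hmk : |rm - rk| ≤ δ * rk) (hm_half : rk / 2 ≤ rm)
    (habs : |a| < ε * Real.sqrt rk / (2 * Real.sqrt 2))
    (hSk : |b| < ε * Real.sqrt rk / (2 * Real.sqrt 2 * δ)) :
    |(a + b) / Real.sqrt rm - b / Real.sqrt rk| < ε := by
  set sk : ℝ := Real.sqrt rk with hskdef
  set sm : ℝ := Real.sqrt rm with hsmdef
  have hrk0 : (0:ℝ) < rk := by linarith
  have hrm0 : (0:ℝ) < rm := by linarith
  have hsk0 : 0 < sk := Real.sqrt_pos.2 hrk0
  have hsm0 : 0 < sm := Real.sqrt_pos.2 hrm0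
  have hsk2 : sk ^ 2 = rk := Real.sq_sqrt hrk0.le
  have hsm2 : sm ^ 2 = rm := Real.sq_sqrt hrm0.le
  have hs2 : (Real.sqrt 2) ^ 2 = 2 := Real.sq_sqrt (by norm_num)
  have hs20 : 0 < Real.sqrt 2 := Real.sqrt_pos.2 (by norm_num)
  have hsm_ge : sk / Real.sqrt 2 ≤ sm := by
    rw [hsmdef, hskdef, ← Real.sqrt_div hrk0.le 2]
    exact Real.sqrt_le_sqrt (by linarith)
  have hD : (a + b) / sm - b / sk = a / sm + b * (1 / sm - 1 / sk) := by
    field_simp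
    ring
  have hsk_le : sk ≤ Real.sqrt 2 * sm := by
    have h1 := mul_le_mul_of_nonneg_left hsm_ge hs20.le
    have h2 : Real.sqrt 2 * (sk / Real.sqrt 2) = sk := by field_simp
    linarith
  have hinv : 1 / sm ≤ Real.sqrt 2 / sk := by
    rw [div_le_div_iff₀ hsm0 hsk0]
    linarith
  have hbd1 : |a| / sm < ε / 2 := by
    have h1 : |a| / sm ≤ |a| * (Real.sqrt 2 / sk) := by
      rw [div_eq_mul_one_div]
      exact mul_le_mul_of_nonneg_left hinv (abs_nonneg _)
    have h2 : |a| * (Real.sqrt 2 / sk) < (ε * sk / (2 * Real.sqrt 2)) * (Real.sqrt 2 / sk) :=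
      mul_lt_mul_of_pos_right habs (by positivity)
    have h3 : (ε * sk / (2 * Real.sqrt 2)) * (Real.sqrt 2 / sk) = ε / 2 := by
      field_simp
    linarith
  have hdiff : |1 / sm - 1 / sk| ≤ Real.sqrt 2 * δ / sk := by
    have h0 : 1 / sm - 1 / sk = (sk - sm) / (sm * sk) := by
      field_simp
    have h1 : |sk - sm| * (sk + sm) = |rk - rm| := by
      rw [← abs_of_pos (by linarith : (0:ℝ) < sk + sm), ← abs_mul]
      congr 1
      nlinarith
    have h2 : |sk - sm| ≤ δ * sk := by
      have h3 : |rk - rm| ≤ δ * rk := by rw [abs_sub_comm]; exact hmk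
      have hx : |sk - sm| * sk ≤ |sk - sm| * (sk + sm) :=
        mul_le_mul_of_nonneg_left (by linarith) (abs_nonneg _)
      have hy : |sk - sm| * sk ≤ (δ * sk) * sk := by
        rw [h1] at hx
        have : (δ * sk) * sk = δ * rk := by rw [← hsk2]; ring
        linarith
      exact le_of_mul_le_mul_right hy hsk0
    rw [h0, abs_div, abs_of_pos (by positivity : (0:ℝ) < sm * sk)]
    rw [div_le_div_iff₀ (by positivity) hsk0]
    calc |sk - sm| * sk ≤ (δ * sk) * sk :=
        mul_le_mul_of_nonneg_right h2 hsk0.le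
      _ ≤ (δ * (Real.sqrt 2 * sm)) * sk := by
          have h5 : δ * sk ≤ δ * (Real.sqrt 2 * sm) :=
            mul_le_mul_of_nonneg_left hsk_le hδ0.le
          exact mul_le_mul_of_nonneg_right h5 hsk0.le
      _ = Real.sqrt 2 * δ * (sm * sk) := by ring
  have hbd2 : |b| * |1 / sm - 1 / sk| < ε / 2 := by
    have h1 : |b| * |1 / sm - 1 / sk| ≤ |b| * (Real.sqrt 2 * δ / sk) :=
      mul_le_mul_of_nonneg_left hdiff (abs_nonneg _)
    have h2 : |b| * (Real.sqrt 2 * δ / sk)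
        < (ε * sk / (2 * Real.sqrt 2 * δ)) * (Real.sqrt 2 * δ / sk) :=
      mul_lt_mul_of_pos_right hSk (by positivity)
    have h3 : (ε * sk / (2 * Real.sqrt 2 * δ)) * (Real.sqrt 2 * δ / sk) = ε / 2 := by
      field_simp
    linarith
  rw [hD]
  calc |a / sm + b * (1 / sm - 1 / sk)| ≤ |a / sm| + |b * (1 / sm - 1 / sk)| := abs_add_le _ _
    _ = |a| / sm + |b| * |1 / sm - 1 / sk| := by
        rw [abs_div, abs_of_pos hsm0, abs_mul]
    _ < ε / 2 + ε / 2 := by linarith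
    _ = ε := by ring

set_option maxHeartbeats 1000000 in
theorem stmt18 {Ω : Type*} [MeasurableSpace Ω]
    (P : Measure Ω) [IsProbabilityMeasure P]
    (Y : ℕ → Ω → ℝ)
    (hmeasY : ∀ j, Measurable (Y j))
    (hindep : iIndepFun Y P)
    (hident : ∀ j, IdentDistrib (Y j) (Y 0) P P)
    (hmean : ∫ ω, Y 0 ω ∂P = 0)
    (hL2 : Integrable (fun ω => (Y 0 ω) ^ 2) P)
    (ν : ℝ) (hν : 0 < ν)
    (nhat : ℕ → Ω → ℕ) (hmeas : ∀ t, Measurable (nhat t))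
    (hpos : ∀ t, ∀ᵐ ω ∂P, 1 ≤ nhat t ω)
    (hconv : TendstoInMeasure P (fun t ω => (nhat t ω : ℝ) / (t : ℝ)) atTop
      (fun _ => ν)) :
    TendstoInMeasure P
      (fun t ω =>
        (∑ j ∈ Finset.range (nhat t ω), Y j ω) / Real.sqrt (nhat t ω) -
          (∑ j ∈ Finset.range ⌊(t : ℝ) * ν⌋₊, Y j ω) / Real.sqrt (⌊(t : ℝ) * ν⌋₊))
      atTop (fun _ => 0) := by
  classical
  -- basic facts about Y
  have hYmean : ∀ j, ∫ ω, Y j ω ∂P = 0 := fun j => by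
    rw [(hident j).integral_eq]; exact hmean
  set σ2 : ℝ := ∫ ω, Y 0 ω ^ 2 ∂P with hσ2def
  have hσ2 : 0 ≤ σ2 := integral_nonneg fun ω => sq_nonneg _
  have hY0L2 : MemLp (Y 0) 2 P := by
    rw [memLp_two_iff_integrable_sq (hmeasY 0).aestronglyMeasurable]
    exact hL2
  have hYL2 : ∀ j, MemLp (Y j) 2 P := fun j => (hident j).symm.memLp_snd hY0L2
  have hsq : ∀ j, ∫ ω, Y j ω ^ 2 ∂P = σ2 := by
    intro j
    have := ((hident j).comp (measurable_id.pow_const 2)).integral_eq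
    simpa using this
  -- start
  rw [tendstoInMeasure_iff_dist]
  intro ε hε
  rw [ENNReal.tendsto_atTop_zero]
  intro η hη
  -- choose a real target r
  obtain ⟨r, hr0, hrη⟩ : ∃ r : ℝ, 0 < r ∧ ENNReal.ofReal r ≤ η := by
    rcases eq_or_ne η ⊤ with h | h
    · exact ⟨1, one_pos, by simp [h]⟩
    · exact ⟨η.toReal, ENNReal.toReal_pos hη.ne' h, by rw [ENNReal.ofReal_toReal h]⟩
  -- choose δ
  set δ : ℝ := min (1/2) (r * ε ^ 2 / (200 * (σ2 + 1))) with hδdef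
  have hδ0 : 0 < δ := lt_min (by norm_num) (by positivity)
  have hδhalf : δ ≤ 1/2 := min_le_left _ _
  have hδr : 200 * (σ2 + 1) * δ ≤ r * ε ^ 2 := by
    have h1 : δ ≤ r * ε ^ 2 / (200 * (σ2 + 1)) := min_le_right _ _
    have h2 : (0:ℝ) < 200 * (σ2 + 1) := by positivity
    calc 200 * (σ2 + 1) * δ ≤ 200 * (σ2 + 1) * (r * ε ^ 2 / (200 * (σ2 + 1))) := by
          exact mul_le_mul_of_nonneg_left h1 h2.le
      _ = r * ε ^ 2 := by field_simp
  -- the bad event from hconv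
  have hB := (tendstoInMeasure_iff_dist.1 hconv) (δ * ν / 4) (by positivity)
  have hBsmall : ∀ᶠ t in atTop,
      P {x | δ * ν / 4 ≤ dist ((nhat t x : ℝ) / (t : ℝ)) ν} < ENNReal.ofReal (r / 2) :=
    hB.eventually_lt_const (ENNReal.ofReal_pos.2 (by positivity))
  obtain ⟨N₂, hN₂⟩ := eventually_atTop.1 hBsmall
  set K : ℝ := max (8 / δ) 4 with hKdef
  set N : ℕ := max N₂ (⌈(K + 2) / ν⌉₊ + 1) with hNdef
  refine ⟨N, fun t ht => ?_⟩
  -- basic quantities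
  set k : ℕ := ⌊(t : ℝ) * ν⌋₊ with hkdef
  have htN2 : N₂ ≤ t := le_trans (le_max_left _ _) ht
  have ht1 : 1 ≤ t := le_trans (le_trans (Nat.le_add_left _ _) (le_max_right N₂ _)) ht
  have htν : K + 2 ≤ (t : ℝ) * ν := by
    have h1 : (⌈(K + 2) / ν⌉₊ : ℝ) ≤ (t : ℝ) := by
      exact_mod_cast le_trans (le_trans (Nat.le_succ _) (le_max_right N₂ _)) ht
    have h2 : (K + 2) / ν ≤ (t : ℝ) := le_trans (Nat.le_ceil _) h1
    calc K + 2 = ((K + 2) / ν) * ν := by field_simp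
      _ ≤ (t : ℝ) * ν := mul_le_mul_of_nonneg_right h2 hν.le
  have hK8 : 8 / δ ≤ K := le_max_left _ _
  have hK4 : (4:ℝ) ≤ K := le_max_right _ _
  have hk_le : (k : ℝ) ≤ (t : ℝ) * ν := Nat.floor_le (by positivity)
  have hk_gt : (t : ℝ) * ν < (k : ℝ) + 1 := Nat.lt_floor_add_one _
  have hkK : K + 1 ≤ (k : ℝ) := by linarith
  have hk8δ : 8 ≤ δ * (k : ℝ) := by
    have h1 : 8 / δ ≤ (k : ℝ) := by linarith
    calc (8:ℝ) = δ * (8 / δ) := by field_simp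
      _ ≤ δ * (k : ℝ) := mul_le_mul_of_nonneg_left h1 hδ0.le
  have hk5 : (5:ℝ) ≤ (k : ℝ) := by linarith
  have hk1 : (1:ℕ) ≤ k := by exact_mod_cast (by linarith : (1:ℝ) ≤ (k:ℝ))
  set d : ℕ := ⌈δ * (k : ℝ)⌉₊ with hddef
  have hd_ge : δ * (k : ℝ) ≤ (d : ℝ) := Nat.le_ceil _
  have hd_lt : (d : ℝ) < δ * (k : ℝ) + 1 := Nat.ceil_lt_add_one (by positivity)
  have hd1 : (d : ℝ) + 1 ≤ 2 * (δ * (k : ℝ)) := by linarith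
  have hdk : d + 1 ≤ k := by
    have h1 : (d : ℝ) + 1 ≤ (k : ℝ) := by
      have hδk : δ * (k : ℝ) ≤ (k : ℝ) / 2 := by
        have := mul_le_mul_of_nonneg_right hδhalf (by linarith : (0:ℝ) ≤ (k : ℝ))
        linarith
      linarith
    exact_mod_cast h1
  -- constants
  set sk : ℝ := Real.sqrt k with hskdef
  have hsk0 : 0 < sk := Real.sqrt_pos.2 (by linarith)
  have hsk2 : sk ^ 2 = (k : ℝ) := Real.sq_sqrt (by linarith)
  have hs2 : (Real.sqrt 2) ^ 2 = 2 := Real.sq_sqrt (by norm_num)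
  have hs20 : 0 < Real.sqrt 2 := Real.sqrt_pos.2 (by norm_num)
  set c1 : ℝ := ε * sk / (2 * Real.sqrt 2) with hc1def
  set c2 : ℝ := ε * sk / (2 * Real.sqrt 2 * δ) with hc2def
  have hc10 : 0 < c1 := by positivity
  have hc20 : 0 < c2 := by positivity
  have hc1sq : c1 ^ 2 = ε ^ 2 * (k : ℝ) / 8 := by
    rw [hc1def, div_pow, mul_pow, mul_pow, hsk2, hs2]
    norm_num
  have hc2sq : c2 ^ 2 = ε ^ 2 * (k : ℝ) / (8 * δ ^ 2) := by
    rw [hc2def, div_pow, mul_pow, mul_pow, mul_pow, hsk2, hs2]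
    norm_num
  -- events
  set Bset : Set Ω := {x | δ * ν / 4 ≤ dist ((nhat t x : ℝ) / (t : ℝ)) ν} with hBset
  set E1 : Set Ω := {ω | ∃ m, k < m ∧ m ≤ k + d + 1 ∧
      c1 ≤ |∑ j ∈ Finset.range m, Y j ω - ∑ j ∈ Finset.range k, Y j ω|} with hE1
  set E2 : Set Ω := {ω | ∃ m, k ≤ m + d + 1 ∧ m < k ∧
      c1 ≤ |∑ j ∈ Finset.range k, Y j ω - ∑ j ∈ Finset.range m, Y j ω|} with hE2
  set E3 : Set Ω := {ω | c2 ≤ |∑ j ∈ Finset.range k, Y j ω|} with hE3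
  -- the inclusion
  have hincl : {x | ε ≤ dist ((∑ j ∈ Finset.range (nhat t x), Y j x) / Real.sqrt (nhat t x) -
      (∑ j ∈ Finset.range k, Y j x) / Real.sqrt k) 0} ⊆ Bset ∪ (E1 ∪ (E2 ∪ E3)) := by
    intro ω hω
    by_contra hcon
    simp only [Set.mem_union, not_or] at hcon
    obtain ⟨hnB, hnE1, hnE2, hnE3⟩ := hcon
    rw [Set.mem_setOf_eq, Real.dist_eq, sub_zero] at hω
    set m : ℕ := nhat t ω with hmdef
    -- from not in Bset
    have hB' : dist ((m : ℝ) / (t : ℝ)) ν < δ * ν / 4 := not_le.1 hnB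
    rw [Real.dist_eq] at hB'
    have ht0 : (0:ℝ) < (t : ℝ) := by exact_mod_cast ht1
    have hmtν : |(m : ℝ) - (t : ℝ) * ν| < δ * ν * (t : ℝ) / 4 := by
      have h1 : |(m : ℝ) / (t : ℝ) - ν| * (t : ℝ) < δ * ν / 4 * (t : ℝ) :=
        mul_lt_mul_of_pos_right hB' ht0
      have h2 : |(m : ℝ) / (t : ℝ) - ν| * (t : ℝ) = |(m : ℝ) - (t : ℝ) * ν| := by
        rw [← abs_of_pos ht0, ← abs_mul]
        congr 1
        field_simp
        rw [abs_of_pos ht0]; ring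
      rw [h2] at h1
      linarith
    have hνt2k : (t : ℝ) * ν ≤ 2 * (k : ℝ) := by linarith
    have hmk : |(m : ℝ) - (k : ℝ)| ≤ δ * (k : ℝ) := by
      have h1 : |(m : ℝ) - (k : ℝ)| ≤ |(m : ℝ) - (t : ℝ) * ν| + |(t : ℝ) * ν - (k : ℝ)| := by
        calc |(m : ℝ) - (k : ℝ)| = |((m : ℝ) - (t : ℝ) * ν) + ((t : ℝ) * ν - (k : ℝ))| := by
              ring_nf
          _ ≤ _ := abs_add_le _ _
      have h2 : |(t : ℝ) * ν - (k : ℝ)| ≤ 1 := by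
        rw [abs_le]; constructor <;> linarith
      have h3 : δ * ν * (t : ℝ) / 4 ≤ δ * (k : ℝ) / 2 := by
        have h5 := mul_le_mul_of_nonneg_left hνt2k hδ0.le
        calc δ * ν * (t : ℝ) / 4 = δ * ((t : ℝ) * ν) / 4 := by ring
          _ ≤ δ * (2 * (k : ℝ)) / 4 := by linarith
          _ = δ * (k : ℝ) / 2 := by ring
      have h4 : (1:ℝ) ≤ δ * (k : ℝ) / 2 := by linarith
      linarith
    have hδk2 : δ * (k : ℝ) ≤ (k : ℝ) / 2 := by
      have := mul_le_mul_of_nonneg_right hδhalf (by linarith : (0:ℝ) ≤ (k : ℝ))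
      linarith
    have hm_half : (k : ℝ) / 2 ≤ (m : ℝ) := by
      have h9 := abs_le.1 hmk
      linarith [h9.1, h9.2]
    have hm0 : (0:ℝ) < (m : ℝ) := by linarith
    -- |S m - S k| < c1
    have habs : |∑ j ∈ Finset.range m, Y j ω - ∑ j ∈ Finset.range k, Y j ω| < c1 := by
      rcases lt_trichotomy m k with hlt | heq | hgt
      · have hkm : k ≤ m + d + 1 := by
          have h1 : (k : ℝ) ≤ (m : ℝ) + (d : ℝ) := by
            have := abs_le.1 hmk
            linarith
          have : (k : ℝ) ≤ (m : ℝ) + (d : ℝ) + 1 := by linarith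
          exact_mod_cast this
        have h2 := hnE2
        rw [hE2, Set.mem_setOf_eq] at h2
        push_neg at h2
        have := h2 m hkm hlt
        rw [abs_sub_comm]
        exact this
      · simp [heq, hc10]
      · have hkm : m ≤ k + d + 1 := by
          have h1 : (m : ℝ) ≤ (k : ℝ) + (d : ℝ) := by
            have := abs_le.1 hmk
            linarith
          have : (m : ℝ) ≤ (k : ℝ) + (d : ℝ) + 1 := by linarith
          exact_mod_cast this
        have h2 := hnE1
        rw [hE1, Set.mem_setOf_eq] at h2
        push_neg at h2
        exact h2 m hgt hkm
    have hSk : |∑ j ∈ Finset.range k, Y j ω| < c2 := by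
      have h2 := hnE3
      rw [hE3, Set.mem_setOf_eq] at h2
      push_neg at h2
      exact h2
    -- now the deterministic estimate
    set a : ℝ := ∑ j ∈ Finset.range m, Y j ω - ∑ j ∈ Finset.range k, Y j ω with hadef
    set b : ℝ := ∑ j ∈ Finset.range k, Y j ω with hbdef
    have hab : a + b = ∑ j ∈ Finset.range m, Y j ω := by rw [hadef, hbdef]; ring
    have hfinal : |(a + b) / Real.sqrt (m : ℝ) - b / Real.sqrt (k : ℝ)| < ε :=
      det_est hε hδ0 (by linarith : (1:ℝ) ≤ (k : ℝ)) hmk hm_half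
        (by rw [hadef]; rw [hc1def, hskdef] at habs; exact habs)
        (by rw [hbdef]; rw [hc2def, hskdef] at hSk; exact hSk)
    rw [hab] at hfinal
    exact absurd hω (not_le.2 hfinal)
  -- measure bound
  have hmeasbound : P {x | ε ≤ dist ((∑ j ∈ Finset.range (nhat t x), Y j x) /
        Real.sqrt (nhat t x) - (∑ j ∈ Finset.range k, Y j x) / Real.sqrt k) 0}
      ≤ P Bset + (P E1 + (P E2 + P E3)) := by
    refine (measure_mono hincl).trans ?_
    refine (measure_union_le _ _).trans ?_
    gcongr
    refine (measure_union_le _ _).trans ?_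
    gcongr
    exact measure_union_le _ _
  have hPB : P Bset ≤ ENNReal.ofReal (r / 2) := (hN₂ t htN2).le
  have hkey96 : 96 * (δ * σ2) ≤ r * ε ^ 2 := by
    have hexp : 200 * (σ2 + 1) * δ = 200 * (δ * σ2) + 200 * δ := by ring
    have h1 : 0 ≤ δ * σ2 := mul_nonneg hδ0.le hσ2
    linarith
  have hwinbound : ((d : ℝ) + 1) * σ2 / c1 ^ 2 ≤ r / 6 := by
    rw [hc1sq, div_le_iff₀ (by positivity)]
    have e1 : ((d : ℝ) + 1) * σ2 ≤ 2 * (δ * (k : ℝ)) * σ2 :=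
      mul_le_mul_of_nonneg_right hd1 hσ2
    have e2 : 2 * (δ * (k : ℝ)) * σ2 ≤ r / 6 * (ε ^ 2 * (k : ℝ) / 8) := by
      have f1 : 2 * (δ * σ2) ≤ r * ε ^ 2 / 48 := by linarith
      have f2 : 2 * (δ * (k : ℝ)) * σ2 = 2 * (δ * σ2) * (k : ℝ) := by ring
      have f3 : r / 6 * (ε ^ 2 * (k : ℝ) / 8) = (r * ε ^ 2 / 48) * (k : ℝ) := by ring
      rw [f2, f3]
      exact mul_le_mul_of_nonneg_right f1 (by linarith)
    linarith
  have hPE1 : P E1 ≤ ENNReal.ofReal (r / 6) := by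
    refine (window_fwd P hmeasY hindep hYmean hYL2 hsq k d hc10).trans ?_
    exact ENNReal.ofReal_le_ofReal hwinbound
  have hPE2 : P E2 ≤ ENNReal.ofReal (r / 6) := by
    refine (window_bwd P hmeasY hindep hYmean hYL2 hsq k d hdk hc10).trans ?_
    exact ENNReal.ofReal_le_ofReal hwinbound
  have hPE3 : P E3 ≤ ENNReal.ofReal (r / 6) := by
    refine (cheb_sum P hindep hYmean hYL2 hsq k hc20).trans ?_
    apply ENNReal.ofReal_le_ofReal
    rw [hc2sq, div_le_iff₀ (by positivity)]
    have hδsq : δ ^ 2 * σ2 ≤ (δ * σ2) / 2 := by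
      have g1 : δ * δ ≤ δ * (1/2) := mul_le_mul_of_nonneg_left hδhalf hδ0.le
      have g2 : δ ^ 2 ≤ δ / 2 := by
        have : δ ^ 2 = δ * δ := sq δ
        linarith
      have g3 := mul_le_mul_of_nonneg_right g2 hσ2
      calc δ ^ 2 * σ2 ≤ (δ / 2) * σ2 := g3
        _ = (δ * σ2) / 2 := by ring
    have e1 : (k : ℝ) * σ2 * (48 * δ ^ 2) = 48 * (δ ^ 2 * σ2) * (k : ℝ) := by ring
    have e2 : 48 * (δ ^ 2 * σ2) ≤ r * ε ^ 2 := by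
      have h1 : 0 ≤ δ * σ2 := mul_nonneg hδ0.le hσ2
      linarith
    have e3 : (k : ℝ) * σ2 ≤ r / 6 * (ε ^ 2 * (k : ℝ) / (8 * δ ^ 2)) := by
      rw [show r / 6 * (ε ^ 2 * (k : ℝ) / (8 * δ ^ 2)) = (r * ε ^ 2) * (k : ℝ) / (48 * δ ^ 2)
        from by field_simp; ring, le_div_iff₀ (by positivity)]
      calc (k : ℝ) * σ2 * (48 * δ ^ 2) = 48 * (δ ^ 2 * σ2) * (k : ℝ) := e1
        _ ≤ (r * ε ^ 2) * (k : ℝ) :=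
          mul_le_mul_of_nonneg_right e2 (by linarith)
    linarith
  calc P {x | ε ≤ dist ((∑ j ∈ Finset.range (nhat t x), Y j x) / Real.sqrt (nhat t x) -
        (∑ j ∈ Finset.range ⌊(t : ℝ) * ν⌋₊, Y j x) / Real.sqrt (⌊(t : ℝ) * ν⌋₊)) 0}
      ≤ P Bset + (P E1 + (P E2 + P E3)) := hmeasbound
    _ ≤ ENNReal.ofReal (r / 2) + (ENNReal.ofReal (r / 6) + (ENNReal.ofReal (r / 6) +
        ENNReal.ofReal (r / 6))) := by gcongr
    _ = ENNReal.ofReal (r / 2 + (r / 6 + (r / 6 + r / 6))) := by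
        rw [← ENNReal.ofReal_add (by positivity) (by positivity),
          ← ENNReal.ofReal_add (by positivity) (by positivity),
          ← ENNReal.ofReal_add (by positivity) (by positivity)]
    _ = ENNReal.ofReal r := by congr 1; ring
    _ ≤ η := hrη
end

section
/- Let (Ω, 𝓕, ℙ) be a probability space, let n, N ≥ 1 be integers, let (X_i, Y_i)_{1≤i≤n} be i.i.d. ℝ²-valued random vectors and (X̃_j)_{1≤j≤N} be i.i.d. real random variables each with the same law as X_1, such that the family (X̃_1, …, X̃_N) is independent of ((X_1,Y_1), …, (X_n,Y_n)). Let λ̂ : Ω → ℝ be measurable with respect to the σ-algebra generated by ((X_i,Y_i))_{i≤n}, and assume Y_1, λ̂, λ̂·X_i (for each i) and λ̂·X̃_j (for each j) are integrable. Define θ̂ := (1/n)Σ_{i=1}^n (Y_i − λ̂ X_i) + (1/N)Σ_{j=1}^N λ̂ X̃_j and X̄ := (1/n)Σ_{i=1}^n X_i. Then E[θ̂] − E[Y_1] = −(E[λ̂ X̄] − E[λ̂]·E[X_1]) = −Cov(λ̂, X̄). -/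
open MeasureTheory ProbabilityTheory

open scoped ENNReal in
/-- If `f` and `g` are independent and `f + g` is integrable (w.r.t. a probability
measure), then `f` is integrable. -/
lemma aux_integrable_left_of_add {Ω : Type*} [MeasurableSpace Ω] (P : Measure Ω)
    [IsProbabilityMeasure P] {f g : Ω → ℝ} (hf : Measurable f) (hg : Measurable g)
    (hind : IndepFun f g P) (h : Integrable (fun ω => f ω + g ω) P) :
    Integrable f P := by
  have hmap : P.map (fun ω => (f ω, g ω)) = (P.map f).prod (P.map g) :=
    (indepFun_iff_map_prod_eq_prod_map_map hf.aemeasurable hg.aemeasurable).1 hind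
  have hmf : IsProbabilityMeasure (P.map f) := Measure.isProbabilityMeasure_map hf.aemeasurable
  have hmg : IsProbabilityMeasure (P.map g) := Measure.isProbabilityMeasure_map hg.aemeasurable
  have hm : Measurable fun p : ℝ × ℝ => (‖p.1 + p.2‖₊ : ℝ≥0∞) :=
    (measurable_fst.add measurable_snd).nnnorm.coe_nnreal_ennreal
  have h2 : (∫⁻ ω, (‖f ω + g ω‖₊ : ℝ≥0∞) ∂P) < ⊤ := h.2
  have h3 : (∫⁻ p : ℝ × ℝ, (‖p.1 + p.2‖₊ : ℝ≥0∞) ∂((P.map f).prod (P.map g))) < ⊤ := by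
    rw [← hmap, lintegral_map hm (hf.prodMk hg)]
    exact h2
  rw [lintegral_prod_symm _ hm.aemeasurable] at h3
  have h4 : ∀ᵐ y ∂(P.map g), (∫⁻ x, (‖x + y‖₊ : ℝ≥0∞) ∂(P.map f)) < ⊤ :=
    ae_lt_top hm.lintegral_prod_left' h3.ne
  obtain ⟨y, hy⟩ := h4.exists
  have h5 : (∫⁻ x, (‖x‖₊ : ℝ≥0∞) ∂(P.map f)) < ⊤ := by
    have hle : (∫⁻ x, (‖x‖₊ : ℝ≥0∞) ∂(P.map f)) ≤
        ∫⁻ x, ((‖x + y‖₊ : ℝ≥0∞) + (‖y‖₊ : ℝ≥0∞)) ∂(P.map f) := by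
      refine lintegral_mono fun x => ?_
      have hxy : ‖x‖₊ ≤ ‖x + y‖₊ + ‖y‖₊ := by
        have := nnnorm_add_le (x + y) (-y)
        simpa using this
      rw [← ENNReal.coe_add]
      exact ENNReal.coe_le_coe.2 hxy
    have heq : (∫⁻ x, ((‖x + y‖₊ : ℝ≥0∞) + (‖y‖₊ : ℝ≥0∞)) ∂(P.map f)) =
        (∫⁻ x, (‖x + y‖₊ : ℝ≥0∞) ∂(P.map f)) + (‖y‖₊ : ℝ≥0∞) := by
      rw [lintegral_add_right _ measurable_const, lintegral_const, measure_univ, mul_one]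
    refine lt_of_le_of_lt hle ?_
    rw [heq]
    exact ENNReal.add_lt_top.2 ⟨hy, ENNReal.coe_lt_top⟩
  refine ⟨hf.aestronglyMeasurable, ?_⟩
  have : (∫⁻ ω, (‖f ω‖₊ : ℝ≥0∞) ∂P) < ⊤ := by
    rwa [← lintegral_map measurable_nnnorm.coe_nnreal_ennreal hf]
  exact this

/-- Functions measurable w.r.t. comap σ-algebras of independent functions are independent. -/
lemma aux_indep_comap {Ω β γ δ ε : Type*} [MeasurableSpace Ω]
    {mβ : MeasurableSpace β} {mγ : MeasurableSpace γ}
    {mδ : MeasurableSpace δ} {mε : MeasurableSpace ε}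
    {P : Measure Ω} {F : Ω → β} {G : Ω → γ} (h : IndepFun F G P)
    {f : Ω → δ} {g : Ω → ε}
    (hf : @Measurable Ω δ (MeasurableSpace.comap F mβ) mδ f)
    (hg : @Measurable Ω ε (MeasurableSpace.comap G mγ) mε g) :
    IndepFun f g P :=
  indep_of_indep_of_le_right (indep_of_indep_of_le_left h hf.comap_le) hg.comap_le

theorem stmt19 {Ω : Type*} [MeasurableSpace Ω]
    (P : Measure Ω) [IsProbabilityMeasure P]
    (n N : ℕ) (hn : 0 < n) (hN : 0 < N)
    (X Y : Fin n → Ω → ℝ) (Xt : Fin N → Ω → ℝ)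
    (hmeasXY : ∀ i, Measurable fun ω => (X i ω, Y i ω))
    (hmeasXt : ∀ j, Measurable (Xt j))
    (hiid : iIndepFun
      (fun i ω => (X i ω, Y i ω)) P)
    (hident : ∀ i, IdentDistrib (fun ω => (X i ω, Y i ω))
      (fun ω => (X ⟨0, hn⟩ ω, Y ⟨0, hn⟩ ω)) P P)
    (hiidXt : iIndepFun Xt P)
    (hidentXt : ∀ j, IdentDistrib (Xt j) (X ⟨0, hn⟩) P P)
    (hindep : IndepFun (fun ω (j : Fin N) => Xt j ω)
      (fun ω (i : Fin n) => (X i ω, Y i ω)) P)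
    (lam : Ω → ℝ)
    (hlam : @Measurable Ω ℝ
      (MeasurableSpace.comap (fun ω (i : Fin n) => (X i ω, Y i ω))
        (inferInstance : MeasurableSpace (Fin n → ℝ × ℝ))) _ lam)
    (hY : Integrable (Y ⟨0, hn⟩) P)
    (hlamInt : Integrable lam P)
    (hlamX : ∀ i, Integrable (fun ω => lam ω * X i ω) P)
    (hlamXt : ∀ j, Integrable (fun ω => lam ω * Xt j ω) P) :
    ((∫ ω, ((1 / (n : ℝ)) * ∑ i, (Y i ω - lam ω * X i ω) +
        (1 / (N : ℝ)) * ∑ j, lam ω * Xt j ω) ∂P) - ∫ ω, Y ⟨0, hn⟩ ω ∂P =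
      -((∫ ω, lam ω * ((1 / (n : ℝ)) * ∑ i, X i ω) ∂P) -
        (∫ ω, lam ω ∂P) * ∫ ω, X ⟨0, hn⟩ ω ∂P)) ∧
    ((∫ ω, ((1 / (n : ℝ)) * ∑ i, (Y i ω - lam ω * X i ω) +
        (1 / (N : ℝ)) * ∑ j, lam ω * Xt j ω) ∂P) - ∫ ω, Y ⟨0, hn⟩ ω ∂P =
      -((∫ ω, lam ω * ((1 / (n : ℝ)) * ∑ i, X i ω) ∂P) -
        (∫ ω, lam ω ∂P) * ∫ ω, (1 / (n : ℝ)) * ∑ i, X i ω ∂P)) := by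
  classical
  set z : Fin n := ⟨0, hn⟩ with hz
  have hn' : (n : ℝ) ≠ 0 := Nat.cast_ne_zero.2 hn.ne'
  have hN' : (N : ℝ) ≠ 0 := Nat.cast_ne_zero.2 hN.ne'
  have hmX : ∀ i, Measurable (X i) := fun i => measurable_fst.comp (hmeasXY i)
  have hmY : ∀ i, Measurable (Y i) := fun i => measurable_snd.comp (hmeasXY i)
  have hidX : ∀ i, IdentDistrib (X i) (X z) P P := fun i => (hident i).comp measurable_fst
  have hidY : ∀ i, IdentDistrib (Y i) (Y z) P P := fun i => (hident i).comp measurable_snd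
  have hYi : ∀ i, Integrable (Y i) P := fun i => (hidY i).integrable_iff.2 hY
  have hVmeas : Measurable (fun ω (i : Fin n) => (X i ω, Y i ω)) :=
    measurable_pi_lambda _ hmeasXY
  have hlamAESM : AEStronglyMeasurable lam P :=
    (hlam.mono hVmeas.comap_le le_rfl).aestronglyMeasurable
  -- independence of `lam` and `Xt j`
  have hXtVecMeas : @Measurable Ω (Fin N → ℝ)
      (MeasurableSpace.comap (fun ω (j : Fin N) => Xt j ω) inferInstance) _
      (fun ω (j : Fin N) => Xt j ω) := Measurable.of_comap_le le_rfl
  have hindepj : ∀ j, IndepFun (Xt j) lam P := fun j =>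
    aux_indep_comap hindep ((measurable_pi_apply j).comp hXtVecMeas) hlam
  have key : ∀ j, ∫ ω, lam ω * Xt j ω ∂P = (∫ ω, lam ω ∂P) * ∫ ω, X z ω ∂P := fun j => by
    rw [(hindepj j).symm.integral_fun_mul_eq_mul_integral hlamAESM (hmeasXt j).aestronglyMeasurable,
      (hidentXt j).integral_eq]
  -- integrability pieces
  have hint1 : ∀ i, Integrable (fun ω => Y i ω - lam ω * X i ω) P :=
    fun i => (hYi i).sub (hlamX i)
  have hI1 : Integrable (fun ω => ∑ i, (Y i ω - lam ω * X i ω)) P :=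
    integrable_finset_sum _ fun i _ => hint1 i
  have hI2 : Integrable (fun ω => ∑ j, lam ω * Xt j ω) P :=
    integrable_finset_sum _ fun j _ => hlamXt j
  -- main integral computation
  have hbig : ∫ ω, ((1 / (n : ℝ)) * ∑ i, (Y i ω - lam ω * X i ω) +
      (1 / (N : ℝ)) * ∑ j, lam ω * Xt j ω) ∂P =
      (1 / (n : ℝ)) * ∑ i, (∫ ω, Y i ω ∂P - ∫ ω, lam ω * X i ω ∂P) +
      (1 / (N : ℝ)) * ∑ j, ∫ ω, lam ω * Xt j ω ∂P := by
    rw [integral_add (hI1.const_mul _) (hI2.const_mul _), integral_const_mul _ _,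
      integral_const_mul _ _, integral_finset_sum _ fun i _ => hint1 i,
      integral_finset_sum _ fun j _ => hlamXt j]
    congr 2
    exact Finset.sum_congr rfl fun i _ => integral_sub (hYi i) (hlamX i)
  have hsum1 : ∑ i : Fin n, (∫ ω, Y i ω ∂P - ∫ ω, lam ω * X i ω ∂P) =
      (n : ℝ) * (∫ ω, Y z ω ∂P) - ∑ i, ∫ ω, lam ω * X i ω ∂P := by
    rw [Finset.sum_sub_distrib]
    congr 1
    rw [Finset.sum_congr rfl fun i _ => (hidY i).integral_eq]
    simp [Finset.card_univ, mul_comm]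
  have hsum2 : ∑ j : Fin N, ∫ ω, lam ω * Xt j ω ∂P =
      (N : ℝ) * ((∫ ω, lam ω ∂P) * ∫ ω, X z ω ∂P) := by
    rw [Finset.sum_congr rfl fun j _ => key j]
    simp [Finset.card_univ, mul_comm]
  have hbar : ∫ ω, lam ω * ((1 / (n : ℝ)) * ∑ i, X i ω) ∂P =
      (1 / (n : ℝ)) * ∑ i, ∫ ω, lam ω * X i ω ∂P := by
    have hpt : ∀ ω, lam ω * ((1 / (n : ℝ)) * ∑ i, X i ω) =
        (1 / (n : ℝ)) * ∑ i, lam ω * X i ω := by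
      intro ω
      simp only [Finset.mul_sum]
      exact Finset.sum_congr rfl fun i _ => by ring
    simp_rw [hpt]
    rw [integral_const_mul _ _, integral_finset_sum _ fun i _ => hlamX i]
  -- the sample mean of the X's has the same integral as X z
  have hXbar : ∫ ω, (1 / (n : ℝ)) * ∑ i, X i ω ∂P = ∫ ω, X z ω ∂P := by
    by_cases hX0 : Integrable (X z) P
    · have hXi : ∀ i, Integrable (X i) P := fun i => (hidX i).integrable_iff.2 hX0
      rw [integral_const_mul _ _, integral_finset_sum _ fun i _ => hXi i,
        Finset.sum_congr rfl fun i _ => (hidX i).integral_eq]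
      simp [Finset.card_univ]
      field_simp
    · have hiX : iIndepFun X P :=
        hiid.comp (fun _ => Prod.fst) fun _ => measurable_fst
      have hnot : ¬ Integrable (fun ω => (1 / (n : ℝ)) * ∑ i, X i ω) P := by
        intro hS
        have hSsum : Integrable (fun ω => ∑ i, X i ω) P := by
          have h' := hS.const_mul (n : ℝ)
          have : (fun ω => (n : ℝ) * ((1 / (n : ℝ)) * ∑ i, X i ω)) =
              fun ω => ∑ i, X i ω := by
            ext ω; field_simp
          rwa [this] at h'
        have hind0 : IndepFun (∑ i ∈ Finset.univ.erase z, X i) (X z) P :=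
          hiX.indepFun_finsetSum_of_notMem hmX (Finset.notMem_erase z _)
        have hind0' : IndepFun (fun ω => ∑ i ∈ Finset.univ.erase z, X i ω) (X z) P := by
          have hfe : (∑ i ∈ Finset.univ.erase z, X i) =
              fun ω => ∑ i ∈ Finset.univ.erase z, X i ω := by
            ext ω; simp [Finset.sum_apply]
          rwa [hfe] at hind0
        have hmsum : Measurable (fun ω => ∑ i ∈ Finset.univ.erase z, X i ω) :=
          Finset.measurable_sum _ fun i _ => hmX i
        refine hX0 (aux_integrable_left_of_add P (hmX z) hmsum hind0'.symm ?_)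
        have hdecomp : (fun ω => X z ω + ∑ i ∈ Finset.univ.erase z, X i ω) =
            fun ω => ∑ i, X i ω := by
          ext ω
          rw [← Finset.add_sum_erase _ _ (Finset.mem_univ z)]
        rwa [hdecomp]
      rw [integral_undef hnot, integral_undef hX0]
  have main : (∫ ω, ((1 / (n : ℝ)) * ∑ i, (Y i ω - lam ω * X i ω) +
      (1 / (N : ℝ)) * ∑ j, lam ω * Xt j ω) ∂P) - ∫ ω, Y z ω ∂P =
      -((∫ ω, lam ω * ((1 / (n : ℝ)) * ∑ i, X i ω) ∂P) -
        (∫ ω, lam ω ∂P) * ∫ ω, X z ω ∂P) := by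
    rw [hbig, hsum1, hsum2, hbar]
    field_simp
    ring
  exact ⟨main, by rw [hXbar]; exact main⟩
end
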